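/- arXiv:2210.12243 — 6 statements merged into one kernel-verified Lean document; each statement's English description precedes it below -/
import Mathlib

section
/- For every real α > 1/2 there exist constants ξ > 0, β > 0 and c > 0 such that for every sufficiently large integer n the following holds: let G be a graph on n vertices with an edge coloring F = F_M ⊔ F_E, where every color class in F_M is a matching of size 2, every color class in F_E is a single edge, |F_M| ≥ (α − ξ)·n, and |F_E| ≥ (1 − α − ξ)·n. Then there exists a subset S of V(G) with |S| ≤ β·n such that the induced subgraph G[S] contains a rainbow edge set of size at least (β + c)·n. -/
open Finset SimpleGraph
open scoped Classical

/-- A matching of size 2: a set of two edges sharing no vertex. -/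
def IsMatching2 {V : Type*} (M : Finset (Sym2 V)) : Prop :=
  M.card = 2 ∧ ∀ e₁ ∈ M, ∀ e₂ ∈ M, e₁ ≠ e₂ → ∀ v : V, v ∈ e₁ → v ∉ e₂

/-- A triangle class: the set of the three edges spanned by a triangle of `G`. -/
def IsTriangleClass {V : Type*} (G : SimpleGraph V) (T : Finset (Sym2 V)) : Prop :=
  ∃ a b c : V, G.Adj a b ∧ G.Adj a c ∧ G.Adj b c ∧
    T = {s(a, b), s(a, c), s(b, c)}

/-- An edge coloring of `G`: a family of nonempty pairwise disjoint sets of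
edges of `G` whose union is the edge set of `G`. -/
def IsEdgeColoring {V : Type*} {ι : Type*} (G : SimpleGraph V)
    (F : ι → Finset (Sym2 V)) : Prop :=
  (∀ i, (F i).Nonempty) ∧ (∀ i j : ι, i ≠ j → Disjoint (F i) (F j)) ∧
    (∀ i, (F i : Set (Sym2 V)) ⊆ G.edgeSet) ∧ (∀ e ∈ G.edgeSet, ∃ i, e ∈ F i)

/-- A closed walk is rainbow (w.r.t. the coloring `F`) if its edges lie in
pairwise distinct color classes. -/
def IsRainbow {V : Type*} {ι : Type*} {G : SimpleGraph V} (F : ι → Finset (Sym2 V))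
    {u : V} (w : G.Walk u u) : Prop :=
  ∀ i : ι, ∀ e₁ ∈ w.edges, ∀ e₂ ∈ w.edges, e₁ ∈ F i → e₂ ∈ F i → e₁ = e₂

lemma aux_edge_rep {n : ℕ} (G : SimpleGraph (Fin n)) {e : Sym2 (Fin n)}
    (he : e ∈ G.edgeSet) : ∃ a b : Fin n, a ≠ b ∧ e = s(a, b) := by
  induction e using Sym2.ind with
  | _ a b => exact ⟨a, b, G.ne_of_adj (G.mem_edgeSet.mp he), rfl⟩

lemma aux_count_one {n k : ℕ} (v : Fin n) :
    ((Finset.powersetCard k (Finset.univ : Finset (Fin n))).filter (fun T => v ∈ T)).card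
      ≤ (n - 1).choose (k - 1) := by
  classical
  have h := Finset.card_le_card_of_injOn (fun T : Finset (Fin n) => T.erase v)
    (s := (Finset.powersetCard k (Finset.univ : Finset (Fin n))).filter (fun T => v ∈ T))
    (t := Finset.powersetCard (k - 1) (Finset.univ.erase v)) ?_ ?_
  · refine h.trans (le_of_eq ?_)
    rw [Finset.card_powersetCard, Finset.card_erase_of_mem (Finset.mem_univ v),
      Finset.card_univ, Fintype.card_fin]
  · intro T hT
    simp only [Finset.mem_coe, Finset.mem_filter, Finset.mem_powersetCard] at hT
    obtain ⟨⟨hsub, hcard⟩, hv⟩ := hT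
    refine Finset.mem_powersetCard.mpr ⟨Finset.erase_subset_erase v hsub, ?_⟩
    rw [Finset.card_erase_of_mem hv, hcard]
  · intro T1 h1 T2 h2 heq
    simp only [Finset.coe_filter, Set.mem_setOf_eq] at h1 h2
    have := congrArg (insert v) heq
    rwa [Finset.insert_erase h1.2, Finset.insert_erase h2.2] at this

lemma aux_count_two {n k : ℕ} {v w : Fin n} (hvw : v ≠ w) :
    ((Finset.powersetCard k (Finset.univ : Finset (Fin n))).filter
        (fun T => v ∈ T ∧ w ∈ T)).card
      ≤ (n - 2).choose (k - 2) := by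
  classical
  have h := Finset.card_le_card_of_injOn (fun T : Finset (Fin n) => (T.erase v).erase w)
    (s := (Finset.powersetCard k (Finset.univ : Finset (Fin n))).filter (fun T => v ∈ T ∧ w ∈ T))
    (t := Finset.powersetCard (k - 2) ((Finset.univ.erase v).erase w)) ?_ ?_
  · refine h.trans (le_of_eq ?_)
    rw [Finset.card_powersetCard, Finset.card_erase_of_mem, Finset.card_erase_of_mem
      (Finset.mem_univ v), Finset.card_univ, Fintype.card_fin]
    · rfl
    · exact Finset.mem_erase.mpr ⟨hvw.symm, Finset.mem_univ w⟩
  · intro T hT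
    simp only [Finset.mem_coe, Finset.mem_filter, Finset.mem_powersetCard] at hT
    obtain ⟨⟨hsub, hcard⟩, hv, hw⟩ := hT
    refine Finset.mem_powersetCard.mpr
      ⟨Finset.erase_subset_erase w (Finset.erase_subset_erase v hsub), ?_⟩
    rw [Finset.card_erase_of_mem (Finset.mem_erase.mpr ⟨(Ne.symm hvw), hw⟩),
      Finset.card_erase_of_mem hv, hcard]
    omega
  · intro T1 h1 T2 h2 heq
    simp only [Finset.coe_filter, Set.mem_setOf_eq] at h1 h2
    have h1' : w ∈ T1.erase v := Finset.mem_erase.mpr ⟨Ne.symm hvw, h1.2.2⟩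
    have h2' : w ∈ T2.erase v := Finset.mem_erase.mpr ⟨Ne.symm hvw, h2.2.2⟩
    have := congrArg (insert w) heq
    rw [Finset.insert_erase h1', Finset.insert_erase h2'] at this
    have := congrArg (insert v) this
    rwa [Finset.insert_erase h1.2.1, Finset.insert_erase h2.2.1] at this


set_option maxHeartbeats 1000000 in
lemma aux_scalar1 (α γ N : ℝ) (hγ0 : 0 < γ) (hγle : γ ≤ 1/128)
    (hαγ : 1/2 + 16*γ ≤ α) (hα1 : α ≤ 1) (hγN1 : 1 ≤ γ*N) (hγn : 300 ≤ γ^2*N)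
    (hn2 : 2 ≤ N) :
    (1-γ+8*γ^2)*N*(N*(N-1)) ≤
      (α-γ^2)*N*(N*(N-1) - 4*((γ*N+1)*(γ*N)))
        + (1-α-γ^2)*N*(N*(N-1) - 2*((γ*N+1)*(N-1))) := by
  have hN0 : (0:ℝ) < N := by linarith
  have hN1 : (0:ℝ) ≤ N - 1 := by linarith
  have hx : (0:ℝ) ≤ (γ*N - 1) * (γ*N) := mul_nonneg (by linarith) (by positivity)
  have hz : (0:ℝ) ≤ N*(N-2) := mul_nonneg hN0.le (by linarith)
  have haux2 : (0:ℝ) ≤ (γ^2*N - 300) * (N*(N-1)) :=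
    mul_nonneg (by linarith) (mul_nonneg hN0.le hN1)
  have haux3 : (0:ℝ) ≤ (α - 1/2 - 16*γ) * ((γ*N+1)*(N-1)) :=
    mul_nonneg (by linarith) (mul_nonneg (by positivity) hN1)
  have haux4 : (0:ℝ) ≤ (1-α) * ((γ*N-1)*(γ*N)) := mul_nonneg (by linarith) hx
  have haux5 : (0:ℝ) ≤ γ^2 * (N*(N-2)) := mul_nonneg (by positivity) hz
  have haux6 : (0:ℝ) ≤ γ * ((γ*N-1)*(N-1)) :=
    mul_nonneg hγ0.le (mul_nonneg (by linarith) hN1)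
  have haux7 : (0:ℝ) ≤ (1/128 - γ) * (γ*(N*(N-1))) :=
    mul_nonneg (by linarith) (mul_nonneg hγ0.le (mul_nonneg hN0.le hN1))
  nlinarith [haux2, haux3, haux4, haux5, haux6, haux7, hx,
    mul_nonneg hγ0.le hN1, mul_nonneg hγ0.le hx, mul_nonneg hγ0.le haux5]

set_option maxHeartbeats 1000000 in
lemma aux_scalar2 (γ N : ℝ) (hγ0 : 0 < γ) (hγle : γ ≤ 1/128)
    (hγN1 : 1 ≤ γ*N) (hn2 : 2 ≤ N) :
    (1-γ+8*γ^2)*N*(N*(N-1)) ≤ (1-γ^2)*N*(N*(N-1) - 4*((γ*N+1)*(γ*N))) := by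
  have hN0 : (0:ℝ) < N := by linarith
  have hN1 : (0:ℝ) ≤ N - 1 := by linarith
  have hx : (0:ℝ) ≤ (γ*N - 1) * (γ*N) := mul_nonneg (by linarith) (by positivity)
  have hz : (0:ℝ) ≤ N*(N-2) := mul_nonneg hN0.le (by linarith)
  have haux5 : (0:ℝ) ≤ γ^2 * (N*(N-2)) := mul_nonneg (by positivity) hz
  have haux7 : (0:ℝ) ≤ (1/128 - γ) * (γ*(N*(N-1))) :=
    mul_nonneg (by linarith) (mul_nonneg hγ0.le (mul_nonneg hN0.le hN1))
  nlinarith [haux5, haux7, hx, mul_nonneg hγ0.le hx, mul_nonneg hγ0.le haux5,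
    mul_nonneg (mul_nonneg hγ0.le hγ0.le) hx, mul_nonneg (mul_nonneg hγ0.le hγ0.le) hz]

set_option maxHeartbeats 1000000 in
lemma aux_arith (α ε γ N K t s d : ℝ)
    (hα : 1/2 < α) (hε0 : 0 < ε) (hεα : ε ≤ α - 1/2) (hε8 : ε ≤ 1/8)
    (hγdef : γ = ε/16) (hγn : 300 ≤ γ^2*N) (hn2 : 2 ≤ N)
    (hk1 : γ*N ≤ K) (hk2 : K ≤ γ*N+1)
    (ht : (α-γ^2)*N ≤ t) (hs : (1-α-γ^2)*N ≤ s) (ht0 : 0 ≤ t) (hs0 : 0 ≤ s) (hd0 : 0 ≤ d)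
    (hkey : d*(N*(N-1)) ≤ s*(2*(K*(N-1))) + t*(4*(K*(K-1)))) :
    (1 - γ + 8*γ^2)*N ≤ t + s - d := by
  have hγ0 : 0 < γ := by rw [hγdef]; linarith
  have hγle : γ ≤ 1/128 := by rw [hγdef]; linarith
  have hαγ : 1/2 + 16 * γ ≤ α := by rw [hγdef]; linarith
  have hN0 : (0:ℝ) < N := by linarith
  have hγN1 : 1 ≤ γ*N := by nlinarith [hγn, hγ0, hγle, hN0]
  have hN1 : (0:ℝ) ≤ N - 1 := by linarith
  have hnn1 : (0:ℝ) < N * (N - 1) := by nlinarith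
  have hK0 : (0:ℝ) ≤ K := by linarith
  -- replace K by its upper bound
  have hb1 : d * (N * (N - 1)) ≤
      s * (2 * ((γ*N + 1) * (N - 1))) + t * (4 * ((γ*N + 1) * (γ*N))) := by
    have e1 : 2*(K * (N - 1)) ≤ 2*((γ*N + 1) * (N - 1)) := by
      have := mul_le_mul_of_nonneg_right hk2 hN1
      linarith
    have e2 : 4*(K * (K - 1)) ≤ 4*((γ*N + 1) * (γ*N)) := by
      have : K * (K-1) ≤ (γ*N+1) * (γ*N) :=
        mul_le_mul hk2 (by linarith) (by linarith) (by positivity)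
      linarith
    have f1 := mul_le_mul_of_nonneg_left e1 hs0
    have f2 := mul_le_mul_of_nonneg_left e2 ht0
    linarith [hkey, f1, f2]
  have hcT : (0:ℝ) ≤ N * (N - 1) - 4 * ((γ*N + 1) * (γ*N)) := by
    have hx : (0:ℝ) ≤ (γ*N - 1) * (γ*N) := mul_nonneg (by linarith) (by positivity)
    have hy : (0:ℝ) ≤ (1/128 - γ) * (γ*N^2) := mul_nonneg (by linarith) (by positivity)
    have hz : (0:ℝ) ≤ N*(N-2) := mul_nonneg hN0.le (by linarith)
    nlinarith [hx, hy, hz]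
  have hcS : (0:ℝ) ≤ N * (N - 1) - 2 * ((γ*N + 1) * (N - 1)) := by
    have hw : (0:ℝ) ≤ (1/128 - γ) * N := mul_nonneg (by linarith) hN0.le
    have hNbig : 4 ≤ N := by nlinarith [mul_nonneg (mul_nonneg hγ0.le hγ0.le) hN0.le]
    have : (0:ℝ) ≤ (N - 1) * (N - 2*(γ*N) - 2) := by
      apply mul_nonneg hN1
      nlinarith [hw]
    nlinarith [this]
  have hmain : s * (2 * ((γ*N + 1) * (N - 1))) + t * (4 * ((γ*N + 1) * (γ*N)))
      ≤ (t + s - (1 - γ + 8 * γ^2) * N) * (N * (N - 1)) := by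
    have h1 := mul_le_mul_of_nonneg_right ht hcT
    have h2 := mul_le_mul_of_nonneg_right hs hcS
    rcases le_or_gt α 1 with hα1 | hα1
    · have hsc := aux_scalar1 α γ N hγ0 hγle hαγ hα1 hγN1 hγn hn2
      nlinarith [h1, h2, hsc]
    · have hsc := aux_scalar2 γ N hγ0 hγle hγN1 hn2
      have hle : (1 - γ^2) * N * (N * (N - 1) - 4 * ((γ*N + 1) * (γ*N))) ≤
          (α - γ^2) * N * (N * (N - 1) - 4 * ((γ*N + 1) * (γ*N))) := by
        apply mul_le_mul_of_nonneg_right _ hcT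
        nlinarith
      have hS0 : (0:ℝ) ≤ s * (N * (N - 1) - 2 * ((γ*N + 1) * (N - 1))) :=
        mul_nonneg hs0 hcS
      nlinarith [h1, h2, hsc, hle, hS0]
  have hfin : d ≤ t + s - (1 - γ + 8 * γ^2) * N := by
    have := hb1.trans hmain
    exact le_of_mul_le_mul_right this hnn1
  linarith


set_option maxHeartbeats 2000000 in
/-- For every `α > 1/2` there exist `ξ, β, c > 0` such that for every sufficiently
large `n`: if a graph `G` on `n` vertices has an edge coloring `F = F_M ⊔ F_E`
(size-2 matchings and single edges, with `|F_M| ≥ (α − ξ)·n` and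
`|F_E| ≥ (1 − α − ξ)·n`), then there is a vertex subset `S` with `|S| ≤ β·n`
such that the induced subgraph `G[S]` contains a rainbow edge set of size at
least `(β + c)·n`. -/
theorem statement_2 (α : ℝ) (hα : 1 / 2 < α) :
    ∃ ξ β c : ℝ, 0 < ξ ∧ 0 < β ∧ 0 < c ∧ ∃ n₀ : ℕ, ∀ n : ℕ, n₀ ≤ n →
      ∀ (m : ℕ) (G : SimpleGraph (Fin n)) (F : Fin m → Finset (Sym2 (Fin n)))
        (IM : Finset (Fin m)),
        IsEdgeColoring G F →
        (∀ i ∈ IM, IsMatching2 (F i)) →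
        (∀ i ∉ IM, (F i).card = 1) →
        (α - ξ) * n ≤ (IM.card : ℝ) →
        (1 - α - ξ) * n ≤ ((IMᶜ).card : ℝ) →
        ∃ S : Finset (Fin n), (S.card : ℝ) ≤ β * n ∧
          ∃ R : Finset (Sym2 (Fin n)),
            (R : Set (Sym2 (Fin n))) ⊆ G.edgeSet ∧
            (∀ e ∈ R, ∀ v : Fin n, v ∈ e → v ∈ S) ∧
            (∀ i, (R ∩ F i).card ≤ 1) ∧
            (β + c) * n ≤ (R.card : ℝ) := by
  classical
  set ε : ℝ := min (α - 1/2) (1/8) with hεdef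
  have hε0 : 0 < ε := lt_min (by linarith) (by norm_num)
  have hεα : ε ≤ α - 1/2 := min_le_left _ _
  have hε8 : ε ≤ 1/8 := min_le_right _ _
  set γ : ℝ := ε / 16 with hγdef
  have hγ0 : 0 < γ := by positivity
  have hγle : γ ≤ 1/128 := by rw [hγdef]; linarith
  refine ⟨γ^2, 1 - γ, 8*γ^2, by positivity, by nlinarith, by positivity,
    ⌈(300:ℝ)/γ^2⌉₊, ?_⟩
  intro n hn m G F IM hF hFM hFE hIMt hIMs
  obtain ⟨hFne, hFdisj, hFsub, hFcov⟩ := hF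
  -- basic numeric facts
  have hnR : (300:ℝ)/γ^2 ≤ (n:ℝ) :=
    (Nat.le_ceil _).trans (Nat.cast_le.mpr hn)
  have hγn : (300:ℝ) ≤ γ^2 * n := by
    rw [div_le_iff₀ (by positivity)] at hnR; linarith
  have hn2 : (2:ℝ) ≤ (n:ℝ) := by nlinarith [sq_nonneg γ, hγle, hγ0]
  set k : ℕ := ⌈γ * n⌉₊ with hkdef
  have hkγ : γ * n ≤ (k:ℝ) := Nat.le_ceil _
  have hkup : (k:ℝ) ≤ γ * n + 1 := (Nat.ceil_lt_add_one (by positivity)).le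
  have hγn1 : (1:ℝ) ≤ γ * n := by nlinarith
  have hk2R : (2:ℝ) ≤ (k:ℝ) := by nlinarith
  have hk2 : 2 ≤ k := by exact_mod_cast hk2R
  have hknR : (k:ℝ) ≤ (n:ℝ)/2 := by nlinarith
  have hkn : k ≤ n := by
    have : (k:ℝ) ≤ (n:ℝ) := by linarith
    exact_mod_cast this
  have hn1 : 1 ≤ n := by omega
  -- the family of candidate deletion sets
  set P := Finset.powersetCard k (Finset.univ : Finset (Fin n)) with hPdef
  set Dead : Finset (Fin n) → Finset (Fin m) :=
    fun T => Finset.univ.filter (fun i => ∀ e ∈ F i, ∃ v ∈ T, v ∈ e) with hDeaddef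
  -- counting: per class
  have hmatch : ∀ i ∈ IM, (P.filter (fun T => i ∈ Dead T)).card
      ≤ 4 * ((n - 2).choose (k - 2)) := by
    intro i hi
    obtain ⟨hcard2, hdisj⟩ := hFM i hi
    obtain ⟨e, f, hef, hFi⟩ := Finset.card_eq_two.mp hcard2
    have heF : e ∈ F i := by rw [hFi]; simp
    have hfF : f ∈ F i := by rw [hFi]; simp
    obtain ⟨a, b, hab, he⟩ := aux_edge_rep G (hFsub i heF)
    obtain ⟨c, d, hcd, hf⟩ := aux_edge_rep G (hFsub i hfF)
    have hae : a ∈ e := by rw [he]; exact Sym2.mem_mk_left a b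
    have hbe : b ∈ e := by rw [he]; exact Sym2.mem_mk_right a b
    have hcf : c ∈ f := by rw [hf]; exact Sym2.mem_mk_left c d
    have hdf : d ∈ f := by rw [hf]; exact Sym2.mem_mk_right c d
    have hac : a ≠ c := fun h => hdisj e heF f hfF hef a hae (h ▸ hcf)
    have had : a ≠ d := fun h => hdisj e heF f hfF hef a hae (h ▸ hdf)
    have hbc : b ≠ c := fun h => hdisj e heF f hfF hef b hbe (h ▸ hcf)
    have hbd : b ≠ d := fun h => hdisj e heF f hfF hef b hbe (h ▸ hdf)
    have hsub2 : P.filter (fun T => i ∈ Dead T) ⊆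
        ((P.filter fun T => a ∈ T ∧ c ∈ T) ∪ (P.filter fun T => a ∈ T ∧ d ∈ T))
          ∪ ((P.filter fun T => b ∈ T ∧ c ∈ T) ∪ (P.filter fun T => b ∈ T ∧ d ∈ T)) := by
      intro T' hT'
      simp only [Finset.mem_filter, hDeaddef, Finset.mem_univ, true_and] at hT'
      obtain ⟨hTP', hTd⟩ := hT'
      obtain ⟨v, hvT, hve⟩ := hTd e heF
      obtain ⟨w, hwT, hwf⟩ := hTd f hfF
      rw [he, Sym2.mem_iff] at hve
      rw [hf, Sym2.mem_iff] at hwf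
      simp only [Finset.mem_union, Finset.mem_filter]
      rcases hve with rfl | rfl <;> rcases hwf with rfl | rfl
      · exact Or.inl (Or.inl ⟨hTP', hvT, hwT⟩)
      · exact Or.inl (Or.inr ⟨hTP', hvT, hwT⟩)
      · exact Or.inr (Or.inl ⟨hTP', hvT, hwT⟩)
      · exact Or.inr (Or.inr ⟨hTP', hvT, hwT⟩)
    have h1 := aux_count_two (n := n) (k := k) hac
    have h2 := aux_count_two (n := n) (k := k) had
    have h3 := aux_count_two (n := n) (k := k) hbc
    have h4 := aux_count_two (n := n) (k := k) hbd
    rw [hPdef] at hsub2 ⊢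
    calc (_ : ℕ) ≤ _ := Finset.card_le_card hsub2
      _ ≤ _ + _ := Finset.card_union_le _ _
      _ ≤ 4 * ((n - 2).choose (k - 2)) := by
          have h5 := Finset.card_union_le
            ((Finset.powersetCard k (Finset.univ : Finset (Fin n))).filter fun T => a ∈ T ∧ c ∈ T)
            ((Finset.powersetCard k (Finset.univ : Finset (Fin n))).filter fun T => a ∈ T ∧ d ∈ T)
          have h6 := Finset.card_union_le
            ((Finset.powersetCard k (Finset.univ : Finset (Fin n))).filter fun T => b ∈ T ∧ c ∈ T)
            ((Finset.powersetCard k (Finset.univ : Finset (Fin n))).filter fun T => b ∈ T ∧ d ∈ T)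
          omega
  have hsingle : ∀ i ∉ IM, (P.filter (fun T => i ∈ Dead T)).card
      ≤ 2 * ((n - 1).choose (k - 1)) := by
    intro i hi
    obtain ⟨e, hFi⟩ := Finset.card_eq_one.mp (hFE i hi)
    have heF : e ∈ F i := by rw [hFi]; simp
    obtain ⟨a, b, hab, he⟩ := aux_edge_rep G (hFsub i heF)
    have hsub2 : P.filter (fun T => i ∈ Dead T) ⊆
        (P.filter fun T => a ∈ T) ∪ (P.filter fun T => b ∈ T) := by
      intro T' hT'
      simp only [Finset.mem_filter, hDeaddef, Finset.mem_univ, true_and] at hT'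
      obtain ⟨hTP', hTd⟩ := hT'
      obtain ⟨v, hvT, hve⟩ := hTd e heF
      rw [he, Sym2.mem_iff] at hve
      simp only [Finset.mem_union, Finset.mem_filter]
      rcases hve with rfl | rfl
      · exact Or.inl ⟨hTP', hvT⟩
      · exact Or.inr ⟨hTP', hvT⟩
    have h1 := aux_count_one (n := n) (k := k) a
    have h2 := aux_count_one (n := n) (k := k) b
    rw [hPdef] at hsub2 ⊢
    calc (_ : ℕ) ≤ _ := Finset.card_le_card hsub2
      _ ≤ _ + _ := Finset.card_union_le _ _
      _ ≤ 2 * ((n - 1).choose (k - 1)) := by omega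
  -- total count
  have hcardsum : ∀ s : Finset (Fin m), s.card = ∑ i : Fin m, if i ∈ s then 1 else 0 := by
    intro s
    rw [Finset.sum_ite_mem, Finset.inter_comm, Finset.inter_univ, Finset.sum_const,
      smul_eq_mul, mul_one]
  have hsum : ∑ T ∈ P, (Dead T).card ≤
      IM.card * (4 * ((n - 2).choose (k - 2)))
        + IMᶜ.card * (2 * ((n - 1).choose (k - 1))) := by
    have hswap : ∑ T' ∈ P, (Dead T').card
        = ∑ i : Fin m, (P.filter (fun T' => i ∈ Dead T')).card := by
      calc ∑ T' ∈ P, (Dead T').card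
          = ∑ T' ∈ P, ∑ i : Fin m, (if i ∈ Dead T' then 1 else 0) := by
            refine Finset.sum_congr rfl fun T' _ => hcardsum _
        _ = ∑ i : Fin m, ∑ T' ∈ P, (if i ∈ Dead T' then 1 else 0) := Finset.sum_comm
        _ = ∑ i : Fin m, (P.filter (fun T' => i ∈ Dead T')).card := by
            refine Finset.sum_congr rfl fun i _ => ?_
            rw [Finset.card_filter]
    rw [hswap, ← Finset.sum_add_sum_compl IM]
    have hb1 : ∑ i ∈ IM, (P.filter (fun T' => i ∈ Dead T')).card
        ≤ IM.card * (4 * ((n - 2).choose (k - 2))) := by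
      calc _ ≤ IM.card • (4 * ((n - 2).choose (k - 2))) :=
            Finset.sum_le_card_nsmul _ _ _ (fun i hi => hmatch i hi)
        _ = _ := by rw [smul_eq_mul]
    have hb2 : ∑ i ∈ IMᶜ, (P.filter (fun T' => i ∈ Dead T')).card
        ≤ IMᶜ.card * (2 * ((n - 1).choose (k - 1))) := by
      calc _ ≤ IMᶜ.card • (2 * ((n - 1).choose (k - 1))) :=
            Finset.sum_le_card_nsmul _ _ _
              (fun i hi => hsingle i (Finset.mem_compl.mp hi))
        _ = _ := by rw [smul_eq_mul]
    omega
  -- averaging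
  have hPcard : P.card = n.choose k := by
    rw [hPdef, Finset.card_powersetCard, Finset.card_univ, Fintype.card_fin]
  have hPne : P.Nonempty := by
    rw [← Finset.card_pos, hPcard]; exact Nat.choose_pos hkn
  obtain ⟨T, hTP, hTavg⟩ := Finset.exists_le_of_sum_le (f := fun T => P.card * (Dead T).card)
    (g := fun _ => ∑ T' ∈ P, (Dead T').card) hPne
    (by rw [← Finset.mul_sum, Finset.sum_const, smul_eq_mul])
  -- binomial identities
  have key : (Dead T).card * (n * (n - 1)) ≤
      IMᶜ.card * (2 * (k * (n - 1))) + IM.card * (4 * (k * (k - 1))) := by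
    have hc : 0 < n.choose k := Nat.choose_pos hkn
    have h1 : n * ((n - 1).choose (k - 1)) = n.choose k * k := by
      have h := Nat.add_one_mul_choose_eq (n - 1) (k - 1)
      have e1 : n - 1 + 1 = n := by omega
      have e2 : k - 1 + 1 = k := by omega
      rw [e1, e2] at h
      exact h
    have h2 : (n - 1) * ((n - 2).choose (k - 2)) = (n - 1).choose (k - 1) * (k - 1) := by
      have h := Nat.add_one_mul_choose_eq (n - 2) (k - 2)
      have e0 : n - 2 = (n - 1) - 1 := by omega
      have e0' : k - 2 = (k - 1) - 1 := by omega
      rw [e0, e0'] at h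
      have e1 : (n - 1) - 1 + 1 = n - 1 := by omega
      have e2 : (k - 1) - 1 + 1 = k - 1 := by omega
      rw [e1, e2] at h
      exact h
    refine Nat.le_of_mul_le_mul_left ?_ hc
    calc n.choose k * ((Dead T).card * (n * (n - 1)))
        = (P.card * (Dead T).card) * (n * (n - 1)) := by rw [hPcard]; ring
      _ ≤ (IM.card * (4 * ((n - 2).choose (k - 2)))
            + IMᶜ.card * (2 * ((n - 1).choose (k - 1)))) * (n * (n - 1)) :=
          Nat.mul_le_mul_right _ (hTavg.trans hsum)
      _ = IM.card * 4 * (n * ((n - 1) * ((n - 2).choose (k - 2))))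
            + IMᶜ.card * 2 * ((n - 1) * (n * ((n - 1).choose (k - 1)))) := by ring
      _ = IM.card * 4 * (n * ((n - 1).choose (k - 1) * (k - 1)))
            + IMᶜ.card * 2 * ((n - 1) * (n.choose k * k)) := by rw [h1, h2]
      _ = IM.card * 4 * ((n * ((n - 1).choose (k - 1))) * (k - 1))
            + IMᶜ.card * 2 * ((n - 1) * (n.choose k * k)) := by ring
      _ = IM.card * 4 * ((n.choose k * k) * (k - 1))
            + IMᶜ.card * 2 * ((n - 1) * (n.choose k * k)) := by rw [h1]
      _ = n.choose k * (IMᶜ.card * (2 * (k * (n - 1))) + IM.card * (4 * (k * (k - 1)))) := by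
          ring
  -- cast to ℝ
  have keyR : ((Dead T).card : ℝ) * ((n:ℝ) * ((n:ℝ) - 1)) ≤
      ((IMᶜ).card : ℝ) * (2 * ((k:ℝ) * ((n:ℝ) - 1)))
        + (IM.card : ℝ) * (4 * ((k:ℝ) * ((k:ℝ) - 1))) := by
    have h1n : (1:ℕ) ≤ n := hn1
    have h1k : (1:ℕ) ≤ k := by omega
    have := (Nat.cast_le (α := ℝ)).mpr key
    push_cast [Nat.cast_sub h1n, Nat.cast_sub h1k] at this
    linarith
  -- the surviving classes
  have hTcard : T.card = k := (Finset.mem_powersetCard.mp (by rwa [hPdef] at hTP)).2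
  set A : Finset (Fin m) := Finset.univ.filter
    (fun i => ∃ e ∈ F i, ∀ v ∈ T, v ∉ e) with hAdef
  have hAcompl : A = (Dead T)ᶜ := by
    ext i
    simp only [hAdef, hDeaddef, Finset.mem_filter, Finset.mem_compl, Finset.mem_univ, true_and]
    constructor
    · rintro ⟨e, he, hav⟩ hall
      obtain ⟨v, hvT, hve⟩ := hall e he
      exact hav v hvT hve
    · intro hnot
      by_contra hcon
      push_neg at hcon
      exact hnot hcon
  have hAcard : A.card = m - (Dead T).card := by
    rw [hAcompl, Finset.card_compl, Fintype.card_fin]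
  have hdeadm : (Dead T).card ≤ m := by
    simpa using Finset.card_le_univ (Dead T)
  -- choose one surviving edge per surviving class
  have hn0 : 0 < n := by omega
  set junk : Sym2 (Fin n) := s(⟨0, hn0⟩, ⟨0, hn0⟩) with hjunk
  set g : Fin m → Sym2 (Fin n) := fun i =>
    if h : ∃ e ∈ F i, ∀ v ∈ T, v ∉ e then h.choose else junk with hgdef
  have hgF : ∀ i ∈ A, g i ∈ F i ∧ ∀ v ∈ T, v ∉ g i := by
    intro i hi
    rw [hAdef, Finset.mem_filter] at hi
    rw [hgdef]
    simp only [dif_pos hi.2]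
    exact ⟨hi.2.choose_spec.1, hi.2.choose_spec.2⟩
  set R : Finset (Sym2 (Fin n)) := A.image g with hRdef
  have hginj : Set.InjOn g A := by
    intro i hi j hj hij
    by_contra hne
    have hd := hFdisj i j hne
    have : g i ∈ F i ∩ F j := Finset.mem_inter.mpr
      ⟨(hgF i hi).1, hij ▸ (hgF j hj).1⟩
    rw [Finset.disjoint_iff_inter_eq_empty] at hd
    simp [hd] at this
  have hRcard : R.card = A.card := Finset.card_image_of_injOn hginj
  refine ⟨Tᶜ, ?_, R, ?_, ?_, ?_, ?_⟩
  · -- |S| ≤ β n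
    have : Tᶜ.card = n - k := by rw [Finset.card_compl, hTcard, Fintype.card_fin]
    rw [this]
    push_cast [Nat.cast_sub hkn]
    linarith
  · -- R ⊆ edgeSet
    intro e he
    simp only [hRdef, Finset.coe_image, Set.mem_image, Finset.mem_coe] at he
    obtain ⟨i, hi, rfl⟩ := he
    exact hFsub i (Finset.mem_coe.mpr (hgF i hi).1)
  · -- vertices of R in S
    intro e he v hv
    simp only [hRdef, Finset.mem_image] at he
    obtain ⟨i, hi, rfl⟩ := he
    rw [Finset.mem_compl]
    intro hvT
    exact (hgF i hi).2 v hvT hv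
  · -- rainbow
    intro i
    rw [Finset.card_le_one]
    intro x hx y hy
    simp only [Finset.mem_inter, hRdef, Finset.mem_image] at hx hy
    obtain ⟨⟨a, ha, rfl⟩, hxi⟩ := hx
    obtain ⟨⟨b, hb, rfl⟩, hyi⟩ := hy
    have hai : a = i := by
      by_contra hne
      have hd := hFdisj a i hne
      rw [Finset.disjoint_iff_inter_eq_empty] at hd
      have : g a ∈ F a ∩ F i := Finset.mem_inter.mpr ⟨(hgF a ha).1, hxi⟩
      simp [hd] at this
    have hbi : b = i := by
      by_contra hne
      have hd := hFdisj b i hne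
      rw [Finset.disjoint_iff_inter_eq_empty] at hd
      have : g b ∈ F b ∩ F i := Finset.mem_inter.mpr ⟨(hgF b hb).1, hyi⟩
      simp [hd] at this
    rw [hai, hbi]
  · -- size of R
    have hmts : (IM.card : ℝ) + (IMᶜ.card : ℝ) = m := by
      have := Finset.card_add_card_compl IM
      rw [Fintype.card_fin] at this
      exact_mod_cast this
    have hRR : (R.card : ℝ) = (m:ℝ) - ((Dead T).card : ℝ) := by
      rw [hRcard, hAcard]
      push_cast [Nat.cast_sub hdeadm]
      ring
    rw [hRR]
    set t : ℝ := (IM.card : ℝ) with htdef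
    set s : ℝ := ((IMᶜ).card : ℝ) with hsdef
    have ht0 : 0 ≤ t := Nat.cast_nonneg _
    have hs0 : 0 ≤ s := Nat.cast_nonneg _
    have hd0 : (0:ℝ) ≤ ((Dead T).card : ℝ) := Nat.cast_nonneg _
    rw [← hmts]
    exact aux_arith α ε γ (n:ℝ) (k:ℝ) t s ((Dead T).card : ℝ) hα hε0 hεα hε8 hγdef
      hγn hn2 hkγ hkup hIMt hIMs ht0 hs0 hd0 keyR
end

section
/- For every real α > 1/2 there exist constants ξ > 0 and c > 0 such that for every sufficiently large integer n the following holds: let G be a graph on n vertices with an edge coloring F = F_M ⊔ F_E, where every color class in F_M is a matching of size 2, every color class in F_E is a single edge, |F_M| ≥ (α − ξ)·n, and |F_E| ≥ (1 − α − ξ)·n. Then there exists a subset S of V(G) such that the maximum size of a rainbow edge set contained in the induced subgraph G[S] is at least |S| + c·n. -/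
open Finset SimpleGraph
open scoped Classical

lemma exists_good_constants (α : ℝ) (hα : 1 / 2 < α) :
    ∃ N : ℕ, ∃ ξ c : ℝ, 2 ≤ N ∧ 0 < ξ ∧ 0 < c ∧ ξ < α ∧
      ∀ K L n : ℝ, 0 ≤ n → (α - ξ) * n ≤ K → (1 - α - ξ) * n ≤ L →
        n * (((N:ℝ) - 1) * (N:ℝ) ^ 3) + c * n * (N:ℝ) ^ 4
          ≤ K * (2 * (((N:ℝ) - 1) ^ 2 * (N:ℝ) ^ 2) - ((N:ℝ) - 1) ^ 4)
            + L * (((N:ℝ) - 1) ^ 2 * (N:ℝ) ^ 2) := by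
  have hβ : (0:ℝ) < 2 * α - 1 := by linarith
  have hα0 : (0:ℝ) < α := by linarith
  obtain ⟨N, hNgt⟩ := exists_nat_gt (max 2 (3 * α / (2 * α - 1)))
  have hN2 : 2 ≤ N := by
    have h := lt_of_le_of_lt (le_max_left 2 (3 * α / (2 * α - 1))) hNgt
    exact_mod_cast h.le
  have hNb : 3 * α / (2 * α - 1) < N := lt_of_le_of_lt (le_max_right _ _) hNgt
  have hNr2 : (2:ℝ) ≤ (N:ℝ) := by exact_mod_cast hN2
  set Nr : ℝ := (N : ℝ)
  have hNr0 : (0:ℝ) < Nr := by linarith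
  have htr0 : (0:ℝ) < Nr - 1 := by linarith
  have hNr4 : (0:ℝ) < Nr ^ 4 := by positivity
  set tr : ℝ := Nr - 1 with htrdef
  have htrN : tr ≤ Nr := by linarith
  set Gv : ℝ := tr * (α * tr * (Nr + tr) - Nr ^ 2) with hGvdef
  have h2 : α * tr * (Nr + tr) - Nr ^ 2 > 0 := by
    have h1 : 3 * α < Nr * (2 * α - 1) := (div_lt_iff₀ hβ).1 hNb
    have h1N : 3 * α * Nr < (Nr * (2 * α - 1)) * Nr :=
      mul_lt_mul_of_pos_right h1 hNr0
    rw [htrdef]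
    nlinarith [h1N, hα0]
  have hGpos : 0 < Gv := mul_pos htr0 h2
  refine ⟨N, Gv / (6 * Nr ^ 4), Gv / (2 * Nr ^ 4), hN2, by positivity, by positivity, ?_, ?_⟩
  · -- ξ < α
    have hGub : Gv ≤ 2 * α * Nr ^ 3 := by
      have s1 : Gv ≤ tr * (α * tr * (Nr + tr)) := by
        apply mul_le_mul_of_nonneg_left _ htr0.le
        nlinarith [sq_nonneg Nr]
      have sinner : α * tr * (Nr + tr) ≤ α * Nr * (2 * Nr) := by
        apply mul_le_mul (mul_le_mul_of_nonneg_left htrN hα0.le) (by linarith)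
          (by linarith) (by positivity)
      have s2 : tr * (α * tr * (Nr + tr)) ≤ Nr * (α * Nr * (2 * Nr)) := by
        apply mul_le_mul htrN sinner (by positivity) hNr0.le
      have s3 : Nr * (α * Nr * (2 * Nr)) = 2 * α * Nr ^ 3 := by ring
      linarith
    rw [div_lt_iff₀ (by positivity)]
    have hfin : α * Nr ^ 3 * (3 * Nr - 1) > 0 := by
      apply mul_pos (by positivity)
      linarith
    linarith
  · intro K L n hn hK hL
    set ξ : ℝ := Gv / (6 * Nr ^ 4) with hξdef
    set c : ℝ := Gv / (2 * Nr ^ 4) with hcdef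
    have htr2 : tr ^ 2 ≤ Nr ^ 2 := by
      apply pow_le_pow_left₀ htr0.le htrN
    have hA : (0:ℝ) ≤ 2 * (tr ^ 2 * Nr ^ 2) - tr ^ 4 := by
      nlinarith [mul_le_mul_of_nonneg_left htr2 (sq_nonneg tr)]
    have hB : (0:ℝ) ≤ tr ^ 2 * Nr ^ 2 := by positivity
    have hGid : α * (2 * (tr ^ 2 * Nr ^ 2) - tr ^ 4) + (1 - α) * (tr ^ 2 * Nr ^ 2)
        - tr * Nr ^ 3 = Gv := by
      rw [hGvdef, htrdef]; ring
    have hcid : c * Nr ^ 4 = Gv / 2 := by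
      rw [hcdef]; field_simp
    have hξnn : (0:ℝ) ≤ ξ := by positivity
    have hξid : ξ * (3 * Nr ^ 4) = Gv / 2 := by
      rw [hξdef]; field_simp; ring
    have h5 : tr ^ 2 * Nr ^ 2 ≤ Nr ^ 4 := by
      have := mul_le_mul_of_nonneg_right htr2 (sq_nonneg Nr)
      calc tr ^ 2 * Nr ^ 2 ≤ Nr ^ 2 * Nr ^ 2 := this
        _ = Nr ^ 4 := by ring
    have hu : ξ * (3 * (tr ^ 2 * Nr ^ 2) - tr ^ 4) ≤ ξ * (3 * Nr ^ 4) := by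
      apply mul_le_mul_of_nonneg_left _ hξnn
      have h6 : (0:ℝ) ≤ tr ^ 4 := by positivity
      linarith
    have hbracket : 0 ≤ (α - ξ) * (2 * (tr ^ 2 * Nr ^ 2) - tr ^ 4)
        + (1 - α - ξ) * (tr ^ 2 * Nr ^ 2) - tr * Nr ^ 3 - c * Nr ^ 4 := by
      have hexp : (α - ξ) * (2 * (tr ^ 2 * Nr ^ 2) - tr ^ 4)
          + (1 - α - ξ) * (tr ^ 2 * Nr ^ 2) - tr * Nr ^ 3 - c * Nr ^ 4
          = (α * (2 * (tr ^ 2 * Nr ^ 2) - tr ^ 4) + (1 - α) * (tr ^ 2 * Nr ^ 2) - tr * Nr ^ 3)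
            - ξ * (3 * (tr ^ 2 * Nr ^ 2) - tr ^ 4) - c * Nr ^ 4 := by ring
      have hle : ξ * (3 * (tr ^ 2 * Nr ^ 2) - tr ^ 4) ≤ Gv / 2 := by
        rw [← hξid]; exact hu
      rw [hexp, hGid, hcid]
      clear_value ξ c Gv
      linarith
    have e1 := mul_le_mul_of_nonneg_right hK hA
    have e2 := mul_le_mul_of_nonneg_right hL hB
    have e3 := mul_le_mul_of_nonneg_left hbracket hn
    have hnb : n * ((α - ξ) * (2 * (tr ^ 2 * Nr ^ 2) - tr ^ 4)
        + (1 - α - ξ) * (tr ^ 2 * Nr ^ 2) - tr * Nr ^ 3 - c * Nr ^ 4)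
        = (α - ξ) * n * (2 * (tr ^ 2 * Nr ^ 2) - tr ^ 4)
          + (1 - α - ξ) * n * (tr ^ 2 * Nr ^ 2) - n * (tr * Nr ^ 3) - c * n * Nr ^ 4 := by
      ring
    rw [hnb] at e3
    clear_value ξ c Gv
    have hgoal : n * (tr * Nr ^ 3) + c * n * Nr ^ 4
        ≤ K * (2 * (tr ^ 2 * Nr ^ 2) - tr ^ 4) + L * (tr ^ 2 * Nr ^ 2) := by
      linarith
    exact hgoal

lemma card_filter_lt_fin (N t : ℕ) (ht : t ≤ N) :
    (univ.filter fun x : Fin N => (x:ℕ) < t).card = t := by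
  have : (univ.filter fun x : Fin N => (x:ℕ) < t)
      = (Finset.range t).attachFin (fun m hm => lt_of_lt_of_le (Finset.mem_range.1 hm) ht) := by
    ext x; simp [Finset.mem_attachFin]
  rw [this, Finset.card_attachFin, Finset.card_range]

lemma count_forall (n N t : ℕ) (ht : t ≤ N) (K : Finset (Fin n)) :
    (univ.filter fun σ : Fin n → Fin N => ∀ v ∈ K, (σ v : ℕ) < t).card
      = t ^ K.card * N ^ (n - K.card) := by
  classical
  have hset : (univ.filter fun σ : Fin n → Fin N => ∀ v ∈ K, (σ v : ℕ) < t)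
      = Fintype.piFinset (fun v => if v ∈ K then (univ.filter fun x : Fin N => (x:ℕ) < t)
          else univ) := by
    ext σ
    simp only [Finset.mem_filter, Finset.mem_univ, true_and, Fintype.mem_piFinset]
    constructor
    · intro h v
      by_cases hv : v ∈ K <;> simp [hv, h v]
    · intro h v hv
      have := h v
      simp [hv] at this
      exact this
  rw [hset, Fintype.card_piFinset]
  rw [← Finset.prod_filter_mul_prod_filter_not univ (· ∈ K)]
  have h1 : ∀ v ∈ univ.filter (· ∈ K),
      ((if v ∈ K then (univ.filter fun x : Fin N => (x:ℕ) < t) else univ).card) = t := by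
    intro v hv; simp at hv; simp [hv, card_filter_lt_fin N t ht]
  have h2 : ∀ v ∈ univ.filter (· ∉ K),
      ((if v ∈ K then (univ.filter fun x : Fin N => (x:ℕ) < t) else univ).card) = N := by
    intro v hv; simp at hv; simp [hv]
  rw [Finset.prod_congr rfl h1, Finset.prod_congr rfl h2, Finset.prod_const, Finset.prod_const]
  congr 1
  · congr 1; simp
  · congr 1
    rw [Finset.filter_not, Finset.card_sdiff_of_subset (by simp)]
    simp [Finset.filter_univ_mem]

lemma count_one (n N t : ℕ) (ht : t ≤ N) (v : Fin n) :
    (univ.filter fun σ : Fin n → Fin N => (σ v : ℕ) < t).card = t * N ^ (n - 1) := by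
  have he : (univ.filter fun σ : Fin n → Fin N => (σ v : ℕ) < t)
      = (univ.filter fun σ : Fin n → Fin N =>
          ∀ u ∈ ({v} : Finset (Fin n)), (σ u : ℕ) < t) := by
    ext σ; simp
  rw [he, count_forall n N t ht]
  simp

lemma count_two (n N t : ℕ) (ht : t ≤ N) (a b : Fin n) (hab : a ≠ b) :
    (univ.filter fun σ : Fin n → Fin N => (σ a : ℕ) < t ∧ (σ b : ℕ) < t).card
      = t ^ 2 * N ^ (n - 2) := by
  have he : (univ.filter fun σ : Fin n → Fin N => (σ a : ℕ) < t ∧ (σ b : ℕ) < t)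
      = (univ.filter fun σ : Fin n → Fin N =>
          ∀ u ∈ ({a, b} : Finset (Fin n)), (σ u : ℕ) < t) := by
    ext σ
    simp only [Finset.mem_filter, Finset.mem_univ, true_and, Finset.mem_insert,
      Finset.mem_singleton]
    constructor
    · rintro ⟨h1, h2⟩ u (rfl | rfl) <;> assumption
    · intro h; exact ⟨h a (Or.inl rfl), h b (Or.inr rfl)⟩
  rw [he, count_forall n N t ht]
  rw [Finset.card_insert_of_notMem (by simp [hab]), Finset.card_singleton]

lemma count_match (n N t : ℕ) (ht : t ≤ N) (a b c d : Fin n)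
    (hab : a ≠ b) (hcd : c ≠ d) (hac : a ≠ c) (had : a ≠ d) (hbc : b ≠ c) (hbd : b ≠ d) :
    (univ.filter fun σ : Fin n → Fin N =>
        ((σ a : ℕ) < t ∧ (σ b : ℕ) < t) ∨ ((σ c : ℕ) < t ∧ (σ d : ℕ) < t)).card
        + t ^ 4 * N ^ (n - 4)
      = t ^ 2 * N ^ (n - 2) + t ^ 2 * N ^ (n - 2) := by
  rw [Finset.filter_or]
  have he : (univ.filter fun σ : Fin n → Fin N =>
      ((σ a : ℕ) < t ∧ (σ b : ℕ) < t) ∧ ((σ c : ℕ) < t ∧ (σ d : ℕ) < t))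
      = (univ.filter fun σ : Fin n → Fin N =>
          ∀ u ∈ ({a, b, c, d} : Finset (Fin n)), (σ u : ℕ) < t) := by
    ext σ
    simp only [Finset.mem_filter, Finset.mem_univ, true_and, Finset.mem_insert,
      Finset.mem_singleton]
    constructor
    · rintro ⟨⟨h1, h2⟩, h3, h4⟩ u (rfl | rfl | rfl | rfl) <;> assumption
    · intro h
      exact ⟨⟨h a (by tauto), h b (by tauto)⟩, h c (by tauto), h d (by tauto)⟩
  have hcard : ({a, b, c, d} : Finset (Fin n)).card = 4 := by
    rw [Finset.card_insert_of_notMem (by simp [hab, hac, had]),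
      Finset.card_insert_of_notMem (by simp [hbc, hbd]),
      Finset.card_insert_of_notMem (by simp [hcd]), Finset.card_singleton]
  have hint : ((univ.filter fun σ : Fin n → Fin N => (σ a : ℕ) < t ∧ (σ b : ℕ) < t)
      ∩ (univ.filter fun σ : Fin n → Fin N => (σ c : ℕ) < t ∧ (σ d : ℕ) < t)).card
      = t ^ 4 * N ^ (n - 4) := by
    rw [← Finset.filter_and, he, count_forall n N t ht, hcard]
  rw [← hint, Finset.card_union_add_card_inter,
    count_two n N t ht a b hab, count_two n N t ht c d hcd]

lemma sym2_rep {V : Type*} (e : Sym2 V) : ∃ a b, e = s(a,b) := by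
  induction e using Sym2.ind with | _ x y => exact ⟨x, y, rfl⟩

/-- the random vertex set -/
def Sfun {n N : ℕ} (t : ℕ) (σ : Fin n → Fin N) : Finset (Fin n) :=
  univ.filter fun v => (σ v : ℕ) < t

@[simp] lemma mem_Sfun {n N t : ℕ} (σ : Fin n → Fin N) (v : Fin n) :
    v ∈ Sfun t σ ↔ (σ v : ℕ) < t := by simp [Sfun]

/-- class `i` is covered by the random set -/
def covP {n N m : ℕ} (F : Fin m → Finset (Sym2 (Fin n))) (t : ℕ) (i : Fin m)
    (σ : Fin n → Fin N) : Prop :=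
  ∃ e ∈ F i, ∀ v ∈ e, v ∈ Sfun t σ

lemma cnt_single {n N t m : ℕ} (ht : t ≤ N) (F : Fin m → Finset (Sym2 (Fin n)))
    (i : Fin m) (a b : Fin n) (hab : a ≠ b) (hFi : F i = {s(a, b)}) :
    (univ.filter fun σ : Fin n → Fin N => covP F t i σ).card = t ^ 2 * N ^ (n - 2) := by
  have he : (univ.filter fun σ : Fin n → Fin N => covP F t i σ)
      = (univ.filter fun σ : Fin n → Fin N => (σ a : ℕ) < t ∧ (σ b : ℕ) < t) := by
    ext σ
    simp only [Finset.mem_filter, Finset.mem_univ, true_and, covP, hFi,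
      Finset.mem_singleton, mem_Sfun]
    constructor
    · rintro ⟨e, rfl, h⟩
      exact ⟨h a (by simp), h b (by simp)⟩
    · rintro ⟨h1, h2⟩
      refine ⟨s(a, b), rfl, ?_⟩
      intro v hv
      rw [Sym2.mem_iff] at hv
      rcases hv with rfl | rfl <;> simpa
  rw [he, count_two n N t ht a b hab]

lemma cnt_matching {n N t m : ℕ} (ht : t ≤ N) (F : Fin m → Finset (Sym2 (Fin n)))
    (i : Fin m) (a b c d : Fin n)
    (hab : a ≠ b) (hcd : c ≠ d) (hac : a ≠ c) (had : a ≠ d) (hbc : b ≠ c) (hbd : b ≠ d)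
    (hFi : F i = {s(a, b), s(c, d)}) :
    (univ.filter fun σ : Fin n → Fin N => covP F t i σ).card + t ^ 4 * N ^ (n - 4)
      = t ^ 2 * N ^ (n - 2) + t ^ 2 * N ^ (n - 2) := by
  have he : (univ.filter fun σ : Fin n → Fin N => covP F t i σ)
      = (univ.filter fun σ : Fin n → Fin N =>
          ((σ a : ℕ) < t ∧ (σ b : ℕ) < t) ∨ ((σ c : ℕ) < t ∧ (σ d : ℕ) < t)) := by
    ext σ
    simp only [Finset.mem_filter, Finset.mem_univ, true_and, covP, hFi,
      Finset.mem_insert, Finset.mem_singleton, mem_Sfun]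
    constructor
    · rintro ⟨e, (rfl | rfl), h⟩
      · exact Or.inl ⟨h a (by simp), h b (by simp)⟩
      · exact Or.inr ⟨h c (by simp), h d (by simp)⟩
    · rintro (⟨h1, h2⟩ | ⟨h1, h2⟩)
      · refine ⟨s(a, b), Or.inl rfl, ?_⟩
        intro v hv
        rw [Sym2.mem_iff] at hv
        rcases hv with rfl | rfl <;> simpa
      · refine ⟨s(c, d), Or.inr rfl, ?_⟩
        intro v hv
        rw [Sym2.mem_iff] at hv
        rcases hv with rfl | rfl <;> simpa
  rw [he, count_match n N t ht a b c d hab hcd hac had hbc hbd]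

lemma sum_Sfun_card (n N t : ℕ) (ht : t ≤ N) :
    ∑ σ : Fin n → Fin N, (Sfun t σ).card = n * (t * N ^ (n - 1)) := by
  have h1 : ∀ σ : Fin n → Fin N, (Sfun t σ).card
      = ∑ v : Fin n, if (σ v : ℕ) < t then 1 else 0 := by
    intro σ; rw [Sfun, Finset.card_filter]
  rw [Finset.sum_congr rfl (fun σ _ => h1 σ), Finset.sum_comm]
  have h2 : ∀ v : Fin n, (∑ σ : Fin n → Fin N, if (σ v : ℕ) < t then 1 else 0)
      = t * N ^ (n - 1) := by
    intro v
    rw [← Finset.card_filter]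
    exact count_one n N t ht v
  rw [Finset.sum_congr rfl (fun v _ => h2 v), Finset.sum_const]
  simp [mul_comm]

lemma sum_cov_swap {n N m t : ℕ} (F : Fin m → Finset (Sym2 (Fin n))) :
    ∑ σ : Fin n → Fin N, (univ.filter fun i : Fin m => covP F t i σ).card
      = ∑ i : Fin m, (univ.filter fun σ : Fin n → Fin N => covP F t i σ).card := by
  simp only [Finset.card_filter]
  exact Finset.sum_comm

set_option maxHeartbeats 1000000 in
/-- For every `α > 1/2` there exist `ξ, c > 0` such that for every sufficiently
large `n`: if a graph `G` on `n` vertices has an edge coloring `F = F_M ⊔ F_E`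
(size-2 matchings and single edges, with `|F_M| ≥ (α − ξ)·n` and
`|F_E| ≥ (1 − α − ξ)·n`), then there is a vertex subset `S` such that the
maximum size of a rainbow edge set contained in `G[S]` is at least `|S| + c·n`. -/
theorem statement_3 (α : ℝ) (hα : 1 / 2 < α) :
    ∃ ξ c : ℝ, 0 < ξ ∧ 0 < c ∧ ∃ n₀ : ℕ, ∀ n : ℕ, n₀ ≤ n →
      ∀ (m : ℕ) (G : SimpleGraph (Fin n)) (F : Fin m → Finset (Sym2 (Fin n)))
        (IM : Finset (Fin m)),
        IsEdgeColoring G F →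
        (∀ i ∈ IM, IsMatching2 (F i)) →
        (∀ i ∉ IM, (F i).card = 1) →
        (α - ξ) * n ≤ (IM.card : ℝ) →
        (1 - α - ξ) * n ≤ ((IMᶜ).card : ℝ) →
        ∃ S : Finset (Fin n), ∃ R : Finset (Sym2 (Fin n)),
          (R : Set (Sym2 (Fin n))) ⊆ G.edgeSet ∧
          (∀ e ∈ R, ∀ v : Fin n, v ∈ e → v ∈ S) ∧
          (∀ i, (R ∩ F i).card ≤ 1) ∧
          (S.card : ℝ) + c * n ≤ (R.card : ℝ) := by
  classical
  obtain ⟨N, ξ, c, hN2, hξ0, hc0, hξα, hineq⟩ := exists_good_constants α hα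
  have hN1 : 1 ≤ N := by omega
  refine ⟨ξ, c, hξ0, hc0, 1, ?_⟩
  intro n hn m G F IM hcol hM hE hIM hIME
  obtain ⟨hne, hdisj, hsub, hcover⟩ := hcol
  set t : ℕ := N - 1 with htdef
  have htN : t ≤ N := by omega
  have htcast : ((t : ℕ) : ℝ) = (N:ℝ) - 1 := by
    rw [htdef]; push_cast [Nat.cast_sub hN1]; ring
  have hn0 : (0:ℝ) < n := by exact_mod_cast (by omega : 0 < n)
  -- IM is nonempty
  have hIMne : IM.Nonempty := by
    rw [← Finset.card_pos]
    by_contra h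
    push_neg at h
    have hc0' : IM.card = 0 := by omega
    rw [hc0'] at hIM
    push_cast at hIM
    nlinarith [mul_pos (show (0:ℝ) < α - ξ by linarith) hn0]
  -- representation of matching classes
  have hrep : ∀ i ∈ IM, ∃ a b c d : Fin n, a ≠ b ∧ c ≠ d ∧ a ≠ c ∧ a ≠ d ∧ b ≠ c ∧ b ≠ d ∧
      F i = {s(a, b), s(c, d)} := by
    intro i hi
    obtain ⟨hcard2, hdisjv⟩ := hM i hi
    obtain ⟨e₁, e₂, he12, hFi⟩ := Finset.card_eq_two.1 hcard2
    obtain ⟨a, b, rfl⟩ := sym2_rep e₁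
    obtain ⟨cc, d, rfl⟩ := sym2_rep e₂
    have he₁ : s(a, b) ∈ G.edgeSet := hsub i (by rw [hFi]; simp)
    have he₂ : s(cc, d) ∈ G.edgeSet := hsub i (by rw [hFi]; simp)
    have hab : a ≠ b := (G.mem_edgeSet.1 he₁).ne
    have hcd : cc ≠ d := (G.mem_edgeSet.1 he₂).ne
    have hd1 : ∀ v : Fin n, v ∈ s(a, b) → v ∉ s(cc, d) :=
      hdisjv s(a, b) (by rw [hFi]; simp) s(cc, d) (by rw [hFi]; simp) he12
    have hac : a ≠ cc := fun h => hd1 a (by simp) (by rw [h]; simp)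
    have had : a ≠ d := fun h => hd1 a (by simp) (by rw [h]; simp)
    have hbc : b ≠ cc := fun h => hd1 b (by simp) (by rw [h]; simp)
    have hbd : b ≠ d := fun h => hd1 b (by simp) (by rw [h]; simp)
    exact ⟨a, b, cc, d, hab, hcd, hac, had, hbc, hbd, hFi⟩
  -- n ≥ 4
  have hn4 : 4 ≤ n := by
    obtain ⟨i₀, hi₀⟩ := hIMne
    obtain ⟨a, b, cc, d, hab, hcd, hac, had, hbc, hbd, _⟩ := hrep i₀ hi₀
    have hcard : ({a, b, cc, d} : Finset (Fin n)).card = 4 := by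
      rw [Finset.card_insert_of_notMem (by simp [hab, hac, had]),
        Finset.card_insert_of_notMem (by simp [hbc, hbd]),
        Finset.card_insert_of_notMem (by simp [hcd]), Finset.card_singleton]
    calc 4 = ({a, b, cc, d} : Finset (Fin n)).card := hcard.symm
      _ ≤ (univ : Finset (Fin n)).card := Finset.card_le_card (by simp)
      _ = n := by simp
  -- per-class counts, in ℝ
  have hcntM : ∀ i ∈ IM,
      (((univ.filter fun σ : Fin n → Fin N => covP F t i σ).card : ℕ) : ℝ)
        = 2 * (((N:ℝ) - 1) ^ 2 * (N:ℝ) ^ (n - 2)) - ((N:ℝ) - 1) ^ 4 * (N:ℝ) ^ (n - 4) := by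
    intro i hi
    obtain ⟨a, b, cc, d, hab, hcd, hac, had, hbc, hbd, hFi⟩ := hrep i hi
    have hh := cnt_matching htN F i a b cc d hab hcd hac had hbc hbd hFi
    have hc' := congrArg (Nat.cast : ℕ → ℝ) hh
    push_cast at hc'
    rw [htcast] at hc'
    linarith
  have hcntE : ∀ i ∉ IM,
      (((univ.filter fun σ : Fin n → Fin N => covP F t i σ).card : ℕ) : ℝ)
        = ((N:ℝ) - 1) ^ 2 * (N:ℝ) ^ (n - 2) := by
    intro i hi
    obtain ⟨e, hFi⟩ := Finset.card_eq_one.1 (hE i hi)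
    obtain ⟨a, b, rfl⟩ := sym2_rep e
    have he₁ : s(a, b) ∈ G.edgeSet := hsub i (by rw [hFi]; simp)
    have hab : a ≠ b := (G.mem_edgeSet.1 he₁).ne
    have hh := cnt_single htN F i a b hab hFi
    have hc' := congrArg (Nat.cast : ℕ → ℝ) hh
    push_cast at hc'
    rw [htcast] at hc'
    linarith
  -- sums
  have hswap : (∑ σ : Fin n → Fin N,
        (((univ.filter fun i : Fin m => covP F t i σ).card : ℕ) : ℝ))
      = ∑ i : Fin m, (((univ.filter fun σ : Fin n → Fin N => covP F t i σ).card : ℕ) : ℝ) := by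
    have := congrArg (Nat.cast : ℕ → ℝ) (sum_cov_swap (N := N) (t := t) F)
    push_cast at this
    exact this
  have hScard : (∑ σ : Fin n → Fin N, (((Sfun t σ).card : ℕ) : ℝ))
      = n * (((N:ℝ) - 1) * (N:ℝ) ^ (n - 1)) := by
    have := congrArg (Nat.cast : ℕ → ℝ) (sum_Sfun_card n N t htN)
    push_cast at this
    rw [htcast] at this
    exact this
  have hsplit : (∑ i : Fin m, (((univ.filter fun σ : Fin n → Fin N => covP F t i σ).card : ℕ) : ℝ))
      = (IM.card : ℝ) * (2 * (((N:ℝ) - 1) ^ 2 * (N:ℝ) ^ (n - 2)) - ((N:ℝ) - 1) ^ 4 * (N:ℝ) ^ (n - 4))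
        + ((IMᶜ).card : ℝ) * (((N:ℝ) - 1) ^ 2 * (N:ℝ) ^ (n - 2)) := by
    rw [← Finset.sum_add_sum_compl IM]
    rw [Finset.sum_congr rfl hcntM,
      Finset.sum_congr rfl (fun i hi => hcntE i (by simpa using hi)),
      Finset.sum_const, Finset.sum_const, nsmul_eq_mul, nsmul_eq_mul]
  -- the key inequality
  have hpoly := hineq (IM.card : ℝ) ((IMᶜ).card : ℝ) n (Nat.cast_nonneg n) hIM hIME
  have hX0 : (0:ℝ) ≤ (N:ℝ) ^ (n - 4) := by positivity
  have hmul := mul_le_mul_of_nonneg_right hpoly hX0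
  have hp2 : ((N:ℝ)) ^ (n - 2) = (N:ℝ) ^ 2 * (N:ℝ) ^ (n - 4) := by
    rw [← pow_add]
    congr 1
    omega
  have hp1 : ((N:ℝ)) ^ (n - 1) = (N:ℝ) ^ 3 * (N:ℝ) ^ (n - 4) := by
    rw [← pow_add]
    congr 1
    omega
  have hp0 : ((N:ℝ)) ^ n = (N:ℝ) ^ 4 * (N:ℝ) ^ (n - 4) := by
    rw [← pow_add]
    congr 1
    omega
  have hfinal : (n : ℝ) * (((N:ℝ) - 1) * (N:ℝ) ^ (n - 1)) + (N:ℝ) ^ n * (c * n)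
      ≤ (IM.card : ℝ) * (2 * (((N:ℝ) - 1) ^ 2 * (N:ℝ) ^ (n - 2)) - ((N:ℝ) - 1) ^ 4 * (N:ℝ) ^ (n - 4))
        + ((IMᶜ).card : ℝ) * (((N:ℝ) - 1) ^ 2 * (N:ℝ) ^ (n - 2)) := by
    rw [hp2, hp1, hp0]
    calc (n : ℝ) * (((N:ℝ) - 1) * ((N:ℝ) ^ 3 * (N:ℝ) ^ (n - 4)))
          + (N:ℝ) ^ 4 * (N:ℝ) ^ (n - 4) * (c * n)
        = ((n : ℝ) * (((N:ℝ) - 1) * (N:ℝ) ^ 3) + c * n * (N:ℝ) ^ 4) * (N:ℝ) ^ (n - 4) := by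
          ring
      _ ≤ ((IM.card : ℝ) * (2 * (((N:ℝ) - 1) ^ 2 * (N:ℝ) ^ 2) - ((N:ℝ) - 1) ^ 4)
            + ((IMᶜ).card : ℝ) * (((N:ℝ) - 1) ^ 2 * (N:ℝ) ^ 2)) * (N:ℝ) ^ (n - 4) := hmul
      _ = (IM.card : ℝ) * (2 * (((N:ℝ) - 1) ^ 2 * ((N:ℝ) ^ 2 * (N:ℝ) ^ (n - 4)))
            - ((N:ℝ) - 1) ^ 4 * (N:ℝ) ^ (n - 4))
          + ((IMᶜ).card : ℝ) * (((N:ℝ) - 1) ^ 2 * ((N:ℝ) ^ 2 * (N:ℝ) ^ (n - 4))) := by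
          ring
  -- extract a good σ
  haveI : Nonempty (Fin N) := ⟨⟨0, by omega⟩⟩
  have hex : ∃ σ : Fin n → Fin N, ((Sfun t σ).card : ℝ) + c * n
      ≤ (((univ.filter fun i : Fin m => covP F t i σ).card : ℕ) : ℝ) := by
    by_contra hcon
    push_neg at hcon
    have hlt : (∑ σ : Fin n → Fin N,
          (((univ.filter fun i : Fin m => covP F t i σ).card : ℕ) : ℝ))
        < ∑ σ : Fin n → Fin N, (((Sfun t σ).card : ℝ) + c * n) :=
      Finset.sum_lt_sum_of_nonempty Finset.univ_nonempty (fun σ _ => hcon σ)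
    rw [Finset.sum_add_distrib, Finset.sum_const, Finset.card_univ] at hlt
    have hcard : ((Fintype.card (Fin n → Fin N) : ℕ) : ℝ) = (N:ℝ) ^ n := by
      simp
    rw [nsmul_eq_mul, hcard] at hlt
    rw [hswap, hsplit] at hlt
    rw [hScard] at hlt
    linarith
  obtain ⟨σ₀, hσ₀⟩ := hex
  -- build R
  have hv0 : Fin n := ⟨0, by omega⟩
  set pick : Fin m → Sym2 (Fin n) := fun i =>
    if h : covP F t i σ₀ then h.choose else s(hv0, hv0) with hpickdef
  have hpick : ∀ i, covP F t i σ₀ → pick i ∈ F i ∧ ∀ v ∈ pick i, v ∈ Sfun t σ₀ := by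
    intro i hi
    simp only [hpickdef, dif_pos hi]
    exact ⟨hi.choose_spec.1, hi.choose_spec.2⟩
  set cset : Finset (Fin m) := univ.filter (fun i => covP F t i σ₀) with hcsetdef
  have hmemcset : ∀ i ∈ cset, covP F t i σ₀ := by
    intro i hi
    simp only [hcsetdef, Finset.mem_filter] at hi
    exact hi.2
  have hinj : Set.InjOn pick cset := by
    intro i hi j hj hij
    by_contra hne'
    have h2 : pick j ∈ F j := (hpick j (hmemcset j hj)).1
    exact Finset.disjoint_left.1 (hdisj i j hne') (hij ▸ (hpick i (hmemcset i hi)).1) h2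
  refine ⟨Sfun t σ₀, cset.image pick, ?_, ?_, ?_, ?_⟩
  · intro e he
    simp only [Finset.coe_image, Set.mem_image, Finset.mem_coe] at he
    obtain ⟨i, hi, rfl⟩ := he
    exact hsub i ((hpick i (hmemcset i hi)).1)
  · intro e he v hv
    simp only [Finset.mem_image] at he
    obtain ⟨i, hi, rfl⟩ := he
    exact (hpick i (hmemcset i hi)).2 v hv
  · intro j
    have hsubs : cset.image pick ∩ F j ⊆ {pick j} := by
      intro e he
      rw [Finset.mem_inter] at he
      obtain ⟨heR, heF⟩ := he
      simp only [Finset.mem_image] at heR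
      obtain ⟨i, hi, rfl⟩ := heR
      have h1 : pick i ∈ F i := (hpick i (hmemcset i hi)).1
      by_cases hij : i = j
      · simp [hij]
      · exact absurd heF (Finset.disjoint_left.1 (hdisj i j hij) h1)
    calc (cset.image pick ∩ F j).card ≤ ({pick j} : Finset _).card :=
          Finset.card_le_card hsubs
      _ = 1 := Finset.card_singleton _
  · rw [Finset.card_image_of_injOn hinj]
    exact hσ₀
end

section
/- For every integer n ≥ 8 divisible by 4 there exists a graph G on n vertices together with an edge coloring into n pairwise disjoint color classes, of which exactly n/2 are matchings of size 2 and exactly n/2 are single edges, such that the rainbow girth of G with respect to this coloring equals n/2. (Explicitly: the vertices are v_{i,j} for 1 ≤ i ≤ n/4 and 1 ≤ j ≤ 4; for each i the pair {v_{i,1}v_{i,2}, v_{i,3}v_{i,4}} is a size-2 matching class and v_{i,2}v_{i,3} and v_{i,4}v_{i,1} are two single-edge classes, and for each i the pair {v_{i,3}v_{i+1,2}, v_{i,4}v_{i+1,1}} (first index modulo n/4) is a size-2 matching class.) -/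
open Finset SimpleGraph
open scoped Classical
set_option linter.unusedSectionVars false
set_option linter.unusedVariables false
set_option linter.unnecessarySimpa false
set_option linter.unusedTactic false
set_option maxHeartbeats 1600000


namespace RG

variable (n : ℕ) [NeZero n]

def w (m : ℕ) : Fin n := ⟨m % n, Nat.mod_lt _ (Nat.pos_of_ne_zero (NeZero.ne n))⟩

lemma w_val (m : ℕ) : (w n m).val = m % n := rfl

lemma w_cases {p q : ℕ} (hp : p < 2*n) (hq : q < 2*n) (h : w n p = w n q) :
    p = q ∨ p = q + n ∨ q = p + n := by
  have hn : 0 < n := Nat.pos_of_ne_zero (NeZero.ne n)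
  have h' : p % n = q % n := congrArg Fin.val h
  have e1 : p % n = p ∨ p % n + n = p := by
    rcases Nat.lt_or_ge p n with h1 | h1
    · exact Or.inl (Nat.mod_eq_of_lt h1)
    · right
      rw [Nat.mod_eq_sub_mod h1, Nat.mod_eq_of_lt (by omega)]
      omega
  have e2 : q % n = q ∨ q % n + n = q := by
    rcases Nat.lt_or_ge q n with h1 | h1
    · exact Or.inl (Nat.mod_eq_of_lt h1)
    · right
      rw [Nat.mod_eq_sub_mod h1, Nat.mod_eq_of_lt (by omega)]
      omega
  omega

lemma w_eq_of_eq {p q : ℕ} (h : p % n = q % n) : w n p = w n q := Fin.ext h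

/-- endpoint codes of the six generator edges of block `i` -/
def gA (t i : ℕ) : ℕ :=
  match t with
  | 0 => 4*i
  | 1 => 4*i+2
  | 2 => 4*i+1
  | 3 => 4*i+3
  | 4 => 4*i+2
  | _ => 4*i+3

def gB (t i : ℕ) : ℕ :=
  match t with
  | 0 => 4*i+1
  | 1 => 4*i+3
  | 2 => 4*i+2
  | 3 => 4*i
  | 4 => 4*i+5
  | _ => 4*i+4

def gen (t i : ℕ) : Sym2 (Fin n) := s(w n (gA t i), w n (gB t i))

lemma gA_lt {k t i : ℕ} (hnk : n = 4*k) (ht : t < 6) (hi : i < k) : gA t i < n := by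
  interval_cases t <;> simp [gA] <;> omega

lemma gB_lt {k t i : ℕ} (hnk : n = 4*k) (ht : t < 6) (hi : i < k) : gB t i < 2*n := by
  interval_cases t <;> simp [gB] <;> omega

lemma gen_inj {k t i t' j : ℕ} (hnk : n = 4*k) (hk : 2 ≤ k) (ht : t < 6) (ht' : t' < 6)
    (hi : i < k) (hj : j < k) (h : gen n t i = gen n t' j) : t = t' ∧ i = j := by
  rw [gen, gen, Sym2.eq_iff] at h
  have hb1 := gA_lt n hnk ht hi
  have hb2 := gB_lt n hnk ht hi
  have hb3 := gA_lt n hnk ht' hj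
  have hb4 := gB_lt n hnk ht' hj
  rcases h with ⟨h1, h2⟩ | ⟨h1, h2⟩
  · have c1 := w_cases n (by omega) (by omega) h1
    have c2 := w_cases n (by omega) (by omega) h2
    interval_cases t <;> interval_cases t' <;> simp [gA, gB] at c1 c2 ⊢ <;> omega
  · have c1 := w_cases n (by omega) (by omega) h1
    have c2 := w_cases n (by omega) (by omega) h2
    interval_cases t <;> interval_cases t' <;> simp [gA, gB] at c1 c2 ⊢ <;> omega

lemma gen_ne_diag {k t i : ℕ} (hnk : n = 4*k) (hk : 2 ≤ k) (ht : t < 6) (hi : i < k) :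
    w n (gA t i) ≠ w n (gB t i) := by
  intro h
  have c := w_cases n (by have := gA_lt n hnk ht hi; omega) (gB_lt n hnk ht hi) h
  interval_cases t <;> simp [gA, gB] at c <;> omega


/-- the residue of the color class containing generator type `t` -/
def rOf (t : ℕ) : ℕ := match t with
  | 0 => 0 | 1 => 0 | 2 => 1 | 3 => 3 | 4 => 2 | _ => 2

def Fc (c : Fin n) : Finset (Sym2 (Fin n)) :=
  if c.val % 4 = 0 then {gen n 0 (c.val/4), gen n 1 (c.val/4)}
  else if c.val % 4 = 1 then {gen n 2 (c.val/4)}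
  else if c.val % 4 = 2 then {gen n 4 (c.val/4), gen n 5 (c.val/4)}
  else {gen n 3 (c.val/4)}

lemma mem_Fc {c : Fin n} {e : Sym2 (Fin n)} (h : e ∈ Fc n c) :
    ∃ t, t < 6 ∧ e = gen n t (c.val/4) ∧ rOf t = c.val % 4 := by
  have h4 : c.val % 4 < 4 := Nat.mod_lt _ (by norm_num)
  unfold Fc at h
  split_ifs at h with h0 h1 h2 <;> simp only [Finset.mem_insert, Finset.mem_singleton] at h
  · rcases h with h | h
    · exact ⟨0, by omega, h, by simp [rOf, h0]⟩
    · exact ⟨1, by omega, h, by simp [rOf, h0]⟩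
  · exact ⟨2, by omega, h, by simp [rOf, h1]⟩
  · rcases h with h | h
    · exact ⟨4, by omega, h, by simp [rOf, h2]⟩
    · exact ⟨5, by omega, h, by simp [rOf, h2]⟩
  · exact ⟨3, by omega, h, by simp [rOf]; omega⟩

lemma gen_mem_Fc {k t i : ℕ} (hnk : n = 4*k) (ht : t < 6) (hi : i < k)
    {c : Fin n} (hc : c.val = 4*i + rOf t) : gen n t i ∈ Fc n c := by
  have hr : rOf t < 4 := by interval_cases t <;> simp [rOf]
  have hdiv : c.val / 4 = i := by omega
  unfold Fc
  interval_cases t <;>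
    simp_all [rOf] <;> split_ifs <;> simp_all [hdiv] <;> omega

def ES : Set (Sym2 (Fin n)) := {e | ∃ t, t < 6 ∧ ∃ i, i < n/4 ∧ e = gen n t i}

def G : SimpleGraph (Fin n) := SimpleGraph.fromEdgeSet (ES n)


lemma gen_mem_edgeSet {k t i : ℕ} (hnk : n = 4*k) (hk : 2 ≤ k) (ht : t < 6) (hi : i < k) :
    gen n t i ∈ (G n).edgeSet := by
  rw [G, edgeSet_fromEdgeSet]
  refine ⟨⟨t, ht, i, by omega, rfl⟩, ?_⟩
  simp only [Set.mem_setOf_eq, gen, Sym2.isDiag_iff_proj_eq]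
  exact gen_ne_diag n hnk hk ht hi

lemma gen_adj {k t i : ℕ} (hnk : n = 4*k) (hk : 2 ≤ k) (ht : t < 6) (hi : i < k) :
    (G n).Adj (w n (gA t i)) (w n (gB t i)) := by
  rw [G, fromEdgeSet_adj]
  exact ⟨⟨t, ht, i, by omega, rfl⟩, gen_ne_diag n hnk hk ht hi⟩

lemma edge_class {k : ℕ} (hnk : n = 4*k) {e : Sym2 (Fin n)} (h : e ∈ (G n).edgeSet) :
    ∃ t, t < 6 ∧ ∃ i, i < k ∧ e = gen n t i := by
  rw [G, edgeSet_fromEdgeSet] at h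
  obtain ⟨⟨t, ht, i, hi, rfl⟩, -⟩ := h
  exact ⟨t, ht, i, by omega, rfl⟩

/-- telescoping sum over the darts of a walk -/
lemma dart_telescope {M : Type*} [AddCommGroup M] {V : Type*} {H : SimpleGraph V}
    (f : V → M) : ∀ {u v : V} (p : H.Walk u v),
    (p.darts.map (fun d => f d.toProd.2 - f d.toProd.1)).sum = f v - f u := by
  intro u v p
  induction p with
  | nil => simp
  | cons h p ih => simp [ih]

lemma abs_sum_le_length : ∀ (l : List ℤ), (∀ x ∈ l, |x| ≤ 1) → |l.sum| ≤ l.length := by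
  intro l
  induction l with
  | nil => simp
  | cons a l ih =>
    intro h
    simp only [List.sum_cons, List.length_cons]
    calc |a + l.sum| ≤ |a| + |l.sum| := abs_add_le _ _
      _ ≤ 1 + l.length := by
          have := ih (fun x hx => h x (List.mem_cons_of_mem _ hx))
          have := h a (List.mem_cons_self)
          omega
      _ = l.length + 1 := by omega

/-- if the edges of a (trail) walk are nodup, and all darts satisfying `Q` have edge `e₀`,
and `e₀ ∈ p.edges` with `Q` holding on darts with edge `e₀`, then the `Q`-filtered darts
form a singleton. -/
lemma filter_darts_singleton {V : Type*} {H : SimpleGraph V} {u v : V} {p : H.Walk u v}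
    (hnd : p.edges.Nodup) (Q : H.Dart → Prop) [DecidablePred Q] {e₀ : Sym2 V}
    (he₀ : e₀ ∈ p.edges)
    (hQe : ∀ d ∈ p.darts, Q d → d.edge = e₀)
    (heQ : ∀ d ∈ p.darts, d.edge = e₀ → Q d) :
    ∃ d₀, p.darts.filter (fun d => decide (Q d)) = [d₀] ∧ d₀.edge = e₀ := by
  have hedges : p.edges = p.darts.map SimpleGraph.Dart.edge := rfl
  rw [hedges] at he₀
  obtain ⟨d₀, hd₀, hd₀e⟩ := List.mem_map.mp he₀
  have hmem : d₀ ∈ p.darts.filter (fun d => decide (Q d)) := by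
    rw [List.mem_filter]
    exact ⟨hd₀, by simpa using heQ d₀ hd₀ hd₀e⟩
  set L := p.darts.filter (fun d => decide (Q d)) with hL
  have hsub : L.Sublist p.darts := List.filter_sublist
  have hndL : (L.map SimpleGraph.Dart.edge).Nodup := by
    rw [hedges] at hnd
    exact (hsub.map SimpleGraph.Dart.edge).nodup hnd
  have hall : ∀ d ∈ L, d.edge = e₀ := by
    intro d hd
    rw [hL, List.mem_filter] at hd
    exact hQe d hd.1 (by simpa using hd.2)
  match hLm : L with
  | [] => simp at hmem
  | [d] => exact ⟨d, rfl, hall d (by simp)⟩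
  | d1 :: d2 :: L' =>
    simp only [List.map_cons, List.nodup_cons, List.mem_cons, List.mem_map] at hndL
    exfalso
    apply hndL.1
    left
    rw [hall d1 (by simp), hall d2 (by simp)]


variable {k : ℕ}



/-- the standard rainbow cycle, built from position `t` with `m = k - t` blocks remaining. -/
def Wrec (hnk : n = 4*k) (hk : 2 ≤ k) :
    (m : ℕ) → (t : ℕ) → (h : t + m = k) → (G n).Walk (w n (4*t+1)) (w n (4*k+1))
  | 0, t, h => Walk.nil.copy (congrArg (fun x => w n (4*x+1)) (by omega : k = t)) rfl
  | (m+1), t, h =>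
      Walk.cons (by have := gen_adj n hnk hk (t := 2) (i := t) (by omega) (by omega);
                    simpa [gA, gB] using this)
        (Walk.cons (by have := gen_adj n hnk hk (t := 4) (i := t) (by omega) (by omega);
                       simpa [gA, gB] using this)
          ((Wrec hnk hk m (t+1) (by omega)).copy
            (congrArg (w n) (by ring : 4*(t+1)+1 = 4*t+5)) rfl))

lemma Wrec_length (hnk : n = 4*k) (hk : 2 ≤ k) :
    ∀ (m t : ℕ) (h : t + m = k), (Wrec n hnk hk m t h).length = 2*m := by
  intro m
  induction m with
  | zero => intro t h; simp [Wrec]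
  | succ m ih =>
    intro t h
    simp only [Wrec, Walk.length_cons, Walk.length_copy, ih (t+1) (by omega)]
    omega

lemma Wrec_edges (hnk : n = 4*k) (hk : 2 ≤ k) :
    ∀ (m t : ℕ) (h : t + m = k) (e : Sym2 (Fin n)), e ∈ (Wrec n hnk hk m t h).edges →
      ∃ s, t ≤ s ∧ s < k ∧ (e = gen n 2 s ∨ e = gen n 4 s) := by
  intro m
  induction m with
  | zero => intro t h e he; simp [Wrec] at he
  | succ m ih =>
    intro t h e he
    simp only [Wrec, Walk.edges_cons, Walk.edges_copy, List.mem_cons] at he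
    rcases he with rfl | rfl | he
    · exact ⟨t, le_refl _, by omega, Or.inl (by simp [gen, gA, gB])⟩
    · exact ⟨t, le_refl _, by omega, Or.inr (by simp [gen, gA, gB])⟩
    · obtain ⟨s, hs1, hs2, hs3⟩ := ih (t+1) (by omega) e he
      exact ⟨s, by omega, hs2, hs3⟩

lemma Wrec_support (hnk : n = 4*k) (hk : 2 ≤ k) :
    ∀ (m t : ℕ) (h : t + m = k) (v : Fin n), v ∈ (Wrec n hnk hk m t h).support →
      v = w n (4*k+1) ∨ ∃ s, t ≤ s ∧ s < k ∧ (v = w n (4*s+1) ∨ v = w n (4*s+2)) := by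
  intro m
  induction m with
  | zero => intro t h v hv; simp [Wrec] at hv; left; simp [hv]
  | succ m ih =>
    intro t h v hv
    simp only [Wrec, Walk.support_cons, Walk.support_copy, List.mem_cons] at hv
    rcases hv with rfl | rfl | hv
    · exact Or.inr ⟨t, le_refl _, by omega, Or.inl rfl⟩
    · exact Or.inr ⟨t, le_refl _, by omega, Or.inr rfl⟩
    · rcases ih (t+1) (by omega) v hv with h1 | ⟨s, hs1, hs2, hs3⟩
      · exact Or.inl h1
      · exact Or.inr ⟨s, by omega, hs2, hs3⟩

lemma Wrec_support_nodup (hnk : n = 4*k) (hk : 2 ≤ k) :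
    ∀ (m t : ℕ) (h : t + m = k), 1 ≤ t → (Wrec n hnk hk m t h).support.Nodup := by
  intro m
  induction m with
  | zero => intro t h ht; simp [Wrec]
  | succ m ih =>
    intro t h ht
    have hb : ∀ a b : ℕ, a < 2*n → b < 2*n → a ≠ b → a + n ≠ b → b + n ≠ a → w n a ≠ w n b := by
      intro a b ha hb h1 h2 h3 hw
      rcases w_cases n ha hb hw with h' | h' | h' <;> omega
    simp only [Wrec, Walk.support_cons, Walk.support_copy, List.nodup_cons]
    refine ⟨?_, ?_, ih (t+1) (by omega) (by omega)⟩
    · intro hmem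
      rw [List.mem_cons] at hmem
      rcases hmem with hmem | hmem
      · exact hb (4*t+1) (4*t+2) (by omega) (by omega) (by omega) (by omega) (by omega) hmem
      · rcases Wrec_support n hnk hk m (t+1) (by omega) _ hmem with h1 | ⟨s, hs1, hs2, h1 | h1⟩
        · exact hb (4*t+1) (4*k+1) (by omega) (by omega) (by omega) (by omega) (by omega) h1
        · exact hb (4*t+1) (4*s+1) (by omega) (by omega) (by omega) (by omega) (by omega) h1
        · exact hb (4*t+1) (4*s+2) (by omega) (by omega) (by omega) (by omega) (by omega) h1
    · intro hmem
      rcases Wrec_support n hnk hk m (t+1) (by omega) _ hmem with h1 | ⟨s, hs1, hs2, h1 | h1⟩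
      · exact hb (4*t+2) (4*k+1) (by omega) (by omega) (by omega) (by omega) (by omega) h1
      · exact hb (4*t+2) (4*s+1) (by omega) (by omega) (by omega) (by omega) (by omega) h1
      · exact hb (4*t+2) (4*s+2) (by omega) (by omega) (by omega) (by omega) (by omega) h1

lemma Wrec_edges_nodup (hnk : n = 4*k) (hk : 2 ≤ k) :
    ∀ (m t : ℕ) (h : t + m = k), (Wrec n hnk hk m t h).edges.Nodup := by
  intro m
  induction m with
  | zero => intro t h; simp [Wrec]
  | succ m ih =>
    intro t h
    simp only [Wrec, Walk.edges_cons, Walk.edges_copy, List.nodup_cons]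
    have hg2 : (gen n 2 t : Sym2 (Fin n)) = s(w n (4*t+1), w n (4*t+2)) := by simp [gen, gA, gB]
    have hg4 : (gen n 4 t : Sym2 (Fin n)) = s(w n (4*t+2), w n (4*t+5)) := by simp [gen, gA, gB]
    refine ⟨?_, ?_, ih (t+1) (by omega)⟩
    · intro hmem
      rw [List.mem_cons] at hmem
      rcases hmem with hmem | hmem
      · rw [← hg2, ← hg4] at hmem
        have := gen_inj n hnk hk (by omega) (by omega) (by omega : t < k) (by omega : t < k) hmem
        omega
      · obtain ⟨s, hs1, hs2, h1 | h1⟩ := Wrec_edges n hnk hk m (t+1) (by omega) _ hmem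
        · rw [← hg2] at h1
          have := gen_inj n hnk hk (by omega) (by omega) (by omega : t < k) hs2 h1
          omega
        · rw [← hg2] at h1
          have := gen_inj n hnk hk (by omega) (by omega) (by omega : t < k) hs2 h1
          omega
    · intro hmem
      obtain ⟨s, hs1, hs2, h1 | h1⟩ := Wrec_edges n hnk hk m (t+1) (by omega) _ hmem
      · rw [← hg4] at h1
        have := gen_inj n hnk hk (by omega) (by omega) (by omega : t < k) hs2 h1
        omega
      · rw [← hg4] at h1
        have := gen_inj n hnk hk (by omega) (by omega) (by omega : t < k) hs2 h1
        omega


lemma w_wrap (hnk : n = 4*k) : w n (4*k+1) = w n 1 :=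
  Fin.ext (by simp only [w]; rw [hnk]; exact congrArg (· % (4*k)) rfl ▸ Nat.add_mod_left (4*k) 1)

def CW (hnk : n = 4*k) (hk : 2 ≤ k) : (G n).Walk (w n 1) (w n 1) :=
  (Wrec n hnk hk k 0 (by omega)).copy (congrArg (w n) (by norm_num)) (w_wrap n hnk)

lemma CW_length (hnk : n = 4*k) (hk : 2 ≤ k) : (CW n hnk hk).length = 2*k := by
  simp [CW, Wrec_length n hnk hk k 0 (by omega)]

lemma CW_edges (hnk : n = 4*k) (hk : 2 ≤ k) {e : Sym2 (Fin n)} (he : e ∈ (CW n hnk hk).edges) :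
    ∃ s, s < k ∧ (e = gen n 2 s ∨ e = gen n 4 s) := by
  rw [CW, Walk.edges_copy] at he
  obtain ⟨s, _, hs2, hs3⟩ := Wrec_edges n hnk hk k 0 (by omega) e he
  exact ⟨s, hs2, hs3⟩

lemma CW_isCycle (hnk : n = 4*k) (hk : 2 ≤ k) : (CW n hnk hk).IsCycle := by
  obtain ⟨k', rfl⟩ : ∃ k', k = k' + 1 := ⟨k-1, by omega⟩
  have hb : ∀ a b : ℕ, a < 2*n → b < 2*n → a ≠ b → a + n ≠ b → b + n ≠ a → w n a ≠ w n b := by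
    intro a b ha hb h1 h2 h3 hw
    rcases w_cases n ha hb hw with h' | h' | h' <;> omega
  refine ⟨⟨⟨?_⟩, ?_⟩, ?_⟩
  · rw [CW, Walk.edges_copy]
    exact Wrec_edges_nodup n hnk hk _ _ _
  · intro hnil
    have := CW_length n hnk hk
    rw [hnil] at this
    simp at this
  · rw [CW, Walk.support_copy]
    simp only [Wrec, Walk.support_cons, Walk.support_copy, List.tail_cons]
    rw [List.nodup_cons]
    constructor
    · intro hmem
      rcases Wrec_support n hnk hk k' 1 (by omega) _ hmem with h1 | ⟨s, hs1, hs2, h1 | h1⟩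
      · exact hb (4*0+2) (4*(k'+1)+1) (by omega) (by omega) (by omega) (by omega) (by omega) h1
      · exact hb (4*0+2) (4*s+1) (by omega) (by omega) (by omega) (by omega) (by omega) h1
      · exact hb (4*0+2) (4*s+2) (by omega) (by omega) (by omega) (by omega) (by omega) h1
    · exact Wrec_support_nodup n hnk hk k' 1 (by omega) (by omega)

lemma CW_rainbow (hnk : n = 4*k) (hk : 2 ≤ k) : IsRainbow (Fc n) (CW n hnk hk) := by
  intro c e₁ he₁ e₂ he₂ hf₁ hf₂
  obtain ⟨t₁, ht₁, hge₁, hr₁⟩ := mem_Fc n hf₁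
  obtain ⟨t₂, ht₂, hge₂, hr₂⟩ := mem_Fc n hf₂
  have hik : c.val / 4 < k := by have := c.isLt; omega
  obtain ⟨s₁, hs₁, hc₁⟩ := CW_edges n hnk hk he₁
  obtain ⟨s₂, hs₂, hc₂⟩ := CW_edges n hnk hk he₂
  have ht₁' : t₁ = 2 ∨ t₁ = 4 := by
    rcases hc₁ with h | h <;> rw [hge₁] at h <;>
      [exact Or.inl (gen_inj n hnk hk ht₁ (by omega) hik hs₁ h).1;
       exact Or.inr (gen_inj n hnk hk ht₁ (by omega) hik hs₁ h).1]
  have ht₂' : t₂ = 2 ∨ t₂ = 4 := by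
    rcases hc₂ with h | h <;> rw [hge₂] at h <;>
      [exact Or.inl (gen_inj n hnk hk ht₂ (by omega) hik hs₂ h).1;
       exact Or.inr (gen_inj n hnk hk ht₂ (by omega) hik hs₂ h).1]
  have : t₁ = t₂ := by
    rcases ht₁' with rfl | rfl <;> rcases ht₂' with rfl | rfl <;> simp [rOf] at hr₁ hr₂ <;> omega
  rw [hge₁, hge₂, this]


/-- the height function -/
def hN (m : ℕ) : ℕ := 2*(m/4) + m % 4 / 2

lemma w_val_eq {m : ℕ} (hm : m < n) : (w n m).val = m := Nat.mod_eq_of_lt hm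

lemma delta_eq {M : Type*} [AddCommGroup M] {x y a b : Fin n} (h : s(x, y) = s(a, b))
    (f : Fin n → M) :
    f y - f x = f b - f a ∨ f y - f x = -(f b - f a) := by
  rw [Sym2.eq_iff] at h
  rcases h with ⟨rfl, rfl⟩ | ⟨rfl, rfl⟩
  · left; rfl
  · right; rw [neg_sub]

lemma dart_edge_eq {H : SimpleGraph (Fin n)} (d : H.Dart) :
    d.edge = s(d.toProd.1, d.toProd.2) := rfl

lemma abs_helper {a b : ℕ} (h : a ≤ b + 1) (h2 : b ≤ a + 1) : |(a:ℤ) - b| ≤ 1 := by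
  rw [abs_le]; omega


lemma zmod_diff {a b : ℕ} (h : (a + b) % 2 = 1) :
    ((a : ZMod 2) - b = 1 ∧ (b : ZMod 2) - a = 1) := by
  have ha := ZMod.natCast_mod a 2
  have hb := ZMod.natCast_mod b 2
  rcases (by omega : a % 2 = 0 ∧ b % 2 = 1 ∨ a % 2 = 1 ∧ b % 2 = 0) with ⟨h1, h2⟩ | ⟨h1, h2⟩ <;>
    rw [← ha, ← hb, h1, h2] <;> constructor <;> decide

lemma small_step (hnk : n = 4*k) (hk : 2 ≤ k) {t i : ℕ} (ht : t < 6) (hi : i < k)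
    (h4 : ¬(t = 4 ∧ i = k-1)) (h5 : ¬(t = 5 ∧ i = k-1)) :
    |((hN (w n (gB t i)).val : ℤ)) - ((hN (w n (gA t i)).val : ℤ))| ≤ 1 := by
  interval_cases t <;> simp only [gA, gB] <;>
    [skip; skip; skip; skip;
     (have hik : i < k - 1 := by omega); (have hik : i < k - 1 := by omega)] <;>
    rw [w_val_eq n (by omega), w_val_eq n (by omega)] <;>
    apply abs_helper <;> unfold hN <;> omega


lemma confine (hnk : n = 4*k) (hk : 2 ≤ k) {x y : Fin n} (q : (G n).Walk x y)
    (hE : ∀ e ∈ q.edges, ∃ i, i < k ∧ ∃ t, t < 4 ∧ e = gen n t i) :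
    ∀ v ∈ q.support, v.val / 4 = x.val / 4 := by
  induction q with
  | nil =>
    intro v hv
    simp only [Walk.support_nil, List.mem_singleton] at hv
    subst hv; rfl
  | @cons a b c had q ih =>
    intro v hv
    have hfirst : s(a, b) ∈ (Walk.cons had q).edges := by
      rw [Walk.edges_cons]; exact List.mem_cons_self
    obtain ⟨i, hi, t, ht, hg⟩ := hE _ hfirst
    have hA : (w n (gA t i)).val = gA t i :=
      w_val_eq n (by interval_cases t <;> simp [gA] <;> omega)
    have hB : (w n (gB t i)).val = gB t i :=
      w_val_eq n (by interval_cases t <;> simp [gB] <;> omega)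
    have hab : a.val / 4 = i ∧ b.val / 4 = i := by
      rw [gen, Sym2.eq_iff] at hg
      rcases hg with ⟨rfl, rfl⟩ | ⟨rfl, rfl⟩ <;> rw [hA, hB] <;>
        constructor <;> interval_cases t <;> simp [gA, gB] <;> omega
    rw [Walk.support_cons, List.mem_cons] at hv
    rcases hv with rfl | hv
    · rfl
    · have := ih (fun e he => hE e (by rw [Walk.edges_cons]; exact List.mem_cons_of_mem _ he)) v hv
      omega

/-- main lower bound -/
lemma lower (hnk : n = 4*k) (hk : 2 ≤ k) {u : Fin n} {p : (G n).Walk u u}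
    (hc : p.IsCycle) (hrb : IsRainbow (Fc n) p) : n/2 ≤ p.length := by
  have hnd : p.edges.Nodup := hc.isCircuit.isTrail.edges_nodup
  have hcl : ∀ e ∈ p.edges, ∃ t, t < 6 ∧ ∃ i, i < k ∧ e = gen n t i :=
    fun e he => edge_class n hnk (Walk.edges_subset_edgeSet p he)
  have hpair : ∀ t t' i, t < 6 → t' < 6 → t ≠ t' → rOf t = rOf t' → i < k →
      ¬(gen n t i ∈ p.edges ∧ gen n t' i ∈ p.edges) := by
    intro t t' i ht ht' htne hr hi ⟨h1, h2⟩
    have hrlt : rOf t < 4 := by interval_cases t <;> simp [rOf]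
    have hcval : 4*i + rOf t < n := by omega
    have hm1 : gen n t i ∈ Fc n ⟨4*i + rOf t, hcval⟩ := gen_mem_Fc n hnk ht hi rfl
    have hm2 : gen n t' i ∈ Fc n ⟨4*i + rOf t, hcval⟩ := gen_mem_Fc n hnk ht' hi (by simp [hr])
    have := hrb _ _ h1 _ h2 hm1 hm2
    exact htne (gen_inj n hnk hk ht ht' hi hi this).1
  -- one `Q`-dart analysis, shared between the two cases
  have main : ∀ (j : ℕ), j < k →
      (gen n 4 j ∈ p.edges ∨ gen n 5 j ∈ p.edges) → ∀ (f : Fin n → ℤ),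
      ∃ d₀ : (G n).Dart,
        (d₀.edge = gen n 4 j ∨ d₀.edge = gen n 5 j) ∧
        (f d₀.toProd.2 - f d₀.toProd.1) +
          ((p.darts.filter (fun d => !decide (d.edge = gen n 4 j ∨ d.edge = gen n 5 j))).map
            (fun d => f d.toProd.2 - f d.toProd.1)).sum = 0 ∧
        (p.darts.filter (fun d => !decide (d.edge = gen n 4 j ∨ d.edge = gen n 5 j))).length
          + 1 = p.length ∧
        (∀ d ∈ p.darts.filter (fun d => !decide (d.edge = gen n 4 j ∨ d.edge = gen n 5 j)),
          d.edge ≠ gen n 4 j ∧ d.edge ≠ gen n 5 j ∧ d.edge ∈ p.edges) := by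
    intro j hj huse f
    obtain ⟨e₀, he₀, he₀v⟩ : ∃ e₀, e₀ ∈ p.edges ∧ (e₀ = gen n 4 j ∨ e₀ = gen n 5 j) := by
      rcases huse with h | h
      · exact ⟨_, h, Or.inl rfl⟩
      · exact ⟨_, h, Or.inr rfl⟩
    have hQe : ∀ d ∈ p.darts, (d.edge = gen n 4 j ∨ d.edge = gen n 5 j) → d.edge = e₀ := by
      intro d hd hQd
      by_contra hne
      have hdm : d.edge ∈ p.edges := List.mem_map_of_mem hd
      apply hpair 4 5 j (by omega) (by omega) (by omega) rfl hj
      rcases hQd with h1 | h1 <;> rcases he₀v with h2 | h2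
      · exact absurd (h1.trans h2.symm) hne
      · exact ⟨h1 ▸ hdm, h2 ▸ he₀⟩
      · exact ⟨h2 ▸ he₀, h1 ▸ hdm⟩
      · exact absurd (h1.trans h2.symm) hne
    have heQ : ∀ d ∈ p.darts, d.edge = e₀ → (d.edge = gen n 4 j ∨ d.edge = gen n 5 j) := by
      intro d hd h
      rcases he₀v with h2 | h2
      · exact Or.inl (h.trans h2)
      · exact Or.inr (h.trans h2)
    obtain ⟨d₀, hfilt, hd₀e⟩ := filter_darts_singleton hnd
      (fun d => d.edge = gen n 4 j ∨ d.edge = gen n 5 j) he₀ hQe heQ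
    have hperm := List.filter_append_perm
      (fun d => decide (d.edge = gen n 4 j ∨ d.edge = gen n 5 j)) p.darts
    have hsum : ((p.darts.filter
        (fun d => decide (d.edge = gen n 4 j ∨ d.edge = gen n 5 j))).map
        (fun d => f d.toProd.2 - f d.toProd.1)).sum
        + ((p.darts.filter (fun d => !decide (d.edge = gen n 4 j ∨ d.edge = gen n 5 j))).map
        (fun d => f d.toProd.2 - f d.toProd.1)).sum = 0 := by
      rw [← List.sum_append, ← List.map_append,
        (hperm.map (fun d => f d.toProd.2 - f d.toProd.1)).sum_eq, dart_telescope]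
      ring
    rw [hfilt] at hperm hsum
    beta_reduce at hperm hsum
    simp only [List.map_cons, List.map_nil, List.sum_cons, List.sum_nil, add_zero,
      List.singleton_append] at hsum
    have hd₀mem : d₀ ∈ p.darts := by
      refine List.mem_of_mem_filter (p := fun d =>
        decide (d.edge = gen n 4 j ∨ d.edge = gen n 5 j)) ?_
      rw [hfilt]; simp
    refine ⟨d₀, heQ d₀ hd₀mem hd₀e, hsum, ?_, ?_⟩
    · have hlen := hperm.length_eq
      simp only [List.length_cons, List.length_append, List.length_singleton] at hlen
      rw [← Walk.length_darts p]
      simpa [Nat.add_comm] using hlen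
    · intro d hd
      rw [List.mem_filter] at hd
      have hne : ¬ (d.edge = gen n 4 j ∨ d.edge = gen n 5 j) := by simpa using hd.2
      push_neg at hne
      exact ⟨hne.1, hne.2, List.mem_map_of_mem hd.1⟩

  by_cases hA : gen n 4 (k-1) ∈ p.edges ∨ gen n 5 (k-1) ∈ p.edges
  · -- the wrap class is used: height function argument
    obtain ⟨d₀, hd₀v, hsum, hlen, hrest⟩ := main (k-1) (by omega) hA
      (fun v => (hN v.val : ℤ))
    set L2 := p.darts.filter
      (fun d => !decide (d.edge = gen n 4 (k-1) ∨ d.edge = gen n 5 (k-1))) with hL2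
    have hdelta : ∀ {x y a b : Fin n}, s(x, y) = s(a, b) →
        (hN y.val : ℤ) - (hN x.val : ℤ) = (hN b.val : ℤ) - (hN a.val : ℤ) ∨
        (hN y.val : ℤ) - (hN x.val : ℤ) = -((hN b.val : ℤ) - (hN a.val : ℤ)) :=
      fun h => delta_eq n h (fun v => (hN v.val : ℤ))
    have hδ : (hN d₀.toProd.2.val : ℤ) - (hN d₀.toProd.1.val : ℤ) = 2*(k:ℤ) - 1 ∨
        (hN d₀.toProd.2.val : ℤ) - (hN d₀.toProd.1.val : ℤ) = -(2*(k:ℤ) - 1) := by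
      have hwrapB4 : w n (4*(k-1)+5) = w n 1 := by
        rw [show 4*(k-1)+5 = 4*k+1 by omega]; exact w_wrap n hnk
      have hwrapB5 : w n (4*(k-1)+4) = w n 0 := by
        rw [show 4*(k-1)+4 = 4*k+0 by omega]
        exact Fin.ext (by simp only [w]; rw [hnk]; exact Nat.add_mod_left (4*k) 0)
      have hv1 : (w n 1).val = 1 := w_val_eq n (by omega)
      have hv0 : (w n 0).val = 0 := w_val_eq n (by omega)
      rcases hd₀v with h | h
      · have hh : s(d₀.toProd.1, d₀.toProd.2) = s(w n (4*(k-1)+2), w n (4*(k-1)+5)) := by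
          rw [← dart_edge_eq, h]; simp [gen, gA, gB]
        have hB : (hN (w n (4*(k-1)+5)).val : ℤ) = 0 := by
          rw [hwrapB4, hv1]; simp [hN]
        have hA' : (hN (w n (4*(k-1)+2)).val : ℤ) = 2*(k:ℤ) - 1 := by
          rw [w_val_eq n (by omega)]
          have : hN (4*(k-1)+2) = 2*k - 1 := by unfold hN; omega
          rw [this]; omega
        rcases hdelta hh with hd | hd <;> rw [hd, hB, hA']
        · right; ring
        · left; ring
      · have hh : s(d₀.toProd.1, d₀.toProd.2) = s(w n (4*(k-1)+3), w n (4*(k-1)+4)) := by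
          rw [← dart_edge_eq, h]; simp [gen, gA, gB]
        have hB : (hN (w n (4*(k-1)+4)).val : ℤ) = 0 := by
          rw [hwrapB5, hv0]; simp [hN]
        have hA' : (hN (w n (4*(k-1)+3)).val : ℤ) = 2*(k:ℤ) - 1 := by
          rw [w_val_eq n (by omega)]
          have : hN (4*(k-1)+3) = 2*k - 1 := by unfold hN; omega
          rw [this]; omega
        rcases hdelta hh with hd | hd <;> rw [hd, hB, hA']
        · right; ring
        · left; ring
    have hbound : |(L2.map (fun d => ((hN d.toProd.2.val : ℤ)) - (hN d.toProd.1.val : ℤ))).sum|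
        ≤ ((L2.map (fun d => ((hN d.toProd.2.val : ℤ)) - (hN d.toProd.1.val : ℤ))).length : ℤ) := by
      apply abs_sum_le_length
      intro x hx
      obtain ⟨d, hd, rfl⟩ := List.mem_map.mp hx
      obtain ⟨h4, h5, hmem⟩ := hrest d hd
      obtain ⟨t, ht, i, hi, hg⟩ := hcl _ hmem
      have hh : s(d.toProd.1, d.toProd.2) = s(w n (gA t i), w n (gB t i)) := by
        rw [← dart_edge_eq, hg]; rfl
      have hns : ¬(t = 4 ∧ i = k-1) := by rintro ⟨rfl, rfl⟩; exact h4 hg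
      have hns' : ¬(t = 5 ∧ i = k-1) := by rintro ⟨rfl, rfl⟩; exact h5 hg
      have hss := small_step n hnk hk ht hi hns hns'
      rcases hdelta hh with hd' | hd' <;> rw [hd']
      · exact hss
      · rw [abs_neg]; exact hss
    rw [List.length_map] at hbound
    have hsum' : (L2.map (fun d => ((hN d.toProd.2.val : ℤ)) - (hN d.toProd.1.val : ℤ))).sum
        = -((hN d₀.toProd.2.val : ℤ) - (hN d₀.toProd.1.val : ℤ)) := by
      linarith [hsum]
    rw [hsum'] at hbound
    have hfin : (2*(k:ℤ) - 1) ≤ (L2.length : ℤ) := by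
      rcases hδ with h | h <;> rw [h] at hbound
      · rwa [abs_neg, abs_of_nonneg (by push_cast; omega)] at hbound
      · rwa [neg_neg, abs_of_nonneg (by push_cast; omega)] at hbound
    omega
  · push_neg at hA
    exfalso
    have hB1 : ∀ j, j < k → gen n 4 j ∉ p.edges ∧ gen n 5 j ∉ p.edges := by
      intro j hj
      by_cases hjk : j = k - 1
      · subst hjk; exact hA
      · by_contra hcon
        rw [not_and_or, not_not, not_not] at hcon
        obtain ⟨d₀, hd₀v, hsum, hlen, hrest⟩ := main j hj hcon
          (fun v => if v.val < 4*(j+1) then (1:ℤ) else 0)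
        set L2 := p.darts.filter
          (fun d => !decide (d.edge = gen n 4 j ∨ d.edge = gen n 5 j)) with hL2
        have hgdelta : ∀ {x y a b : Fin n}, s(x, y) = s(a, b) →
            ((if y.val < 4*(j+1) then (1:ℤ) else 0) - (if x.val < 4*(j+1) then (1:ℤ) else 0) =
              (if b.val < 4*(j+1) then (1:ℤ) else 0) - (if a.val < 4*(j+1) then (1:ℤ) else 0)) ∨
            ((if y.val < 4*(j+1) then (1:ℤ) else 0) - (if x.val < 4*(j+1) then (1:ℤ) else 0) =
              -((if b.val < 4*(j+1) then (1:ℤ) else 0) - (if a.val < 4*(j+1) then (1:ℤ) else 0))) :=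
          fun h => delta_eq n h (fun v => if v.val < 4*(j+1) then (1:ℤ) else 0)
        have hzero : ∀ x ∈ L2.map (fun d => (if d.toProd.2.val < 4*(j+1) then (1:ℤ) else 0)
            - (if d.toProd.1.val < 4*(j+1) then (1:ℤ) else 0)), x = 0 := by
          intro x hx
          obtain ⟨d, hd, rfl⟩ := List.mem_map.mp hx
          obtain ⟨h4, h5, hmem⟩ := hrest d hd
          obtain ⟨t, ht, i, hi, hg⟩ := hcl _ hmem
          have hh : s(d.toProd.1, d.toProd.2) = s(w n (gA t i), w n (gB t i)) := by
            rw [← dart_edge_eq, hg]; rfl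
          have hneq4 : ¬(t = 4 ∧ i = k-1) := by rintro ⟨rfl, rfl⟩; exact hA.1 (hg ▸ hmem)
          have hneq5 : ¬(t = 5 ∧ i = k-1) := by rintro ⟨rfl, rfl⟩; exact hA.2 (hg ▸ hmem)
          have hneqj4 : ¬(t = 4 ∧ i = j) := by rintro ⟨rfl, rfl⟩; exact h4 hg
          have hneqj5 : ¬(t = 5 ∧ i = j) := by rintro ⟨rfl, rfl⟩; exact h5 hg
          have hAv : (w n (gA t i)).val = gA t i :=
            w_val_eq n (by interval_cases t <;> simp [gA] <;> omega)
          have hBv : (w n (gB t i)).val = gB t i :=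
            w_val_eq n (by interval_cases t <;> simp [gB] <;> omega)
          have hind : (if (w n (gB t i)).val < 4*(j+1) then (1:ℤ) else 0)
              = (if (w n (gA t i)).val < 4*(j+1) then (1:ℤ) else 0) := by
            refine if_congr ?_ rfl rfl
            rw [hAv, hBv]
            interval_cases t <;> simp [gA, gB] <;> omega
          rcases hgdelta hh with hd' | hd' <;> rw [hd', hind] <;> simp
        have hS : (L2.map (fun d => (if d.toProd.2.val < 4*(j+1) then (1:ℤ) else 0)
            - (if d.toProd.1.val < 4*(j+1) then (1:ℤ) else 0))).sum = 0 := List.sum_eq_zero hzero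
        rw [hS, add_zero] at hsum
        rcases hd₀v with h | h
        · have hh : s(d₀.toProd.1, d₀.toProd.2) = s(w n (4*j+2), w n (4*j+5)) := by
            rw [← dart_edge_eq, h]; simp [gen, gA, gB]
          have hvA : (w n (4*j+2)).val = 4*j+2 := w_val_eq n (by omega)
          have hvB : (w n (4*j+5)).val = 4*j+5 := w_val_eq n (by omega)
          rcases hgdelta hh with hd' | hd' <;> rw [hd'] at hsum <;>
            simp only [hvA, hvB] at hsum <;> split_ifs at hsum <;> omega
        · have hh : s(d₀.toProd.1, d₀.toProd.2) = s(w n (4*j+3), w n (4*j+4)) := by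
            rw [← dart_edge_eq, h]; simp [gen, gA, gB]
          have hvA : (w n (4*j+3)).val = 4*j+3 := w_val_eq n (by omega)
          have hvB : (w n (4*j+4)).val = 4*j+4 := w_val_eq n (by omega)
          rcases hgdelta hh with hd' | hd' <;> rw [hd'] at hsum <;>
            simp only [hvA, hvB] at hsum <;> split_ifs at hsum <;> omega
    have hinner : ∀ e ∈ p.edges, ∃ i, i < k ∧ ∃ t, t < 4 ∧ e = gen n t i := by
      intro e he
      obtain ⟨t, ht, i, hi, hg⟩ := hcl e he
      rcases (by omega : t < 4 ∨ t = 4 ∨ t = 5) with h | h | h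
      · exact ⟨i, hi, t, h, hg⟩
      · subst h; exact absurd (hg ▸ he) (hB1 i hi).1
      · subst h; exact absurd (hg ▸ he) (hB1 i hi).2
    have hconf := confine n hnk hk p hinner
    have hi₀ : u.val / 4 < k := by have := u.isLt; omega
    have hlen4 : p.length ≤ 4 := by
      have htail : p.support.tail.Nodup := hc.support_nodup
      have hsub : ∀ v ∈ p.support.tail, v ∈ [w n (4*(u.val/4)), w n (4*(u.val/4)+1),
          w n (4*(u.val/4)+2), w n (4*(u.val/4)+3)] := by
        intro v hv
        have hvs := hconf v (List.mem_of_mem_tail hv)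
        have hveq : v = w n v.val := Fin.ext (by rw [w_val_eq n v.isLt])
        have hrange : v.val = 4*(u.val/4) ∨ v.val = 4*(u.val/4)+1 ∨ v.val = 4*(u.val/4)+2
            ∨ v.val = 4*(u.val/4)+3 := by omega
        simp only [List.mem_cons, List.not_mem_nil, or_false]
        rcases hrange with h | h | h | h
        · left; rw [hveq, h]
        · right; left; rw [hveq, h]
        · right; right; left; rw [hveq, h]
        · right; right; right; rw [hveq, h]
      have h1 : p.support.tail.toFinset.card = p.support.tail.length :=
        List.toFinset_card_of_nodup htail
      have h2 : p.support.tail.toFinset ⊆ ([w n (4*(u.val/4)), w n (4*(u.val/4)+1),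
          w n (4*(u.val/4)+2), w n (4*(u.val/4)+3)] : List (Fin n)).toFinset := by
        intro a ha
        rw [List.mem_toFinset] at ha ⊢
        exact hsub a ha
      have h3 := Finset.card_le_card h2
      have h4 := List.toFinset_card_le ([w n (4*(u.val/4)), w n (4*(u.val/4)+1),
          w n (4*(u.val/4)+2), w n (4*(u.val/4)+3)] : List (Fin n))
      simp only [List.length_cons, List.length_nil] at h4
      have h5 : p.support.tail.length = p.length := by
        have h6 := Walk.length_support p
        rw [List.length_tail, h6]
        omega
      omega
    have hpar : 2 ∣ p.length := by
      have htel := dart_telescope (fun v : Fin n => (v.val : ZMod 2)) p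
      rw [sub_self] at htel
      have hall : ∀ x ∈ p.darts.map (fun d => ((d.toProd.2.val : ZMod 2))
          - (d.toProd.1.val : ZMod 2)), x = 1 := by
        intro x hx
        obtain ⟨d, hd, rfl⟩ := List.mem_map.mp hx
        obtain ⟨i, hi, t, ht, hg⟩ := hinner _ (List.mem_map_of_mem hd)
        have hh : s(d.toProd.1, d.toProd.2) = s(w n (gA t i), w n (gB t i)) := by
          rw [← dart_edge_eq, hg]; rfl
        have hzdelta := delta_eq n hh (fun v : Fin n => (v.val : ZMod 2))
        have hA : (w n (gA t i)).val = gA t i :=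
          w_val_eq n (by interval_cases t <;> simp [gA] <;> omega)
        have hB : (w n (gB t i)).val = gB t i :=
          w_val_eq n (by interval_cases t <;> simp [gB] <;> omega)
        have hodd : (gA t i + gB t i) % 2 = 1 := by
          interval_cases t <;> simp [gA, gB] <;> omega
        rcases hzdelta with hd' | hd' <;> rw [hd', hA, hB]
        · exact (zmod_diff hodd).2
        · rw [neg_sub]; exact (zmod_diff hodd).1
      have hlen' := List.sum_eq_card_nsmul _ (1 : ZMod 2) hall
      rw [htel, List.length_map, Walk.length_darts] at hlen'
      have hcast : ((p.length : ℕ) : ZMod 2) = 0 := by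
        rw [← mul_one ((p.length : ℕ) : ZMod 2), ← nsmul_eq_mul]
        exact hlen'.symm
      exact (ZMod.natCast_eq_zero_iff _ 2).mp hcast
    have hlen3 : 3 ≤ p.length := hc.three_le_length
    have hplen : p.length = 4 := by omega
    have hedge4 : ∀ e ∈ p.edges, ∃ t, t < 4 ∧ e = gen n t (u.val/4) := by
      intro e he
      obtain ⟨i, hi, t, ht, hg⟩ := hinner e he
      refine ⟨t, ht, ?_⟩
      rw [hg] at he
      have hfst : w n (gA t i) ∈ p.support := Walk.fst_mem_support_of_mem_edges p he
      have hcf := hconf _ hfst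
      have hval : (w n (gA t i)).val = gA t i :=
        w_val_eq n (by interval_cases t <;> simp [gA] <;> omega)
      have hieq : i = u.val/4 := by
        rw [hval] at hcf
        interval_cases t <;> simp [gA] at hcf <;> omega
      rw [hg, hieq]
    have hsubS : p.edges.toFinset ⊆ ([gen n 0 (u.val/4), gen n 1 (u.val/4), gen n 2 (u.val/4),
        gen n 3 (u.val/4)] : List (Sym2 (Fin n))).toFinset := by
      intro e he
      rw [List.mem_toFinset] at he ⊢
      obtain ⟨t, ht, hg⟩ := hedge4 e he
      interval_cases t <;> simp [hg]
    have hcards := List.toFinset_card_le ([gen n 0 (u.val/4), gen n 1 (u.val/4),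
        gen n 2 (u.val/4), gen n 3 (u.val/4)] : List (Sym2 (Fin n)))
    simp only [List.length_cons, List.length_nil] at hcards
    have hec : p.edges.toFinset.card = 4 := by
      rw [List.toFinset_card_of_nodup hnd, Walk.length_edges, hplen]
    have hSeq : p.edges.toFinset = ([gen n 0 (u.val/4), gen n 1 (u.val/4), gen n 2 (u.val/4),
        gen n 3 (u.val/4)] : List (Sym2 (Fin n))).toFinset :=
      Finset.eq_of_subset_of_card_le hsubS (by omega)
    have h0 : gen n 0 (u.val/4) ∈ p.edges := by
      rw [← List.mem_toFinset, hSeq, List.mem_toFinset]; simp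
    have h1 : gen n 1 (u.val/4) ∈ p.edges := by
      rw [← List.mem_toFinset, hSeq, List.mem_toFinset]; simp
    exact hpair 0 1 (u.val/4) (by omega) (by omega) (by omega) rfl hi₀ ⟨h0, h1⟩


lemma coloring (hnk : n = 4*k) (hk : 2 ≤ k) : IsEdgeColoring (G n) (Fc n) := by
  refine ⟨?_, ?_, ?_, ?_⟩
  · intro c
    rw [Fc]
    split_ifs <;> simp
  · intro ci cj hne
    rw [Finset.disjoint_left]
    intro e he1 he2
    obtain ⟨t1, ht1, hg1, hr1⟩ := mem_Fc n he1
    obtain ⟨t2, ht2, hg2, hr2⟩ := mem_Fc n he2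
    have hik : ci.val / 4 < k := by have := ci.isLt; omega
    have hjk : cj.val / 4 < k := by have := cj.isLt; omega
    have hti := gen_inj n hnk hk ht1 ht2 hik hjk (hg1.symm.trans hg2)
    have hmod : ci.val % 4 = cj.val % 4 := by rw [← hr1, ← hr2, hti.1]
    apply hne
    apply Fin.ext
    omega
  · intro c e he
    rw [Finset.mem_coe] at he
    obtain ⟨t, ht, hg, -⟩ := mem_Fc n he
    have hik : c.val / 4 < k := by have := c.isLt; omega
    rw [hg]
    exact gen_mem_edgeSet n hnk hk ht hik
  · intro e he
    obtain ⟨t, ht, i, hi, hg⟩ := edge_class n hnk he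
    have hr : rOf t < 4 := by interval_cases t <;> simp [rOf]
    refine ⟨⟨4*i + rOf t, by omega⟩, ?_⟩
    rw [hg]
    exact gen_mem_Fc n hnk ht hi rfl

def T : Finset (Fin n) := Finset.univ.filter (fun c => c.val % 2 = 0)

lemma T_card (hnk : n = 4*k) (hk : 2 ≤ k) : (T n).card = n / 2 := by
  apply Finset.card_eq_of_bijective (fun i hi => (⟨2*i, by omega⟩ : Fin n))
  · intro a ha
    rw [T, Finset.mem_filter] at ha
    exact ⟨a.val / 2, by have := a.isLt; omega, Fin.ext (by simp; omega)⟩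
  · intro i hi
    rw [T, Finset.mem_filter]
    exact ⟨Finset.mem_univ _, by simpa using Nat.mul_mod_right 2 i⟩
  · intro i j hi hj hij
    have := congrArg Fin.val hij
    simp at this
    omega

lemma gen_vdisj (hnk : n = 4*k) (hk : 2 ≤ k) {t t' i : ℕ} (hi : i < k)
    (htt' : (t = 0 ∧ t' = 1) ∨ (t = 1 ∧ t' = 0) ∨ (t = 4 ∧ t' = 5) ∨ (t = 5 ∧ t' = 4)) :
    ∀ v, v ∈ gen n t i → v ∉ gen n t' i := by
  intro v hv hv'
  rw [gen, Sym2.mem_iff] at hv hv'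
  rcases htt' with ⟨rfl, rfl⟩ | ⟨rfl, rfl⟩ | ⟨rfl, rfl⟩ | ⟨rfl, rfl⟩ <;>
    simp only [gA, gB] at hv hv' <;>
    rcases hv with rfl | rfl <;> rcases hv' with h | h <;>
    rcases w_cases n (by omega) (by omega) h with h' | h' | h' <;> omega

lemma matching_of_mem_T (hnk : n = 4*k) (hk : 2 ≤ k) {c : Fin n} (hc : c ∈ T n) :
    IsMatching2 (Fc n c) := by
  rw [T, Finset.mem_filter] at hc
  have hik : c.val / 4 < k := by have := c.isLt; omega
  have h4 : c.val % 4 = 0 ∨ c.val % 4 = 2 := by omega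
  have key : ∀ t t' : ℕ, ((t = 0 ∧ t' = 1) ∨ (t = 1 ∧ t' = 0) ∨ (t = 4 ∧ t' = 5)
      ∨ (t = 5 ∧ t' = 4)) →
      IsMatching2 {gen n t (c.val/4), gen n t' (c.val/4)} := by
    intro t t' htt'
    have h6 : t < 6 ∧ t' < 6 ∧ t ≠ t' := by omega
    have hne : gen n t (c.val/4) ≠ gen n t' (c.val/4) := by
      intro h
      have := gen_inj n hnk hk h6.1 h6.2.1 hik hik h
      omega
    constructor
    · rw [Finset.card_insert_of_notMem (by simpa using hne), Finset.card_singleton]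
    · intro e₁ he₁ e₂ he₂ hne' v hv1 hv2
      simp only [Finset.mem_insert, Finset.mem_singleton] at he₁ he₂
      rcases he₁ with rfl | rfl <;> rcases he₂ with rfl | rfl
      · exact hne' rfl
      · exact gen_vdisj n hnk hk hik htt' v hv1 hv2
      · have htt'' : (t' = 0 ∧ t = 1) ∨ (t' = 1 ∧ t = 0) ∨ (t' = 4 ∧ t = 5)
            ∨ (t' = 5 ∧ t = 4) := by omega
        exact gen_vdisj n hnk hk hik htt'' v hv1 hv2
      · exact hne' rfl
  rcases h4 with h | h
  · have : Fc n c = {gen n 0 (c.val/4), gen n 1 (c.val/4)} := by rw [Fc, if_pos h]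
    rw [this]
    exact key 0 1 (by omega)
  · have : Fc n c = {gen n 4 (c.val/4), gen n 5 (c.val/4)} := by
      rw [Fc, if_neg (by omega), if_neg (by omega), if_pos h]
    rw [this]
    exact key 4 5 (by omega)

lemma single_of_not_mem_T {c : Fin n} (hc : c ∉ T n) : (Fc n c).card = 1 := by
  rw [T, Finset.mem_filter] at hc
  have h2 : c.val % 2 = 1 := by
    rcases Nat.mod_two_eq_zero_or_one c.val with h | h
    · exact absurd ⟨Finset.mem_univ _, h⟩ hc
    · exact h
  have h4 : c.val % 4 = 1 ∨ c.val % 4 = 3 := by omega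
  rcases h4 with h | h
  · rw [Fc, if_neg (by omega), if_pos h, Finset.card_singleton]
  · rw [Fc, if_neg (by omega), if_neg (by omega), if_neg (by omega), Finset.card_singleton]


end RG

/-- For every `n ≥ 8` divisible by 4 there is a graph `G` on `n` vertices with
an edge coloring into `n` color classes, exactly `n/2` of which are matchings
of size 2 and exactly `n/2` of which are single edges, whose rainbow girth is
exactly `n/2`. -/
theorem statement_5 (n : ℕ) (hn : 8 ≤ n) (hdvd : 4 ∣ n) :
    ∃ (G : SimpleGraph (Fin n)) (F : Fin n → Finset (Sym2 (Fin n)))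
      (T : Finset (Fin n)),
      IsEdgeColoring G F ∧
      T.card = n / 2 ∧
      (∀ i ∈ T, IsMatching2 (F i)) ∧
      (∀ i ∉ T, (F i).card = 1) ∧
      (∃ (u : Fin n) (w : G.Walk u u), w.IsCycle ∧ IsRainbow F w ∧
        w.length = n / 2) ∧
      (∀ (u : Fin n) (w : G.Walk u u), w.IsCycle → IsRainbow F w →
        n / 2 ≤ w.length) := by
  haveI : NeZero n := ⟨by omega⟩
  have hnk : n = 4 * (n/4) := by omega
  have hk : 2 ≤ n/4 := by omega
  refine ⟨RG.G n, RG.Fc n, RG.T n, RG.coloring n hnk hk, RG.T_card n hnk hk,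
    fun c hc => RG.matching_of_mem_T n hnk hk hc,
    fun c hc => RG.single_of_not_mem_T n hc,
    ⟨RG.w n 1, RG.CW n hnk hk, RG.CW_isCycle n hnk hk, RG.CW_rainbow n hnk hk, ?_⟩,
    fun u p hc hrb => RG.lower n hnk hk hc hrb⟩
  rw [RG.CW_length n hnk hk]
  omega
end

section
/- Let G be a graph with an edge coloring in which every color class is either a single edge or a triangle class. If G contains a cycle of length ℓ whose edge set is not equal to a single color class, then G contains a rainbow cycle of length at most ℓ. -/
open Finset SimpleGraph
open scoped Classical

/-- A path (walk with nodup support) from `a` to `b` containing the edge `s(a,b)`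
has that as its only edge. -/
lemma path_loop_edge {V : Type*} {G : SimpleGraph V} :
    ∀ {a b : V} (p : G.Walk a b), p.support.Nodup → s(a, b) ∈ p.edges →
      p.edges = [s(a, b)] := by
  intro a b p
  induction p with
  | nil => intro _ h; simp at h
  | @cons a d b h q ih =>
    intro hs hm
    rw [Walk.edges_cons] at hm ⊢
    rw [Walk.support_cons] at hs
    rcases List.mem_cons.mp hm with heq | hmem
    · rcases Sym2.eq_iff.mp heq with ⟨-, hbd⟩ | ⟨had, -⟩
      · subst hbd
        cases q with
        | nil => simp
        | @cons _ d' _ h' q' =>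
          exfalso
          rw [Walk.support_cons] at hs
          exact (List.nodup_cons.mp (List.nodup_cons.mp hs).2).1 q'.end_mem_support
      · exact absurd had h.ne
    · exact absurd (q.fst_mem_support_of_mem_edges hmem)
        (List.nodup_cons.mp hs).1

/-- Shortcut construction: given a path `q : y → z` avoiding `x`, close it up
with the edge `zy` to obtain a cycle. -/
lemma surgery1 {V : Type*} {G : SimpleGraph V} {x y z : V}
    (hxy : G.Adj x y) (hyz : G.Adj y z)
    (q : G.Walk y z) (hs : q.support.Nodup) (hx : x ∉ q.support)
    (he : q.edges.Nodup) (hm : s(y, z) ∉ q.edges) :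
    ∃ c : G.Walk y y, c.IsCycle ∧ c.length = q.length + 1 ∧
      s(y, z) ∈ c.edges ∧ s(x, y) ∉ c.edges := by
  refine ⟨q.concat hyz.symm, ⟨⟨⟨?_⟩, q.concat_ne_nil _⟩, ?_⟩, ?_, ?_, ?_⟩
  · rw [Walk.edges_concat, List.concat_eq_append]
    refine he.append (List.nodup_singleton _) ?_
    intro e he1 he2
    rw [List.mem_singleton] at he2
    subst he2
    exact hm (by rw [Sym2.eq_swap]; exact he1)
  · rw [Walk.support_concat, q.support_eq_cons,
      List.cons_append, List.tail_cons]
    obtain ⟨hy, ht⟩ := List.nodup_cons.mp (q.support_eq_cons ▸ hs)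
    refine ht.append (List.nodup_singleton _) ?_
    intro a ha hay
    rw [List.mem_singleton] at hay
    subst hay
    exact hy ha
  · simp
  · rw [Walk.edges_concat, List.concat_eq_append]
    exact List.mem_append_right _ (by simp [Sym2.eq_swap])
  · intro hmem
    rw [Walk.edges_concat, List.concat_eq_append, List.mem_append] at hmem
    rcases hmem with hmem | hmem
    · exact hx (q.fst_mem_support_of_mem_edges hmem)
    · rw [List.mem_singleton] at hmem
      rcases Sym2.eq_iff.mp hmem with ⟨hxz', -⟩ | ⟨hxy', -⟩
      · subst hxz'
        exact hx q.end_mem_support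
      · exact hxy.ne hxy'

/-- The main surgery: a cycle through `x` using the triangle edges `xy`, `xz`
is either exactly the triangle, or can be shortcut to a shorter cycle through
`yz` missing one of `xy`, `xz`. -/
lemma surgery {V : Type*} {G : SimpleGraph V} {x y z : V}
    (hxy : G.Adj x y) (hxz : G.Adj x z) (hyz : G.Adj y z)
    (w2 : G.Walk x x) (hc : w2.IsCycle)
    (he1 : s(x, y) ∈ w2.edges) (he2 : s(x, z) ∈ w2.edges) :
    w2.edges.toFinset = {s(x, y), s(x, z), s(y, z)} ∨
      ∃ (v : V) (c : G.Walk v v), c.IsCycle ∧ c.length + 1 = w2.length ∧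
        s(y, z) ∈ c.edges ∧ (s(x, y) ∉ c.edges ∨ s(x, z) ∉ c.edges) := by
  have hne12 : s(x, y) ≠ s(x, z) := fun h => hyz.ne (Sym2.congr_right.mp h)
  cases w2 with
  | nil => simp at he1
  | @cons _ a1 _ h1 t =>
    cases t with
    | nil => exact absurd rfl h1.ne
    | @cons _ a2 _ h1' t' =>
      obtain ⟨b, q, h2', heq⟩ := Walk.exists_cons_eq_concat h1' t'
      rw [heq] at hc he1 he2 ⊢
      -- supports
      have hsup : (q.support ++ [x]).Nodup := by
        have := hc.support_nodup
        simpa [Walk.support_cons, Walk.support_concat, List.concat_eq_append]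
          using this
      rw [List.nodup_append] at hsup
      obtain ⟨hqs, -, hdisj⟩ := hsup
      have hxq : x ∉ q.support := fun h => hdisj x h x (by simp) rfl
      -- edges
      have hed : (Walk.cons h1 (q.concat h2')).edges
          = s(x, a1) :: (q.edges ++ [s(b, x)]) := by
        simp [Walk.edges_cons, Walk.edges_concat, List.concat_eq_append]
      have hen : (s(x, a1) :: (q.edges ++ [s(b, x)])).Nodup := by
        rw [← hed]; exact hc.isCircuit.isTrail.edges_nodup
      have hqe : q.edges.Nodup :=
        ((List.nodup_cons.mp hen).2.of_append_left)
      have hmem1 : s(x, y) = s(x, a1) ∨ s(x, y) = s(b, x) := by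
        rw [hed] at he1
        rcases List.mem_cons.mp he1 with h | h
        · exact Or.inl h
        · rcases List.mem_append.mp h with h | h
          · exact absurd (q.fst_mem_support_of_mem_edges h) hxq
          · exact Or.inr (by simpa using h)
      have hmem2 : s(x, z) = s(x, a1) ∨ s(x, z) = s(b, x) := by
        rw [hed] at he2
        rcases List.mem_cons.mp he2 with h | h
        · exact Or.inl h
        · rcases List.mem_append.mp h with h | h
          · exact absurd (q.fst_mem_support_of_mem_edges h) hxq
          · exact Or.inr (by simpa using h)
      rcases hmem1 with hA | hA <;> rcases hmem2 with hB | hB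
      · exact absurd (hA.trans hB.symm) hne12
      · -- first edge is xy, last is xz
        have ha1 : y = a1 := Sym2.congr_right.mp hA
        subst ha1
        have hb : z = b := by
          have : s(x, z) = s(x, b) := hB.trans Sym2.eq_swap
          exact Sym2.congr_right.mp this
        subst hb
        by_cases hq : s(y, z) ∈ q.edges
        · left
          rw [hed, path_loop_edge q hqs hq]
          rw [show s(z, x) = s(x, z) from Sym2.eq_swap]
          ext e
          simp
          tauto
        · obtain ⟨c, hcyc, hclen, hmyz, hnot⟩ := surgery1 hxy hyz q hqs hxq hqe hq
          refine Or.inr ⟨y, c, hcyc, ?_, hmyz, Or.inl hnot⟩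
          simp only [Walk.length_cons, Walk.length_concat, hclen]
      · -- first edge is xz, last is xy
        have ha1 : z = a1 := Sym2.congr_right.mp hB
        subst ha1
        have hb : y = b := by
          have : s(x, y) = s(x, b) := hA.trans Sym2.eq_swap
          exact Sym2.congr_right.mp this
        subst hb
        by_cases hq : s(z, y) ∈ q.edges
        · left
          rw [hed, path_loop_edge q hqs hq]
          rw [show s(y, x) = s(x, y) from Sym2.eq_swap,
            show s(z, y) = s(y, z) from Sym2.eq_swap]
          ext e
          simp
          tauto
        · obtain ⟨c, hcyc, hclen, hmyz, hnot⟩ :=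
            surgery1 hxz hyz.symm q hqs hxq hqe hq
          refine Or.inr ⟨z, c, hcyc, ?_, (by rw [Sym2.eq_swap]; exact hmyz), Or.inr hnot⟩
          simp only [Walk.length_cons, Walk.length_concat, hclen]
      · exact absurd (hA.trans hB.symm) hne12


lemma key {V : Type*} {m : ℕ} (G : SimpleGraph V) (F : Fin m → Finset (Sym2 V))
    (hF : IsEdgeColoring G F)
    (hclass : ∀ i, (F i).card = 1 ∨ IsTriangleClass G (F i)) :
    ∀ (n : ℕ) (u : V) (w : G.Walk u u), w.IsCycle → w.length = n →
      (¬ ∃ i, w.edges.toFinset = F i) →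
      ∃ (v : V) (w' : G.Walk v v), w'.IsCycle ∧ IsRainbow F w' ∧ w'.length ≤ n := by
  intro n
  induction n using Nat.strong_induction_on with
  | _ n IH =>
  intro u w hw hlen hne
  by_cases hr : IsRainbow F w
  · exact ⟨u, w, hw, hr, hlen.le⟩
  rw [IsRainbow] at hr
  push_neg at hr
  obtain ⟨i, e1, he1w, e2, he2w, he1i, he2i, hne12⟩ := hr
  have htri : IsTriangleClass G (F i) := by
    rcases hclass i with h1 | h
    · exfalso
      have : 1 < (F i).card := Finset.one_lt_card_iff.mpr ⟨e1, e2, he1i, he2i, hne12⟩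
      omega
    · exact h
  obtain ⟨a, b, c, hab, hac, hbc, hT⟩ := htri
  have hx6 : ∃ x y z, G.Adj x y ∧ G.Adj x z ∧ G.Adj y z ∧ e1 = s(x, y) ∧
      e2 = s(x, z) ∧ ({s(x, y), s(x, z), s(y, z)} : Finset (Sym2 V)) = F i := by
    rw [hT] at he1i he2i
    simp only [Finset.mem_insert, Finset.mem_singleton] at he1i he2i
    rcases he1i with h1 | h1 | h1 <;> rcases he2i with h2 | h2 | h2
    · exact absurd (h1.trans h2.symm) hne12
    · exact ⟨a, b, c, hab, hac, hbc, h1, h2, hT.symm⟩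
    · refine ⟨b, a, c, hab.symm, hbc, hac, h1.trans Sym2.eq_swap, h2, ?_⟩
      rw [hT]; ext e; simp [Sym2.eq_swap (a := b) (b := a)]; tauto
    · refine ⟨a, c, b, hac, hab, hbc.symm, h1, h2, ?_⟩
      rw [hT]; ext e; simp [Sym2.eq_swap (a := c) (b := b)]; tauto
    · exact absurd (h1.trans h2.symm) hne12
    · refine ⟨c, a, b, hac.symm, hbc.symm, hab, h1.trans Sym2.eq_swap,
        h2.trans Sym2.eq_swap, ?_⟩
      rw [hT]; ext e
      simp [Sym2.eq_swap (a := c) (b := a), Sym2.eq_swap (a := c) (b := b)]; tauto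
    · refine ⟨b, c, a, hbc, hab.symm, hac.symm, h1, h2.trans Sym2.eq_swap, ?_⟩
      rw [hT]; ext e
      simp [Sym2.eq_swap (a := b) (b := a), Sym2.eq_swap (a := c) (b := a)]; tauto
    · refine ⟨c, b, a, hbc.symm, hac.symm, hab.symm, h1.trans Sym2.eq_swap,
        h2.trans Sym2.eq_swap, ?_⟩
      rw [hT]; ext e
      simp [Sym2.eq_swap (a := c) (b := b), Sym2.eq_swap (a := c) (b := a),
        Sym2.eq_swap (a := b) (b := a)]; tauto
    · exact absurd (h1.trans h2.symm) hne12
  obtain ⟨x, y, z, hxy, hxz, hyz, he1eq, he2eq, hFi⟩ := hx6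
  subst he1eq
  subst he2eq
  have hxs : x ∈ w.support := w.fst_mem_support_of_mem_edges he1w
  have hc2 : (w.rotate x hxs).IsCycle := hw.rotate hxs
  have hperm : List.Perm (w.rotate x hxs).edges w.edges := (w.rotate_edges x hxs).perm
  have he1' : s(x, y) ∈ (w.rotate x hxs).edges := hperm.mem_iff.mpr he1w
  have he2' : s(x, z) ∈ (w.rotate x hxs).edges := hperm.mem_iff.mpr he2w
  have hlen2 : (w.rotate x hxs).length = n := by
    rw [← hlen, ← Walk.length_edges, ← Walk.length_edges]
    exact hperm.length_eq
  rcases surgery hxy hxz hyz (w.rotate x hxs) hc2 he1' he2' with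
    htr | ⟨v, cw, hcyc, hclen, hyzmem, hnot⟩
  · refine absurd ⟨i, ?_⟩ hne
    rw [← hFi, ← htr]
    ext e
    simp only [List.mem_toFinset, hperm.mem_iff]
  · have hcne : ¬ ∃ j, cw.edges.toFinset = F j := by
      rintro ⟨j, hj⟩
      have hyzFi : s(y, z) ∈ F i := by rw [← hFi]; simp
      have hyzFj : s(y, z) ∈ F j := by rw [← hj]; simpa using hyzmem
      have hij : i = j := by
        by_contra hij
        exact Finset.disjoint_left.mp (hF.2.1 i j hij) hyzFi hyzFj
      subst hij
      rcases hnot with hn | hn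
      · refine hn ?_
        have hxyFi : s(x, y) ∈ F i := by rw [← hFi]; simp
        rw [← hj] at hxyFi
        simpa using hxyFi
      · refine hn ?_
        have hxzFi : s(x, z) ∈ F i := by rw [← hFi]; simp
        rw [← hj] at hxzFi
        simpa using hxzFi
    have hlt : cw.length < n := by omega
    obtain ⟨v', w', hcy', hrb', hle'⟩ := IH cw.length hlt v cw hcyc rfl hcne
    exact ⟨v', w', hcy', hrb', hle'.trans (by omega)⟩

/-- If `G` has an edge coloring in which every color class is a single edge or
a triangle class, and `G` contains a cycle of length `ℓ` whose edge set is not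
equal to a single color class, then `G` contains a rainbow cycle of length at
most `ℓ`. -/
theorem statement_8 {V : Type*} {m : ℕ} (G : SimpleGraph V)
    (F : Fin m → Finset (Sym2 V))
    (hF : IsEdgeColoring G F)
    (hclass : ∀ i, (F i).card = 1 ∨ IsTriangleClass G (F i))
    (ℓ : ℕ) (u : V) (w : G.Walk u u) (hw : w.IsCycle) (hlen : w.length = ℓ)
    (hne : ¬ ∃ i, w.edges.toFinset = F i) :
    ∃ (v : V) (w' : G.Walk v v), w'.IsCycle ∧ IsRainbow F w' ∧ w'.length ≤ ℓ := by
  exact key G F hF hclass ℓ u w hw hlen hne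
end

section
/- Let G be a graph on n vertices and let M_1, …, M_m be pairwise disjoint matchings of size 2 in G (pairwise disjoint as sets of edges). Then there is a choice of one edge e_i ∈ M_i for each 1 ≤ i ≤ m such that the set of vertices incident to at least one of the chosen edges e_1, …, e_m has size at most n·(1 − (1/2)^{4m/n}). -/
open Finset SimpleGraph
open scoped Classical

lemma concaveAux : ConcaveOn ℝ Set.univ (fun x : ℝ => 1 - (1/2:ℝ) ^ x) := by
  have hconv : ConvexOn ℝ Set.univ (fun x : ℝ => (1/2:ℝ) ^ x) := by
    have h2 : ∀ x : ℝ, (1/2:ℝ) ^ x = Real.exp (Real.log (1/2) * x) := fun x =>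
      Real.rpow_def_of_pos (by norm_num) x
    refine ⟨convex_univ, ?_⟩
    intro x _ y _ s t hs ht hst
    simp only [smul_eq_mul, h2]
    have h := convexOn_exp.2 (Set.mem_univ (Real.log (1/2) * x))
      (Set.mem_univ (Real.log (1/2) * y)) hs ht hst
    simp only [smul_eq_mul] at h
    calc Real.exp (Real.log (1/2) * (s*x + t*y))
        = Real.exp (s * (Real.log (1/2)*x) + t*(Real.log (1/2)*y)) := by ring_nf
      _ ≤ _ := h
  have h := (concaveOn_const (1:ℝ) convex_univ).add hconv.neg
  convert h using 1
  · rfl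
  · ext x; simp only [Pi.add_apply, Pi.neg_apply]; ring

lemma sym2FilterCardLe {α : Type*} [Fintype α] [DecidableEq α] (e : Sym2 α) :
    (univ.filter (fun v => v ∈ e)).card ≤ 2 := by
  induction e using Sym2.inductionOn with
  | hf x y =>
    have hsub : (univ.filter (fun v => v ∈ s(x,y))) ⊆ {x, y} := by
      intro v hv
      simp only [mem_filter, Sym2.mem_iff] at hv
      simp [hv.2]
    calc _ ≤ ({x, y} : Finset α).card := card_le_card hsub
      _ ≤ ({y} : Finset α).card + 1 := card_insert_le _ _
      _ ≤ 2 := by simp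

/-- If `M_1, …, M_m` are pairwise disjoint matchings of size 2 in a graph `G`
on `n` vertices, then one can choose one edge `e_i ∈ M_i` from each matching so
that the set of vertices incident to at least one chosen edge has size at most
`n·(1 − (1/2)^{4m/n})`. -/
theorem statement_12 (n m : ℕ) (G : SimpleGraph (Fin n))
    (M : Fin m → Finset (Sym2 (Fin n)))
    (hsub : ∀ i, (M i : Set (Sym2 (Fin n))) ⊆ G.edgeSet)
    (hmatch : ∀ i, IsMatching2 (M i))
    (hdisj : ∀ i j : Fin m, i ≠ j → Disjoint (M i) (M j)) :
    ∃ e : Fin m → Sym2 (Fin n), (∀ i, e i ∈ M i) ∧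
      (((univ.filter fun v : Fin n => ∃ i, v ∈ e i).card : ℝ) ≤
        n * (1 - (1 / 2 : ℝ) ^ ((4 * m : ℝ) / n))) := by
  classical
  have hab : ∀ i : Fin m, ∃ q : Sym2 (Fin n) × Sym2 (Fin n), q.1 ≠ q.2 ∧ M i = {q.1, q.2} := by
    intro i
    obtain ⟨x, y, hxy, hMi⟩ := Finset.card_eq_two.mp (hmatch i).1
    exact ⟨(x, y), hxy, hMi⟩
  choose q hq hM using hab
  set a : Fin m → Sym2 (Fin n) := fun i => (q i).1 with ha
  set b : Fin m → Sym2 (Fin n) := fun i => (q i).2 with hb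
  have haM : ∀ i, a i ∈ M i := fun i => by rw [hM i]; exact mem_insert_self _ _
  have hbM : ∀ i, b i ∈ M i := fun i => by
    rw [hM i]; exact mem_insert_of_mem (mem_singleton_self _)
  have hnot : ∀ i, ∀ v : Fin n, v ∈ a i → v ∉ b i := fun i v hv =>
    (hmatch i).2 (a i) (haM i) (b i) (hbM i) (hq i) v hv
  rcases Nat.eq_zero_or_pos n with hn | hn
  · subst hn
    refine ⟨a, haM, ?_⟩
    simp
  have hnR : (0:ℝ) < n := by exact_mod_cast hn
  set d : Fin n → ℕ := fun v => (univ.filter fun i => v ∈ a i ∨ v ∈ b i).card with hd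
  have hdm : ∀ v, d v ≤ m := fun v => by
    simpa using (card_filter_le univ (fun i => v ∈ a i ∨ v ∈ b i))
  have hdsum : (∑ v, d v) ≤ 4 * m := by
    have hswap : ∑ v, d v
        = ∑ i : Fin m, (univ.filter fun v : Fin n => v ∈ a i ∨ v ∈ b i).card := by
      simp only [hd, card_filter]
      rw [Finset.sum_comm]
    rw [hswap]
    calc ∑ i : Fin m, (univ.filter fun v : Fin n => v ∈ a i ∨ v ∈ b i).card
        ≤ ∑ _i : Fin m, 4 := by
          refine Finset.sum_le_sum fun i _ => ?_
          have hsub2 : (univ.filter fun v : Fin n => v ∈ a i ∨ v ∈ b i)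
              ⊆ (univ.filter (· ∈ a i)) ∪ (univ.filter (· ∈ b i)) := by
            intro v hv
            simp only [mem_filter, mem_union] at *
            tauto
          calc _ ≤ _ := card_le_card hsub2
            _ ≤ _ := card_union_le _ _
            _ ≤ 2 + 2 := add_le_add (sym2FilterCardLe _) (sym2FilterCardLe _)
      _ = 4 * m := by simp [mul_comm]
  set es : (Fin m → Bool) → Fin m → Sym2 (Fin n) := fun σ i => if σ i then a i else b i with hes
  -- per-vertex count
  have key : ∀ v : Fin n,
      (∑ σ : Fin m → Bool, (if ∃ i, v ∈ es σ i then (1:ℝ) else 0))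
        = 2^m * (1 - (1/2:ℝ)^(d v)) := by
    intro v
    set g : Fin m → Bool → ℝ := fun i c => if v ∈ (if c then a i else b i) then 0 else 1 with hg
    have h1 : ∀ σ : Fin m → Bool,
        (if ∃ i, v ∈ es σ i then (1:ℝ) else 0) = 1 - ∏ i, g i (σ i) := by
      intro σ
      by_cases h : ∃ i, v ∈ es σ i
      · obtain ⟨i, hi⟩ := h
        rw [if_pos ⟨i, hi⟩, Finset.prod_eq_zero (mem_univ i) (by simp [hg, hes] at hi ⊢; simp [hi])]
        ring
      · push_neg at h
        rw [if_neg (by push_neg; exact h), Finset.prod_eq_one (fun i _ => by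
          simp only [hg, hes] at h ⊢
          rw [if_neg (h i)])]
        ring
    have h2 : ∀ i : Fin m, (∑ c : Bool, g i c) = if (v ∈ a i ∨ v ∈ b i) then (1:ℝ) else 2 := by
      intro i
      rw [Fintype.sum_bool]
      by_cases hva : v ∈ a i
      · have hvb := hnot i v hva
        simp [hg, hva, hvb]
      · by_cases hvb : v ∈ b i
        · simp [hg, hva, hvb]
        · simp [hg, hva, hvb]; norm_num
    have h3 : (∏ i : Fin m, if (v ∈ a i ∨ v ∈ b i) then (1:ℝ) else 2) = 2 ^ (m - d v) := by
      rw [Finset.prod_ite]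
      simp only [prod_const_one, one_mul, prod_const]
      congr 1
      have hc := Finset.card_filter_add_card_filter_not
        (s := (univ : Finset (Fin m))) (fun i : Fin m => v ∈ a i ∨ v ∈ b i)
      simp only [card_univ, Fintype.card_fin] at hc
      simp only [hd]
      omega
    have h4 : (2:ℝ) ^ (m - d v) = 2^m * (1/2:ℝ)^(d v) := by
      have hle := hdm v
      rw [one_div, inv_pow, ← div_eq_mul_inv, eq_div_iff (by positivity)]
      rw [← pow_add]
      congr 1
      omega
    calc (∑ σ : Fin m → Bool, (if ∃ i, v ∈ es σ i then (1:ℝ) else 0))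
        = ∑ σ : Fin m → Bool, (1 - ∏ i, g i (σ i)) := Finset.sum_congr rfl fun σ _ => h1 σ
      _ = (2^m : ℝ) - ∑ σ : Fin m → Bool, ∏ i, g i (σ i) := by
          rw [Finset.sum_sub_distrib, Finset.sum_const, card_univ]
          simp [Fintype.card_fun]
      _ = (2^m : ℝ) - ∏ i : Fin m, (∑ c : Bool, g i c) := by
          rw [Finset.prod_univ_sum (fun _ => (univ : Finset Bool)) g, Fintype.piFinset_univ]
      _ = (2^m : ℝ) - 2 ^ (m - d v) := by
          rw [Finset.prod_congr rfl fun i _ => h2 i, h3]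
      _ = 2^m * (1 - (1/2:ℝ)^(d v)) := by rw [h4]; ring
  -- total count
  have total : ∑ σ : Fin m → Bool, ((univ.filter fun v : Fin n => ∃ i, v ∈ es σ i).card : ℝ)
      = 2^m * ∑ v : Fin n, (1 - (1/2:ℝ)^(d v)) := by
    simp only [← Finset.sum_boole]
    rw [Finset.sum_comm]
    rw [Finset.sum_congr rfl fun v _ => key v, ← Finset.mul_sum]
  -- Jensen
  set B : ℝ := n * (1 - (1/2:ℝ) ^ ((4*(m:ℝ))/n)) with hB
  have jensen : ∑ v : Fin n, (1 - (1/2:ℝ)^(d v)) ≤ B := by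
    have hw : ∑ _v : Fin n, (1/(n:ℝ)) = 1 := by
      rw [Finset.sum_const, card_univ, Fintype.card_fin]
      rw [nsmul_eq_mul, mul_one_div_cancel hnR.ne']
    have h := concaveAux.le_map_sum (t := (univ : Finset (Fin n)))
      (w := fun _ : Fin n => 1/(n:ℝ)) (p := fun v => ((d v : ℕ) : ℝ))
      (fun _ _ => by positivity) hw (fun _ _ => Set.mem_univ _)
    simp only [smul_eq_mul] at h
    have hmono : (1 - (1/2:ℝ) ^ (∑ v : Fin n, 1/(n:ℝ) * ((d v : ℕ) : ℝ)))
        ≤ 1 - (1/2:ℝ) ^ ((4*(m:ℝ))/n) := by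
      have hexp : (4*(m:ℝ))/n ≥ ∑ v : Fin n, 1/(n:ℝ) * ((d v : ℕ) : ℝ) := by
        rw [← Finset.mul_sum]
        rw [ge_iff_le, one_div, inv_mul_le_iff₀ hnR]
        have : (∑ v : Fin n, ((d v : ℕ) : ℝ)) ≤ 4*(m:ℝ) := by
          have := hdsum
          push_cast
          exact_mod_cast this
        calc (∑ v : Fin n, ((d v : ℕ) : ℝ)) ≤ 4*(m:ℝ) := this
          _ = (n:ℝ) * ((4*(m:ℝ))/n) := by field_simp
      have := Real.rpow_le_rpow_of_exponent_ge (x := (1/2:ℝ)) (by norm_num) (by norm_num) hexp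
      linarith
    have h' : ∑ v : Fin n, 1/(n:ℝ) * (1 - (1/2:ℝ) ^ ((d v : ℕ) : ℝ))
        ≤ 1 - (1/2:ℝ) ^ ((4*(m:ℝ))/n) := le_trans h hmono
    have h'' : (1/(n:ℝ)) * ∑ v : Fin n, (1 - (1/2:ℝ)^(d v))
        ≤ 1 - (1/2:ℝ) ^ ((4*(m:ℝ))/n) := by
      rw [Finset.mul_sum]
      convert h' using 2 with v
      rw [Real.rpow_natCast]
    have h3 := mul_le_mul_of_nonneg_left h'' (le_of_lt hnR)
    rw [hB]
    calc ∑ v : Fin n, (1 - (1/2:ℝ)^(d v))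
        = (n:ℝ) * ((1/(n:ℝ)) * ∑ v : Fin n, (1 - (1/2:ℝ)^(d v))) := by
          field_simp
      _ ≤ _ := h3
  -- averaging
  have hne : (univ : Finset (Fin m → Bool)).Nonempty := univ_nonempty
  obtain ⟨σ, _, hσ⟩ := Finset.exists_le_of_sum_le (f := fun σ : Fin m → Bool =>
      ((univ.filter fun v : Fin n => ∃ i, v ∈ es σ i).card : ℝ))
      (g := fun _ => B) hne (by
    rw [total, Finset.sum_const, card_univ]
    have hcard : (Fintype.card (Fin m → Bool)) = 2^m := by
      simp [Fintype.card_fun]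
    rw [hcard]
    have := mul_le_mul_of_nonneg_left jensen (a := (2:ℝ)^m) (by positivity)
    calc (2:ℝ)^m * ∑ v : Fin n, (1 - (1/2:ℝ)^(d v)) ≤ (2:ℝ)^m * B := this
      _ = (2^m : ℕ) • B := by
        rw [nsmul_eq_mul]
        push_cast
        ring)
  refine ⟨es σ, fun i => ?_, ?_⟩
  · rw [hM i]
    by_cases h : σ i
    · simp [hes, h, ha]
    · simp [hes, h, hb]
  · exact hσ
end

section
/- Let p ∈ [1/2, 1) and ε > 0 be real constants. Let G be a graph on n vertices with an edge coloring F = F_M ⊔ F_E in which every color class in F_M is a matching of size 2, every color class in F_E is a single edge, n/40 ≤ |F_M| ≤ n, and |F_E| ≤ n. Call a vertex heavy if it is incident to at least (ε²/10⁶)·n edges of (∪F_M) ∪ (∪F_E), and let D be the set of heavy vertices. Let S be the random vertex set obtained as the union of D with a random subset of V(G) \ D that contains each vertex independently with probability p. Then for all sufficiently large n, with probability at least 0.9 the number of color classes in F_M having at least one edge with both endpoints in S is at least (1 − ε)·|F_M|·(2p² − p⁴). -/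
open Finset SimpleGraph
open scoped Classical

section Aux
variable {V : Type*} [DecidableEq V]

/-- weight of a subset `s` of `R` under the Bernoulli(p) product measure -/
noncomputable def wgt (p : ℝ) (R s : Finset V) : ℝ :=
  p ^ s.card * (1 - p) ^ (R.card - s.card)

lemma wgt_nonneg {p : ℝ} (h0 : 0 ≤ p) (h1 : p ≤ 1) (R s : Finset V) :
    0 ≤ wgt p R s := by
  apply mul_nonneg (pow_nonneg h0 _) (pow_nonneg (by linarith) _)

lemma wgt_mass {p : ℝ} (h0 : 0 ≤ p) (h1 : p ≤ 1) (R : Finset V) :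
    ∑ s ∈ R.powerset, wgt p R s = 1 := by
  have := Finset.prod_add (fun _ : V => p) (fun _ : V => 1 - p) R
  simp only [prod_const] at this
  have h2 : ∀ s ∈ R.powerset, wgt p R s = p ^ s.card * (1 - p) ^ (R \ s).card := by
    intro s hs
    rw [Finset.mem_powerset] at hs
    rw [wgt, card_sdiff_of_subset hs]
  rw [Finset.sum_congr rfl h2, ← this]
  simp

lemma sum_powerset_split (T U : Finset V) (h : Disjoint T U) (f : Finset V → ℝ) :
    ∑ s ∈ (T ∪ U).powerset, f s = ∑ t ∈ T.powerset, ∑ u ∈ U.powerset, f (t ∪ u) := by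
  rw [← Finset.sum_product']
  refine (Finset.sum_nbij' (fun tu => tu.1 ∪ tu.2) (fun s => (s ∩ T, s ∩ U)) ?_ ?_ ?_ ?_ ?_).symm
  · rintro ⟨t, u⟩ htu
    simp only [Finset.mem_product, Finset.mem_powerset] at htu ⊢
    exact Finset.union_subset_union htu.1 htu.2
  · intro s hs
    simp only [Finset.mem_powerset] at hs
    simp only [Finset.mem_product, Finset.mem_powerset]
    exact ⟨inter_subset_right, inter_subset_right⟩
  · rintro ⟨t, u⟩ htu
    simp only [Finset.mem_product, Finset.mem_powerset] at htu
    have h1 : (t ∪ u) ∩ T = t := by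
      rw [Finset.union_inter_distrib_right, Finset.inter_eq_left.mpr htu.1,
        Finset.disjoint_iff_inter_eq_empty.mp (Finset.disjoint_of_subset_left htu.2 h.symm), Finset.union_empty]
    have h2 : (t ∪ u) ∩ U = u := by
      rw [Finset.union_inter_distrib_right, Finset.inter_eq_left.mpr htu.2,
        Finset.disjoint_iff_inter_eq_empty.mp (Finset.disjoint_of_subset_left htu.1 h), Finset.empty_union]
    simp [h1, h2]
  · intro s hs
    simp only [Finset.mem_powerset] at hs
    simp only [← Finset.inter_union_distrib_left]
    exact Finset.inter_eq_left.mpr hs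
  · rintro ⟨t, u⟩ _
    rfl

lemma wgt_union {p : ℝ} {T U t u : Finset V} (h : Disjoint T U) (ht : t ⊆ T) (hu : u ⊆ U) :
    wgt p (T ∪ U) (t ∪ u) = wgt p T t * wgt p U u := by
  have hd : Disjoint t u := Finset.disjoint_of_subset_left ht (Finset.disjoint_of_subset_right hu h)
  have h1 := Finset.card_union_of_disjoint h
  have h2 := Finset.card_union_of_disjoint hd
  have h3 := Finset.card_le_card ht
  have h4 := Finset.card_le_card hu
  rw [wgt, wgt, wgt, h1, h2]
  rw [show T.card + U.card - (t.card + u.card) = (T.card - t.card) + (U.card - u.card) by omega]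
  rw [pow_add, pow_add]
  ring

lemma E_phi {p : ℝ} (h0 : 0 ≤ p) (h1 : p ≤ 1) {R T : Finset V} (hT : T ⊆ R) :
    ∑ s ∈ R.powerset, wgt p R s * (if T ⊆ s then (1 : ℝ) else 0) = p ^ T.card := by
  have hU : T ∪ R \ T = R := Finset.union_sdiff_of_subset hT
  have hd : Disjoint T (R \ T) := Finset.disjoint_sdiff
  calc ∑ s ∈ R.powerset, wgt p R s * (if T ⊆ s then (1 : ℝ) else 0)
      = ∑ t ∈ T.powerset, ∑ u ∈ (R \ T).powerset,
          wgt p R (t ∪ u) * (if T ⊆ t ∪ u then (1 : ℝ) else 0) := by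
        rw [show R.powerset = (T ∪ R \ T).powerset from by rw [hU]]
        exact sum_powerset_split T (R \ T) hd _
    _ = ∑ t ∈ T.powerset, if t = T then (∑ u ∈ (R \ T).powerset, wgt p R (T ∪ u)) else 0 := by
        refine Finset.sum_congr rfl fun t htm => ?_
        rw [Finset.mem_powerset] at htm
        by_cases hc : t = T
        · subst hc
          rw [if_pos rfl]
          refine Finset.sum_congr rfl fun u _ => ?_
          rw [if_pos Finset.subset_union_left, mul_one]
        · rw [if_neg hc]
          refine Finset.sum_eq_zero fun u hu => ?_
          rw [Finset.mem_powerset] at hu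
          have hns : ¬ T ⊆ t ∪ u := fun hsub => hc (Finset.Subset.antisymm htm fun x hx =>
            (Finset.mem_union.mp (hsub hx)).resolve_right fun h' =>
              (Finset.mem_sdiff.mp (hu h')).2 hx)
          rw [if_neg hns, mul_zero]
    _ = ∑ u ∈ (R \ T).powerset, wgt p R (T ∪ u) := by
        rw [Finset.sum_ite_eq' T.powerset T]
        simp
    _ = p ^ T.card := by
        have hw : ∀ u ∈ (R \ T).powerset, wgt p R (T ∪ u) = p ^ T.card * wgt p (R \ T) u := by
          intro u hu
          rw [Finset.mem_powerset] at hu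
          conv_lhs => rw [← hU]
          rw [wgt_union hd Finset.Subset.rfl hu, wgt, Nat.sub_self, pow_zero, mul_one]
        rw [Finset.sum_congr rfl hw, ← Finset.mul_sum, wgt_mass h0 h1, mul_one]

/-- indicator of the event that one of the two vertex sets is contained in `s` -/
noncomputable def chi (A B s : Finset V) : ℝ :=
  (if A ⊆ s then (1 : ℝ) else 0) + (if B ⊆ s then (1 : ℝ) else 0) -
    (if A ⊆ s then (1 : ℝ) else 0) * (if B ⊆ s then (1 : ℝ) else 0)

lemma chi_eq_ite (A B s : Finset V) :
    chi A B s = if (A ⊆ s ∨ B ⊆ s) then (1 : ℝ) else 0 := by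
  by_cases h1 : A ⊆ s <;> by_cases h2 : B ⊆ s <;> simp [chi, h1, h2]

lemma chi_nonneg (A B s : Finset V) : 0 ≤ chi A B s := by
  rw [chi_eq_ite]; split <;> norm_num

lemma chi_le_one (A B s : Finset V) : chi A B s ≤ 1 := by
  rw [chi_eq_ite]; split <;> norm_num

lemma chi_dep (A B : Finset V) {s t : Finset V} (h : s ∩ (A ∪ B) = t ∩ (A ∪ B)) :
    chi A B s = chi A B t := by
  have key : ∀ C : Finset V, C ⊆ A ∪ B → (C ⊆ s ↔ C ⊆ t) := by
    intro C hC
    constructor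
    · intro hs
      intro x hx
      have : x ∈ s ∩ (A ∪ B) := Finset.mem_inter.mpr ⟨hs hx, hC hx⟩
      rw [h] at this
      exact (Finset.mem_inter.mp this).1
    · intro hs
      intro x hx
      have : x ∈ t ∩ (A ∪ B) := Finset.mem_inter.mpr ⟨hs hx, hC hx⟩
      rw [← h] at this
      exact (Finset.mem_inter.mp this).1
  rw [chi, chi]
  rw [if_congr (key A Finset.subset_union_left) rfl rfl,
    if_congr (key B Finset.subset_union_right) rfl rfl]

lemma chi_ite_mul (A B s : Finset V) :
    (if A ⊆ s then (1 : ℝ) else 0) * (if B ⊆ s then (1 : ℝ) else 0) =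
      (if A ∪ B ⊆ s then (1 : ℝ) else 0) := by
  by_cases h1 : A ⊆ s <;> by_cases h2 : B ⊆ s <;>
    simp [h1, h2, Finset.union_subset_iff]

lemma E_chi {p : ℝ} (h0 : 0 ≤ p) (h1 : p ≤ 1) {R A B : Finset V}
    (hA : A ⊆ R) (hB : B ⊆ R) (hAB : Disjoint A B) :
    ∑ s ∈ R.powerset, wgt p R s * chi A B s =
      p ^ A.card + p ^ B.card - p ^ (A.card + B.card) := by
  have hABR : A ∪ B ⊆ R := Finset.union_subset hA hB
  have key : ∀ s ∈ R.powerset, wgt p R s * chi A B s =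
      wgt p R s * (if A ⊆ s then (1:ℝ) else 0) + wgt p R s * (if B ⊆ s then (1:ℝ) else 0)
        - wgt p R s * (if A ∪ B ⊆ s then (1:ℝ) else 0) := by
    intro s _
    rw [chi, chi_ite_mul]
    ring
  rw [Finset.sum_congr rfl key, Finset.sum_sub_distrib, Finset.sum_add_distrib,
    E_phi h0 h1 hA, E_phi h0 h1 hB, E_phi h0 h1 hABR,
    Finset.card_union_of_disjoint hAB]

lemma E_indep {p : ℝ} (h0 : 0 ≤ p) (h1 : p ≤ 1) {R A B : Finset V}
    (hA : A ⊆ R) (hB : B ⊆ R) (hAB : Disjoint A B)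
    (f g : Finset V → ℝ)
    (hf : ∀ s t : Finset V, s ∩ A = t ∩ A → f s = f t)
    (hg : ∀ s t : Finset V, s ∩ B = t ∩ B → g s = g t) :
    ∑ s ∈ R.powerset, wgt p R s * (f s * g s) =
      (∑ s ∈ R.powerset, wgt p R s * f s) * (∑ s ∈ R.powerset, wgt p R s * g s) := by
  set C := R \ (A ∪ B) with hC
  have hABR : A ∪ B ⊆ R := Finset.union_subset hA hB
  have hU : (A ∪ B) ∪ C = R := Finset.union_sdiff_of_subset hABR
  have hdC : Disjoint (A ∪ B) C := Finset.disjoint_sdiff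
  have hdAC : Disjoint A C := Finset.disjoint_of_subset_left Finset.subset_union_left hdC
  have hdBC : Disjoint B C := Finset.disjoint_of_subset_left Finset.subset_union_right hdC
  -- a generic expansion of expectations as triple sums
  have split3 : ∀ h : Finset V → ℝ, ∑ s ∈ R.powerset, h s =
      ∑ a ∈ A.powerset, ∑ b ∈ B.powerset, ∑ c ∈ C.powerset, h (a ∪ b ∪ c) := by
    intro h
    rw [show R.powerset = ((A ∪ B) ∪ C).powerset from by rw [hU]]
    rw [sum_powerset_split (A ∪ B) C hdC]
    rw [sum_powerset_split A B hAB]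
  have wfact : ∀ a ∈ A.powerset, ∀ b ∈ B.powerset, ∀ c ∈ C.powerset,
      wgt p R (a ∪ b ∪ c) = wgt p A a * wgt p B b * wgt p C c := by
    intro a ha b hb c hc
    rw [Finset.mem_powerset] at ha hb hc
    conv_lhs => rw [← hU]
    rw [wgt_union hdC (Finset.union_subset_union ha hb) hc,
      wgt_union hAB ha hb]
  have ffact : ∀ a ∈ A.powerset, ∀ b ∈ B.powerset, ∀ c ∈ C.powerset,
      f (a ∪ b ∪ c) = f a := by
    intro a ha b hb c hc
    rw [Finset.mem_powerset] at ha hb hc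
    apply hf
    ext x
    simp only [Finset.mem_inter, Finset.mem_union]
    constructor
    · rintro ⟨(hx | hx) | hx, hxA⟩
      · exact ⟨hx, hxA⟩
      · exact absurd hxA (Finset.disjoint_left.mp hAB.symm (hb hx))
      · exact absurd hxA (Finset.disjoint_left.mp hdAC.symm (hc hx))
    · rintro ⟨hx, hxA⟩
      exact ⟨Or.inl (Or.inl hx), hxA⟩
  have gfact : ∀ a ∈ A.powerset, ∀ b ∈ B.powerset, ∀ c ∈ C.powerset,
      g (a ∪ b ∪ c) = g b := by
    intro a ha b hb c hc
    rw [Finset.mem_powerset] at ha hb hc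
    apply hg
    ext x
    simp only [Finset.mem_inter, Finset.mem_union]
    constructor
    · rintro ⟨(hx | hx) | hx, hxB⟩
      · exact absurd hxB (Finset.disjoint_left.mp hAB (ha hx))
      · exact ⟨hx, hxB⟩
      · exact absurd hxB (Finset.disjoint_left.mp hdBC.symm (hc hx))
    · rintro ⟨hx, hxB⟩
      exact ⟨Or.inl (Or.inr hx), hxB⟩
  have massC : ∑ c ∈ C.powerset, wgt p C c = 1 := wgt_mass h0 h1 C
  have massB : ∑ b ∈ B.powerset, wgt p B b = 1 := wgt_mass h0 h1 B
  have lhs_eq : ∑ s ∈ R.powerset, wgt p R s * (f s * g s) =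
      (∑ a ∈ A.powerset, wgt p A a * f a) * (∑ b ∈ B.powerset, wgt p B b * g b) := by
    rw [split3 (fun s => wgt p R s * (f s * g s))]
    have step : ∀ a ∈ A.powerset, ∀ b ∈ B.powerset,
        ∑ c ∈ C.powerset, wgt p R (a ∪ b ∪ c) * (f (a ∪ b ∪ c) * g (a ∪ b ∪ c)) =
          (wgt p A a * f a) * (wgt p B b * g b) := by
      intro a ha b hb
      have : ∀ c ∈ C.powerset,
          wgt p R (a ∪ b ∪ c) * (f (a ∪ b ∪ c) * g (a ∪ b ∪ c)) =
            ((wgt p A a * f a) * (wgt p B b * g b)) * wgt p C c := by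
        intro c hc
        rw [wfact a ha b hb c hc, ffact a ha b hb c hc, gfact a ha b hb c hc]
        ring
      rw [Finset.sum_congr rfl this, ← Finset.mul_sum, massC, mul_one]
    calc ∑ a ∈ A.powerset, ∑ b ∈ B.powerset, ∑ c ∈ C.powerset,
            wgt p R (a ∪ b ∪ c) * (f (a ∪ b ∪ c) * g (a ∪ b ∪ c))
        = ∑ a ∈ A.powerset, ∑ b ∈ B.powerset, (wgt p A a * f a) * (wgt p B b * g b) := by
          refine Finset.sum_congr rfl fun a ha => Finset.sum_congr rfl fun b hb => step a ha b hb
      _ = (∑ a ∈ A.powerset, wgt p A a * f a) * (∑ b ∈ B.powerset, wgt p B b * g b) := by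
          rw [Finset.sum_mul_sum]
  have f_eq : ∑ s ∈ R.powerset, wgt p R s * f s = ∑ a ∈ A.powerset, wgt p A a * f a := by
    rw [split3 (fun s => wgt p R s * f s)]
    refine Finset.sum_congr rfl fun a ha => ?_
    have step : ∀ b ∈ B.powerset,
        ∑ c ∈ C.powerset, wgt p R (a ∪ b ∪ c) * f (a ∪ b ∪ c) =
          (wgt p A a * f a) * wgt p B b := by
      intro b hb
      have : ∀ c ∈ C.powerset, wgt p R (a ∪ b ∪ c) * f (a ∪ b ∪ c) =
          ((wgt p A a * f a) * wgt p B b) * wgt p C c := by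
        intro c hc
        rw [wfact a ha b hb c hc, ffact a ha b hb c hc]
        ring
      rw [Finset.sum_congr rfl this, ← Finset.mul_sum, massC, mul_one]
    rw [Finset.sum_congr rfl step, ← Finset.mul_sum, massB, mul_one]
  have g_eq : ∑ s ∈ R.powerset, wgt p R s * g s = ∑ b ∈ B.powerset, wgt p B b * g b := by
    rw [split3 (fun s => wgt p R s * g s)]
    have step : ∀ a ∈ A.powerset, ∀ b ∈ B.powerset,
        ∑ c ∈ C.powerset, wgt p R (a ∪ b ∪ c) * g (a ∪ b ∪ c) =
          wgt p A a * (wgt p B b * g b) := by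
      intro a ha b hb
      have : ∀ c ∈ C.powerset, wgt p R (a ∪ b ∪ c) * g (a ∪ b ∪ c) =
          (wgt p A a * (wgt p B b * g b)) * wgt p C c := by
        intro c hc
        rw [wfact a ha b hb c hc, gfact a ha b hb c hc]
        ring
      rw [Finset.sum_congr rfl this, ← Finset.mul_sum, massC, mul_one]
    calc ∑ a ∈ A.powerset, ∑ b ∈ B.powerset, ∑ c ∈ C.powerset,
            wgt p R (a ∪ b ∪ c) * g (a ∪ b ∪ c)
        = ∑ a ∈ A.powerset, wgt p A a * (∑ b ∈ B.powerset, wgt p B b * g b) := by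
          refine Finset.sum_congr rfl fun a ha => ?_
          rw [Finset.sum_congr rfl (step a ha), ← Finset.mul_sum]
      _ = (∑ a ∈ A.powerset, wgt p A a) * (∑ b ∈ B.powerset, wgt p B b * g b) := by
          rw [Finset.sum_mul]
      _ = ∑ b ∈ B.powerset, wgt p B b * g b := by
          rw [wgt_mass h0 h1 A, one_mul]
  rw [lhs_eq, f_eq, g_eq]

end Aux

set_option maxHeartbeats 1600000 in
/-- Let `p ∈ [1/2, 1)` and `ε > 0`. Let `G` be a graph on `n` vertices with an
edge coloring `F = F_M ⊔ F_E` (size-2 matchings indexed by `IM`, single edges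
indexed by `IMᶜ`), with `n/40 ≤ |F_M| ≤ n` and `|F_E| ≤ n`. Let `D` be the set
of heavy vertices (incident to at least `(ε²/10⁶)·n` colored edges, i.e. edges
of `G`), and let `S = D ∪ (V ∖ D)_p` be the random set including each vertex
outside `D` independently with probability `p`. Then for all large `n`, with
probability at least `0.9` the number of classes of `F_M` having an edge with
both endpoints in `S` is at least `(1 − ε)·|F_M|·(2p² − p⁴)`.

The probability is expressed as the explicit sum, over subsets `s` of the
non-heavy vertices, of `p^{|s|}(1-p)^{|V∖D|-|s|}` times the indicator of the
event for `S = D ∪ s`. -/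
theorem statement_14 (p ε : ℝ) (hp : 1 / 2 ≤ p) (hp1 : p < 1) (hε : 0 < ε) :
    ∃ n₀ : ℕ, ∀ n : ℕ, n₀ ≤ n →
      ∀ (G : SimpleGraph (Fin n)) (m : ℕ) (F : Fin m → Finset (Sym2 (Fin n)))
        (IM : Finset (Fin m)),
        IsEdgeColoring G F →
        (∀ i ∈ IM, IsMatching2 (F i)) →
        (∀ i ∉ IM, (F i).card = 1) →
        (n : ℝ) / 40 ≤ (IM.card : ℝ) → (IM.card : ℝ) ≤ n →
        ((IMᶜ).card : ℝ) ≤ n →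
        ∀ D : Finset (Fin n),
          D = (univ.filter fun v : Fin n =>
            (ε ^ 2 / 10 ^ 6) * n ≤ ({e ∈ G.edgeSet | v ∈ e}.ncard : ℝ)) →
        (0.9 : ℝ) ≤
          ∑ s ∈ (univ \ D).powerset,
            p ^ s.card * (1 - p) ^ ((univ \ D).card - s.card) *
              (if (1 - ε) * (IM.card : ℝ) * (2 * p ^ 2 - p ^ 4) ≤
                  ((IM.filter fun i =>
                    ∃ e ∈ F i, ∀ v ∈ e, v ∈ D ∪ s).card : ℝ)
               then (1 : ℝ) else 0) := by
  refine ⟨1, fun n hn G m F IM hcol hM _hE1 hlo _hhi _hFE D hD => ?_⟩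
  obtain ⟨hne, hdisj, hsub, hcov⟩ := hcol
  have hp0 : (0:ℝ) ≤ p := by linarith
  have hp1' : p ≤ 1 := le_of_lt hp1
  set R : Finset (Fin n) := univ \ D with hR
  have hmass : ∑ s ∈ R.powerset, wgt p R s = 1 := wgt_mass hp0 hp1' R
  have hw0 : ∀ s : Finset (Fin n), 0 ≤ wgt p R s := wgt_nonneg hp0 hp1' R
  set q : ℝ := 2 * p ^ 2 - p ^ 4 with hqdef
  have hq716 : (7:ℝ)/16 ≤ q := by
    have h14 : (1:ℝ)/4 ≤ p^2 := by nlinarith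
    have hple : p^2 ≤ 1 := by nlinarith
    nlinarith [mul_nonneg (by linarith : (0:ℝ) ≤ p^2 - 1/4) (by linarith : (0:ℝ) ≤ 7/4 - p^2)]
  have hq0 : 0 < q := by linarith
  have hq1 : q ≤ 1 := by nlinarith [sq_nonneg (1 - p^2)]
  rw [show (∑ s ∈ R.powerset,
      p ^ s.card * (1 - p) ^ (R.card - s.card) *
        (if (1 - ε) * (IM.card : ℝ) * q ≤
            ((IM.filter fun i => ∃ e ∈ F i, ∀ v ∈ e, v ∈ D ∪ s).card : ℝ)
          then (1 : ℝ) else 0)) =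
      ∑ s ∈ R.powerset, wgt p R s *
        (if (1 - ε) * (IM.card : ℝ) * q ≤
            ((IM.filter fun i => ∃ e ∈ F i, ∀ v ∈ e, v ∈ D ∪ s).card : ℝ)
          then (1 : ℝ) else 0) from
    Finset.sum_congr rfl fun s _ => by rw [wgt]]
  -- representation of each matching class by two disjoint vertex sets
  have hrep : ∀ i : Fin m, ∃ A B : Finset (Fin n), i ∈ IM →
      A ⊆ R ∧ B ⊆ R ∧ A.card ≤ 2 ∧ B.card ≤ 2 ∧ Disjoint A B ∧
      (∀ s : Finset (Fin n), (∃ e ∈ F i, ∀ v ∈ e, v ∈ D ∪ s) ↔ (A ⊆ s ∨ B ⊆ s)) ∧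
      (∀ v ∈ A ∪ B, ∃ e ∈ F i, v ∈ e) := by
    intro i
    by_cases hi : i ∈ IM
    · obtain ⟨e1, e2, he12, hFi⟩ := Finset.card_eq_two.mp (hM i hi).1
      obtain ⟨b, hab⟩ := Sym2.mem_iff_exists.mp e1.out_fst_mem
      obtain ⟨d, hcd⟩ := Sym2.mem_iff_exists.mp e2.out_fst_mem
      set a := e1.out.1 with ha
      set c := e2.out.1 with hc
      have he1m : e1 ∈ F i := by rw [hFi]; exact Finset.mem_insert_self _ _
      have he2m : e2 ∈ F i := by rw [hFi]; simp
      have hmatch : ∀ v : Fin n, v ∈ e1 → v ∉ e2 := (hM i hi).2 e1 he1m e2 he2m he12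
      refine ⟨({a, b} : Finset (Fin n)) \ D, ({c, d} : Finset (Fin n)) \ D, fun _ => ?_⟩
      have hmem1 : ∀ x : Fin n, x ∈ ({a, b} : Finset (Fin n)) ↔ x ∈ e1 := by
        intro x
        rw [hab, Sym2.mem_iff]
        simp
      have hmem2 : ∀ x : Fin n, x ∈ ({c, d} : Finset (Fin n)) ↔ x ∈ e2 := by
        intro x
        rw [hcd, Sym2.mem_iff]
        simp
      refine ⟨?_, ?_, ?_, ?_, ?_, ?_, ?_⟩
      · intro x hx
        rw [hR, Finset.mem_sdiff]
        exact ⟨Finset.mem_univ x, (Finset.mem_sdiff.mp hx).2⟩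
      · intro x hx
        rw [hR, Finset.mem_sdiff]
        exact ⟨Finset.mem_univ x, (Finset.mem_sdiff.mp hx).2⟩
      · exact (Finset.card_le_card (Finset.sdiff_subset)).trans
          ((Finset.card_insert_le a {b}).trans (by simp))
      · exact (Finset.card_le_card (Finset.sdiff_subset)).trans
          ((Finset.card_insert_le c {d}).trans (by simp))
      · rw [Finset.disjoint_left]
        intro x hx1 hx2
        have h1 : x ∈ e1 := (hmem1 x).mp (Finset.mem_sdiff.mp hx1).1
        have h2 : x ∈ e2 := (hmem2 x).mp (Finset.mem_sdiff.mp hx2).1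
        exact hmatch x h1 h2
      · intro s
        have key : ∀ (e : Sym2 (Fin n)) (P : Finset (Fin n)),
            (∀ x : Fin n, x ∈ P ↔ x ∈ e) →
            ((∀ v ∈ e, v ∈ D ∪ s) ↔ P \ D ⊆ s) := by
          intro e P hP
          constructor
          · intro h x hx
            rw [Finset.mem_sdiff] at hx
            rcases Finset.mem_union.mp (h x ((hP x).mp hx.1)) with h' | h'
            · exact absurd h' hx.2
            · exact h'
          · intro h v hv
            by_cases hvD : v ∈ D
            · exact Finset.mem_union.mpr (Or.inl hvD)
            · exact Finset.mem_union.mpr (Or.inr (h (Finset.mem_sdiff.mpr ⟨(hP v).mpr hv, hvD⟩)))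
        constructor
        · rintro ⟨e, heF, hP⟩
          rw [hFi, Finset.mem_insert, Finset.mem_singleton] at heF
          rcases heF with h' | h'
          · exact Or.inl ((key e1 {a, b} hmem1).mp (h' ▸ hP))
          · exact Or.inr ((key e2 {c, d} hmem2).mp (h' ▸ hP))
        · rintro (h | h)
          · exact ⟨e1, he1m, (key e1 {a, b} hmem1).mpr h⟩
          · exact ⟨e2, he2m, (key e2 {c, d} hmem2).mpr h⟩
      · intro v hv
        rcases Finset.mem_union.mp hv with h | h
        · exact ⟨e1, he1m, (hmem1 v).mp (Finset.mem_sdiff.mp h).1⟩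
        · exact ⟨e2, he2m, (hmem2 v).mp (Finset.mem_sdiff.mp h).1⟩
    · exact ⟨∅, ∅, fun h => absurd h hi⟩
  choose A B hprop using hrep
  have hAR : ∀ i ∈ IM, A i ⊆ R := fun i hi => (hprop i hi).1
  have hBR : ∀ i ∈ IM, B i ⊆ R := fun i hi => (hprop i hi).2.1
  have hA2 : ∀ i ∈ IM, (A i).card ≤ 2 := fun i hi => (hprop i hi).2.2.1
  have hB2 : ∀ i ∈ IM, (B i).card ≤ 2 := fun i hi => (hprop i hi).2.2.2.1
  have hdAB : ∀ i ∈ IM, Disjoint (A i) (B i) := fun i hi => (hprop i hi).2.2.2.2.1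
  have hiff : ∀ i ∈ IM, ∀ s : Finset (Fin n),
      (∃ e ∈ F i, ∀ v ∈ e, v ∈ D ∪ s) ↔ (A i ⊆ s ∨ B i ⊆ s) :=
    fun i hi => (hprop i hi).2.2.2.2.2.1
  have hvert : ∀ i ∈ IM, ∀ v ∈ A i ∪ B i, ∃ e ∈ F i, v ∈ e :=
    fun i hi => (hprop i hi).2.2.2.2.2.2
  have hWR : ∀ i ∈ IM, A i ∪ B i ⊆ R := fun i hi => Finset.union_subset (hAR i hi) (hBR i hi)
  -- expectations of single classes
  set ν : Fin m → ℝ :=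
    fun i => p ^ (A i).card + p ^ (B i).card - p ^ ((A i).card + (B i).card) with hνdef
  have hEchi : ∀ i ∈ IM, ∑ s ∈ R.powerset, wgt p R s * chi (A i) (B i) s = ν i := by
    intro i hi
    rw [hνdef]
    exact E_chi hp0 hp1' (hAR i hi) (hBR i hi) (hdAB i hi)
  have hν_lb : ∀ i ∈ IM, q ≤ ν i := by
    intro i hi
    have hx1 : p^2 ≤ p ^ (A i).card := pow_le_pow_of_le_one hp0 hp1' (hA2 i hi)
    have hx2 : p ^ (A i).card ≤ 1 := pow_le_one₀ hp0 hp1'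
    have hy1 : p^2 ≤ p ^ (B i).card := pow_le_pow_of_le_one hp0 hp1' (hB2 i hi)
    have hy2 : p ^ (B i).card ≤ 1 := pow_le_one₀ hp0 hp1'
    have hp2 : p^2 ≤ 1 := pow_le_one₀ hp0 hp1'
    have k1 : 0 ≤ (p ^ (A i).card - p^2) * (1 - p ^ (B i).card) :=
      mul_nonneg (by linarith) (by linarith)
    have k2 : 0 ≤ (p ^ (B i).card - p^2) * (1 - p^2) :=
      mul_nonneg (by linarith) (by linarith)
    rw [hνdef]
    simp only []
    rw [pow_add, hqdef]
    nlinarith [k1, k2]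
  have hν0 : ∀ i ∈ IM, 0 ≤ ν i := fun i hi => le_trans hq0.le (hν_lb i hi)
  -- X as a sum of indicators
  set Xf : Finset (Fin n) → ℝ := fun s => ∑ i ∈ IM, chi (A i) (B i) s with hXf
  have hXcard : ∀ s : Finset (Fin n),
      ((IM.filter fun i => ∃ e ∈ F i, ∀ v ∈ e, v ∈ D ∪ s).card : ℝ) = Xf s := by
    intro s
    rw [hXf, Finset.card_filter]
    push_cast
    refine Finset.sum_congr rfl fun i hi => ?_
    rw [chi_eq_ite]
    exact if_congr (hiff i hi s) rfl rfl
  set μ : ℝ := ∑ i ∈ IM, ν i with hμdef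
  -- variance identity
  have hcovij : ∀ i ∈ IM, ∀ j ∈ IM,
      ∑ s ∈ R.powerset, wgt p R s * ((chi (A i) (B i) s - ν i) * (chi (A j) (B j) s - ν j)) =
        (∑ s ∈ R.powerset, wgt p R s * (chi (A i) (B i) s * chi (A j) (B j) s)) - ν i * ν j := by
    intro i hi j hj
    have expand : ∀ s ∈ R.powerset,
        wgt p R s * ((chi (A i) (B i) s - ν i) * (chi (A j) (B j) s - ν j)) =
          wgt p R s * (chi (A i) (B i) s * chi (A j) (B j) s)
            - ν i * (wgt p R s * chi (A j) (B j) s)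
            - ν j * (wgt p R s * chi (A i) (B i) s)
            + ν i * ν j * wgt p R s := by
      intro s _
      ring
    rw [Finset.sum_congr rfl expand]
    rw [Finset.sum_add_distrib, Finset.sum_sub_distrib, Finset.sum_sub_distrib,
      ← Finset.mul_sum, ← Finset.mul_sum, ← Finset.mul_sum,
      hEchi i hi, hEchi j hj, hmass]
    ring
  have hVar : ∑ s ∈ R.powerset, wgt p R s * (Xf s - μ)^2 =
      ∑ i ∈ IM, ∑ j ∈ IM,
        ((∑ s ∈ R.powerset, wgt p R s * (chi (A i) (B i) s * chi (A j) (B j) s)) - ν i * ν j) := by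
    calc ∑ s ∈ R.powerset, wgt p R s * (Xf s - μ)^2
        = ∑ s ∈ R.powerset, ∑ i ∈ IM, ∑ j ∈ IM,
            wgt p R s * ((chi (A i) (B i) s - ν i) * (chi (A j) (B j) s - ν j)) := by
          refine Finset.sum_congr rfl fun s _ => ?_
          have h1 : Xf s - μ = ∑ i ∈ IM, (chi (A i) (B i) s - ν i) := by
            rw [hXf, hμdef]
            exact (Finset.sum_sub_distrib _ _).symm
          rw [h1, sq, Finset.sum_mul_sum, Finset.mul_sum]
          exact Finset.sum_congr rfl fun i _ => by rw [Finset.mul_sum]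
      _ = ∑ i ∈ IM, ∑ s ∈ R.powerset, ∑ j ∈ IM,
            wgt p R s * ((chi (A i) (B i) s - ν i) * (chi (A j) (B j) s - ν j)) :=
          Finset.sum_comm
      _ = ∑ i ∈ IM, ∑ j ∈ IM, ∑ s ∈ R.powerset,
            wgt p R s * ((chi (A i) (B i) s - ν i) * (chi (A j) (B j) s - ν j)) :=
          Finset.sum_congr rfl fun i _ => Finset.sum_comm
      _ = ∑ i ∈ IM, ∑ j ∈ IM,
            ((∑ s ∈ R.powerset, wgt p R s * (chi (A i) (B i) s * chi (A j) (B j) s)) - ν i * ν j) :=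
          Finset.sum_congr rfl fun i hi => Finset.sum_congr rfl fun j hj => hcovij i hi j hj
  -- covariance of classes with disjoint supports vanishes
  have hcov0 : ∀ i ∈ IM, ∀ j ∈ IM, Disjoint (A i ∪ B i) (A j ∪ B j) →
      (∑ s ∈ R.powerset, wgt p R s * (chi (A i) (B i) s * chi (A j) (B j) s)) - ν i * ν j = 0 := by
    intro i hi j hj hd
    have := E_indep hp0 hp1' (hWR i hi) (hWR j hj) hd
      (chi (A i) (B i)) (chi (A j) (B j))
      (fun s t h => chi_dep (A i) (B i) h) (fun s t h => chi_dep (A j) (B j) h)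
    rw [this, hEchi i hi, hEchi j hj, sub_self]
  -- covariances are at most 1
  have hcov1 : ∀ i ∈ IM, ∀ j ∈ IM,
      (∑ s ∈ R.powerset, wgt p R s * (chi (A i) (B i) s * chi (A j) (B j) s)) - ν i * ν j ≤ 1 := by
    intro i hi j hj
    have h1 : ∑ s ∈ R.powerset, wgt p R s * (chi (A i) (B i) s * chi (A j) (B j) s) ≤ 1 := by
      rw [← hmass]
      refine Finset.sum_le_sum fun s _ => ?_
      have := mul_le_one₀ (chi_le_one (A i) (B i) s) (chi_nonneg (A j) (B j) s)
        (chi_le_one (A j) (B j) s)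
      nlinarith [hw0 s, chi_nonneg (A i) (B i) s, chi_nonneg (A j) (B j) s]
    nlinarith [mul_nonneg (hν0 i hi) (hν0 j hj)]
  -- counting: a light vertex lies in few classes
  have hcount : ∀ v : Fin n, v ∉ D →
      ((IM.filter fun j => v ∈ A j ∪ B j).card : ℝ) ≤ ε ^ 2 / 10 ^ 6 * n := by
    intro v hv
    have hvD : ¬ ((ε ^ 2 / 10 ^ 6) * n ≤ (({e ∈ G.edgeSet | v ∈ e}).ncard : ℝ)) := by
      intro hle
      exact hv (hD ▸ Finset.mem_filter.mpr ⟨Finset.mem_univ v, hle⟩)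
    push_neg at hvD
    set Ev : Finset (Sym2 (Fin n)) := univ.filter (fun e => e ∈ G.edgeSet ∧ v ∈ e) with hEv
    have hset : {e ∈ G.edgeSet | v ∈ e} = (Ev : Set (Sym2 (Fin n))) := by
      ext e
      simp [hEv]
    have hnc : ({e ∈ G.edgeSet | v ∈ e}).ncard = Ev.card := by
      rw [hset, Set.ncard_coe_finset]
    have hcard : (IM.filter fun j => v ∈ A j ∪ B j).card ≤ Ev.card := by
      have hex : ∀ j : Fin m, ∃ e : Sym2 (Fin n),
          j ∈ IM.filter (fun j => v ∈ A j ∪ B j) → e ∈ Ev ∧ e ∈ F j := by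
        intro j
        by_cases hj : j ∈ IM.filter (fun j => v ∈ A j ∪ B j)
        · rw [Finset.mem_filter] at hj
          obtain ⟨e, heF, hev⟩ := hvert j hj.1 v hj.2
          refine ⟨e, fun _ => ⟨?_, heF⟩⟩
          rw [hEv, Finset.mem_filter]
          exact ⟨Finset.mem_univ e, hsub j (Finset.mem_coe.mpr heF), hev⟩
        · exact ⟨s(v, v), fun h => absurd h hj⟩
      choose ed hed using hex
      refine Finset.card_le_card_of_injOn ed (fun j hj => (hed j hj).1) ?_
      intro j1 h1 j2 h2 heq
      by_contra hne
      exact Finset.disjoint_left.mp (hdisj j1 j2 hne) (hed j1 h1).2 (heq ▸ (hed j2 h2).2)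
    calc ((IM.filter fun j => v ∈ A j ∪ B j).card : ℝ)
        ≤ (Ev.card : ℝ) := Nat.cast_le.mpr hcard
      _ = (({e ∈ G.edgeSet | v ∈ e}).ncard : ℝ) := by rw [hnc]
      _ ≤ ε ^ 2 / 10 ^ 6 * n := le_of_lt hvD
  -- the variance bound
  have hVarBound : ∑ s ∈ R.powerset, wgt p R s * (Xf s - μ)^2 ≤
      (IM.card : ℝ) * (4 * (ε ^ 2 / 10 ^ 6 * n)) := by
    rw [hVar]
    have hrow : ∀ i ∈ IM,
        ∑ j ∈ IM, ((∑ s ∈ R.powerset, wgt p R s * (chi (A i) (B i) s * chi (A j) (B j) s))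
          - ν i * ν j) ≤ 4 * (ε ^ 2 / 10 ^ 6 * n) := by
      intro i hi
      rw [← Finset.sum_filter_add_sum_filter_not IM (fun j => Disjoint (A i ∪ B i) (A j ∪ B j))]
      have hzero : ∑ j ∈ IM.filter (fun j => Disjoint (A i ∪ B i) (A j ∪ B j)),
          ((∑ s ∈ R.powerset, wgt p R s * (chi (A i) (B i) s * chi (A j) (B j) s))
            - ν i * ν j) = 0 := by
        refine Finset.sum_eq_zero fun j hj => ?_
        rw [Finset.mem_filter] at hj
        exact hcov0 i hi j hj.1 hj.2
      rw [hzero, zero_add]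
      have hbnd : ∑ j ∈ IM.filter (fun j => ¬ Disjoint (A i ∪ B i) (A j ∪ B j)),
          ((∑ s ∈ R.powerset, wgt p R s * (chi (A i) (B i) s * chi (A j) (B j) s))
            - ν i * ν j) ≤
          ((IM.filter (fun j => ¬ Disjoint (A i ∪ B i) (A j ∪ B j))).card : ℝ) := by
        have := Finset.sum_le_card_nsmul
          (IM.filter (fun j => ¬ Disjoint (A i ∪ B i) (A j ∪ B j)))
          (fun j => (∑ s ∈ R.powerset, wgt p R s * (chi (A i) (B i) s * chi (A j) (B j) s))
            - ν i * ν j) 1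
          (fun j hj => hcov1 i hi j (Finset.mem_filter.mp hj).1)
        rw [nsmul_eq_mul, mul_one] at this
        exact this
      refine hbnd.trans ?_
      have hsubB : IM.filter (fun j => ¬ Disjoint (A i ∪ B i) (A j ∪ B j)) ⊆
          (A i ∪ B i).biUnion (fun v => IM.filter fun j => v ∈ A j ∪ B j) := by
        intro j hj
        rw [Finset.mem_filter] at hj
        obtain ⟨v, hv1, hv2⟩ := Finset.not_disjoint_iff.mp hj.2
        exact Finset.mem_biUnion.mpr ⟨v, hv1, Finset.mem_filter.mpr ⟨hj.1, hv2⟩⟩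
      have hc1 : ((IM.filter (fun j => ¬ Disjoint (A i ∪ B i) (A j ∪ B j))).card : ℝ) ≤
          ∑ v ∈ A i ∪ B i, ((IM.filter fun j => v ∈ A j ∪ B j).card : ℝ) := by
        have := (Finset.card_le_card hsubB).trans Finset.card_biUnion_le
        exact_mod_cast this
      refine hc1.trans ?_
      have hc2 : ∑ v ∈ A i ∪ B i, ((IM.filter fun j => v ∈ A j ∪ B j).card : ℝ) ≤
          ∑ v ∈ A i ∪ B i, (ε ^ 2 / 10 ^ 6 * n) := by
        refine Finset.sum_le_sum fun v hv => ?_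
        have hvD : v ∉ D := by
          have := hWR i hi hv
          rw [hR, Finset.mem_sdiff] at this
          exact this.2
        exact hcount v hvD
      refine hc2.trans ?_
      rw [Finset.sum_const, nsmul_eq_mul]
      have hc4 : ((A i ∪ B i).card : ℝ) ≤ 4 := by
        have := (Finset.card_union_le (A i) (B i)).trans
          (Nat.add_le_add (hA2 i hi) (hB2 i hi))
        exact_mod_cast this
      have hpos : (0:ℝ) ≤ ε ^ 2 / 10 ^ 6 * n := by positivity
      nlinarith
    calc ∑ i ∈ IM, ∑ j ∈ IM,
          ((∑ s ∈ R.powerset, wgt p R s * (chi (A i) (B i) s * chi (A j) (B j) s)) - ν i * ν j)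
        ≤ ∑ i ∈ IM, (4 * (ε ^ 2 / 10 ^ 6 * n)) := Finset.sum_le_sum hrow
      _ = (IM.card : ℝ) * (4 * (ε ^ 2 / 10 ^ 6 * n)) := by
          rw [Finset.sum_const, nsmul_eq_mul]
  -- now conclude
  by_cases hε1 : 1 ≤ ε
  · have hind : ∀ s ∈ R.powerset,
        wgt p R s * (if (1 - ε) * (IM.card : ℝ) * q ≤
            ((IM.filter fun i => ∃ e ∈ F i, ∀ v ∈ e, v ∈ D ∪ s).card : ℝ)
          then (1:ℝ) else 0) = wgt p R s := by
      intro s _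
      rw [if_pos, mul_one]
      have h1 : (1 - ε) * (IM.card : ℝ) * q ≤ 0 := by
        have : (0:ℝ) ≤ (IM.card : ℝ) * q := mul_nonneg (Nat.cast_nonneg _) hq0.le
        nlinarith
      exact h1.trans (Nat.cast_nonneg _)
    have : ∑ s ∈ R.powerset,
        wgt p R s * (if (1 - ε) * (IM.card : ℝ) * q ≤
            ((IM.filter fun i => ∃ e ∈ F i, ∀ v ∈ e, v ∈ D ∪ s).card : ℝ)
          then (1:ℝ) else 0) = 1 := by
      rw [Finset.sum_congr rfl hind, hmass]
    calc (0.9:ℝ) ≤ 1 := by norm_num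
      _ = _ := this.symm
  · push_neg at hε1
    have hn1 : (1:ℝ) ≤ (n:ℝ) := by exact_mod_cast hn
    have hIM0 : (0:ℝ) < (IM.card : ℝ) := by linarith
    set Z : ℝ := ε * ((IM.card : ℝ) * q) with hZ
    have hZ0 : 0 < Z := mul_pos hε (mul_pos hIM0 hq0)
    have hμlb : (IM.card : ℝ) * q ≤ μ := by
      rw [hμdef]
      calc (IM.card : ℝ) * q = ∑ _i ∈ IM, q := by rw [Finset.sum_const, nsmul_eq_mul]
        _ ≤ ∑ i ∈ IM, ν i := Finset.sum_le_sum hν_lb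
    -- pointwise Chebyshev bound
    have hpoint : ∀ s ∈ R.powerset,
        wgt p R s - wgt p R s * ((Xf s - μ)^2 / Z^2) ≤
          wgt p R s * (if (1 - ε) * (IM.card : ℝ) * q ≤
              ((IM.filter fun i => ∃ e ∈ F i, ∀ v ∈ e, v ∈ D ∪ s).card : ℝ)
            then (1:ℝ) else 0) := by
      intro s _
      have hrw : wgt p R s - wgt p R s * ((Xf s - μ)^2 / Z^2) =
          wgt p R s * (1 - (Xf s - μ)^2 / Z^2) := by ring
      rw [hrw]
      by_cases hc : (1 - ε) * (IM.card : ℝ) * q ≤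
          ((IM.filter fun i => ∃ e ∈ F i, ∀ v ∈ e, v ∈ D ∪ s).card : ℝ)
      · rw [if_pos hc]
        have hd0 : 0 ≤ (Xf s - μ)^2 / Z^2 := div_nonneg (sq_nonneg _) (sq_nonneg _)
        have : 1 - (Xf s - μ)^2 / Z^2 ≤ 1 := by linarith
        calc wgt p R s * (1 - (Xf s - μ)^2 / Z^2) ≤ wgt p R s * 1 :=
              mul_le_mul_of_nonneg_left this (hw0 s)
          _ = wgt p R s * 1 := rfl
      · rw [if_neg hc, mul_zero]
        push_neg at hc
        rw [hXcard s] at hc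
        have h2 : Z ≤ μ - Xf s := by
          have hexp : (1 - ε) * (IM.card : ℝ) * q =
              (IM.card : ℝ) * q - ε * ((IM.card : ℝ) * q) := by ring
          rw [hZ]
          linarith [hμlb, hc, hexp ▸ hc]
        have h3 : Z^2 ≤ (Xf s - μ)^2 := by
          nlinarith [mul_nonneg (by linarith : (0:ℝ) ≤ μ - Xf s - Z)
            (by linarith : (0:ℝ) ≤ μ - Xf s + Z)]
        have h4 : 1 ≤ (Xf s - μ)^2 / Z^2 := (one_le_div (pow_pos hZ0 2)).mpr h3
        have h5 : 1 - (Xf s - μ)^2 / Z^2 ≤ 0 := by linarith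
        exact mul_nonpos_iff.mpr (Or.inl ⟨hw0 s, h5⟩)
    have hsum : ∑ s ∈ R.powerset, (wgt p R s - wgt p R s * ((Xf s - μ)^2 / Z^2)) =
        1 - (∑ s ∈ R.powerset, wgt p R s * (Xf s - μ)^2) / Z^2 := by
      rw [Finset.sum_sub_distrib, hmass]
      congr 1
      rw [Finset.sum_div]
      exact Finset.sum_congr rfl fun s _ => (mul_div_assoc _ _ _).symm
    have hfrac : (∑ s ∈ R.powerset, wgt p R s * (Xf s - μ)^2) / Z^2 ≤ 0.1 := by
      rw [div_le_iff₀ (pow_pos hZ0 2)]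
      refine hVarBound.trans ?_
      rw [hZ]
      have e1 : (0.1:ℝ) * (ε * ((IM.card:ℝ) * q))^2 =
          0.1 * ε^2 * (((IM.card:ℝ) * (IM.card:ℝ)) * (q*q)) := by ring
      have h1 : (IM.card:ℝ) * ((n:ℝ)/40) ≤ (IM.card:ℝ) * (IM.card:ℝ) :=
        mul_le_mul_of_nonneg_left hlo hIM0.le
      have h2 : (7/16:ℝ)*(7/16) ≤ q * q := mul_le_mul hq716 hq716 (by norm_num) (by linarith)
      have e2 : ((IM.card:ℝ) * ((n:ℝ)/40)) * ((7/16:ℝ)*(7/16)) ≤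
          ((IM.card:ℝ)*(IM.card:ℝ)) * (q*q) :=
        mul_le_mul h1 h2 (by norm_num) (mul_self_nonneg _)
      have e3 : 0.1 * ε^2 * (((IM.card:ℝ) * ((n:ℝ)/40)) * ((7/16:ℝ)*(7/16))) ≤
          0.1 * ε^2 * (((IM.card:ℝ)*(IM.card:ℝ)) * (q*q)) := by
        apply mul_le_mul_of_nonneg_left e2 (by positivity)
      have e4 : (IM.card : ℝ) * (4 * (ε ^ 2 / 10 ^ 6 * n)) ≤
          0.1 * ε^2 * (((IM.card:ℝ) * ((n:ℝ)/40)) * ((7/16:ℝ)*(7/16))) := by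
        have hnn : (0:ℝ) ≤ ε^2 * ((n:ℝ) * (IM.card:ℝ)) := by positivity
        nlinarith [hnn]
      calc (IM.card : ℝ) * (4 * (ε ^ 2 / 10 ^ 6 * n))
          ≤ 0.1 * ε^2 * (((IM.card:ℝ)*(IM.card:ℝ)) * (q*q)) := e4.trans e3
        _ = 0.1 * (ε * ((IM.card:ℝ) * q))^2 := e1.symm
    have hfinal : (0.9:ℝ) ≤
        ∑ s ∈ R.powerset, (wgt p R s - wgt p R s * ((Xf s - μ)^2 / Z^2)) := by
      rw [hsum]
      linarith [hfrac]
    exact hfinal.trans (Finset.sum_le_sum hpoint)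
end
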